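/- arXiv:1203.1943 — 7 statements merged into one kernel-verified Lean document; each statement's English description precedes it below -/
import Mathlib

section
/- Let k be a field, Q a finite acyclic quiver, and B := MonoidAlgebra k HK(Q). Then the Jacobson radical of B equals the k-linear span of the set { X_{{w}} − X_w : w a list over V }, where for each list w, X_w ∈ B is the corresponding product of generators and X_{{w}} is the idempotent monomial attached to the set of letters of w. -/
/-- The defining relations of the Hecke–Kiselman monoid of a quiver with
vertex type `V` and arrow relation `arr`. -/
inductive HKRel {V : Type} (arr : V → V → Prop) : FreeMonoid V → FreeMonoid V → Prop
  | idem (t : V) :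
      HKRel arr (FreeMonoid.of t * FreeMonoid.of t) (FreeMonoid.of t)
  | braid (s t : V) :
      HKRel arr (FreeMonoid.of s * FreeMonoid.of t * FreeMonoid.of s)
        (FreeMonoid.of t * FreeMonoid.of s * FreeMonoid.of t)
  | absorb (s t : V) : ¬ arr t s →
      HKRel arr (FreeMonoid.of t * FreeMonoid.of s * FreeMonoid.of t)
        (FreeMonoid.of s * FreeMonoid.of t)

/-- The congruence on the free monoid generated by the Hecke–Kiselman relations. -/
def HKCon {V : Type} (arr : V → V → Prop) : Con (FreeMonoid V) := conGen (HKRel arr)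

/-- The Hecke–Kiselman monoid of the quiver `(V, arr)`. -/
abbrev HK {V : Type} (arr : V → V → Prop) : Type := (HKCon arr).Quotient

/-- The generator of the Hecke–Kiselman monoid attached to the vertex `t`. -/
def HK.x {V : Type} (arr : V → V → Prop) (t : V) : HK arr :=
  (HKCon arr).mk' (FreeMonoid.of t)

/-- The quiver `(V, arr)` is acyclic: the transitive closure of `arr` is irreflexive. -/
def IsAcyclicQuiver {V : Type} (arr : V → V → Prop) : Prop :=
  ∀ v : V, ¬ Relation.TransGen arr v v

/-- The monomial `X_w` in the Hecke–Kiselman monoid attached to a word (list) `w` over `V`. -/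
def HK.X {V : Type} (arr : V → V → Prop) (w : List V) : HK arr :=
  (w.map (HK.x arr)).prod

/-- The set of sinks of the full subquiver on `M`: elements of `M` with no arrow
towards any element of `M`. -/
def sinksOf {V : Type} [DecidableEq V] (arr : V → V → Prop) [DecidableRel arr]
    (M : Finset V) : Finset V :=
  M.filter fun q => ∀ p ∈ M, ¬ arr q p

/-- Auxiliary fuelled recursion computing the idempotent monomial `X_M`: repeatedly
split off the product over the current set of sinks (level `Sk_0`, placed rightmost)
and recurse on the remaining vertices.  Within each sink level the generators pairwise
commute, so the product over an arbitrary enumeration of the level is well defined. -/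
noncomputable def XsetAux {V : Type} [DecidableEq V] (arr : V → V → Prop)
    [DecidableRel arr] : ℕ → Finset V → HK arr
  | 0, _ => 1
  | n + 1, M =>
      XsetAux arr n (M \ sinksOf arr M) *
        (((sinksOf arr M).toList).map (HK.x arr)).prod

/-- The idempotent monomial `X_M ∈ HK(Q)` attached to a subset `M` of the vertices:
the product `(∏_{q ∈ Sk_m(M)} x_q) ⋯ (∏_{q ∈ Sk_0(M)} x_q)` over the sink levels
of `M`, with `X_∅ = 1`. -/
noncomputable def Xset {V : Type} [DecidableEq V] (arr : V → V → Prop)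
    [DecidableRel arr] (M : Finset V) : HK arr :=
  XsetAux arr M.card M

open Relation MulOpposite

namespace HKJ

variable {V : Type} (arr : V → V → Prop)

local notation "W" => HK.X arr
local notation "xx" => HK.x arr

theorem rel_of (a b : FreeMonoid V) (h : HKRel arr a b) :
    (HKCon arr).mk' a = (HKCon arr).mk' b :=
  (Con.eq _).2 (ConGen.Rel.of _ _ h)

theorem W_nil : W [] = 1 := rfl

theorem W_cons (t : V) (l : List V) : W (t :: l) = xx t * W l := by
  simp [HK.X, List.prod_cons]

theorem W_append (l₁ l₂ : List V) : W (l₁ ++ l₂) = W l₁ * W l₂ := by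
  simp [HK.X]

theorem W_singleton (t : V) : W [t] = xx t := by
  simp [HK.X]

theorem mk'_ofList (l : List V) : (HKCon arr).mk' (FreeMonoid.ofList l) = W l := by
  induction l with
  | nil => rfl
  | cons a l ih =>
      rw [W_cons, ← ih]
      rfl

theorem exists_word (g : HK arr) : ∃ l : List V, g = W l := by
  obtain ⟨a, rfl⟩ := Con.mk'_surjective (c := HKCon arr) g
  exact ⟨FreeMonoid.toList a, by rw [← mk'_ofList]; rfl⟩

theorem rel_idem (t : V) : xx t * xx t = xx t := by
  exact rel_of arr _ _ (HKRel.idem t)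

theorem rel_braid (s t : V) : xx s * xx t * xx s = xx t * xx s * xx t := by
  exact rel_of arr _ _ (HKRel.braid s t)

theorem rel_absorb {s t : V} (h : ¬ arr t s) : xx t * xx s * xx t = xx s * xx t := by
  exact rel_of arr _ _ (HKRel.absorb s t h)

/-- derived absorption on the other side: `t s t = t s` when `¬ arr s t`. -/
theorem rel_absorb' {s t : V} (h : ¬ arr s t) : xx t * xx s * xx t = xx t * xx s := by
  have h1 : xx s * xx t * xx s = xx t * xx s := rel_absorb arr h
  have h2 := rel_braid arr s t
  rw [← h2, h1]

theorem comm_of_not_arr {s t : V} (h1 : ¬ arr t s) (h2 : ¬ arr s t) :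
    xx s * xx t = xx t * xx s := by
  have A := rel_absorb arr h1   -- t s t = s t
  have B := rel_absorb arr h2   -- s t s = t s
  have C := rel_braid arr s t   -- s t s = t s t
  rw [C] at B
  rw [← A, B]

/-- the submonoid generated by the generators indexed by a set of vertices -/
def genM (M : Set V) : Submonoid (HK arr) := Submonoid.closure (HK.x arr '' M)

theorem W_mem_genM {M : Set V} {l : List V} (hl : ∀ s ∈ l, s ∈ M) : W l ∈ genM arr M := by
  induction l with
  | nil => exact one_mem _
  | cons a l ih =>
      rw [W_cons]
      exact mul_mem (Submonoid.subset_closure ⟨a, hl a (by simp), rfl⟩)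
        (ih fun s hs => hl s (by simp [hs]))

theorem genM_eq_word {M : Set V} {g : HK arr} (hg : g ∈ genM arr M) :
    ∃ l : List V, (∀ s ∈ l, s ∈ M) ∧ g = W l := by
  induction hg using Submonoid.closure_induction with
  | mem x hx =>
      obtain ⟨t, ht, rfl⟩ := hx
      exact ⟨[t], by simpa using ht, (W_singleton arr t).symm⟩
  | one => exact ⟨[], by simp, rfl⟩
  | mul x y _ _ ihx ihy =>
      obtain ⟨l₁, h₁, rfl⟩ := ihx
      obtain ⟨l₂, h₂, rfl⟩ := ihy
      refine ⟨l₁ ++ l₂, ?_, (W_append arr l₁ l₂).symm⟩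
      intro s hs
      rcases List.mem_append.1 hs with h | h
      exacts [h₁ s h, h₂ s h]

/-- Sink absorption: if `v` has no arrows into `M` (nor to itself) then
`x_v m x_v = m x_v` for every `m` in the submonoid generated by `M`. -/
theorem sink_absorb {M : Set V} {v : V} (hv : ∀ s ∈ M, ¬ arr v s)
    {m : HK arr} (hm : m ∈ genM arr M) :
    xx v * m * xx v = m * xx v := by
  induction hm using Submonoid.closure_induction with
  | mem x hx =>
      obtain ⟨t, ht, rfl⟩ := hx
      exact rel_absorb arr (hv t ht)
  | one => simpa using rel_idem arr v
  | mul a b ha hb iha ihb =>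
      calc xx v * (a * b) * xx v = xx v * a * (b * xx v) := by simp only [mul_assoc]
        _ = xx v * a * (xx v * b * xx v) := by rw [ihb]
        _ = (xx v * a * xx v) * (b * xx v) := by simp only [mul_assoc]
        _ = a * xx v * (b * xx v) := by rw [iha]
        _ = a * (xx v * b * xx v) := by simp only [mul_assoc]
        _ = a * (b * xx v) := by rw [ihb]
        _ = a * b * xx v := by simp only [mul_assoc]

end HKJ

namespace HKJ
section B
variable {V : Type} [DecidableEq V] (arr : V → V → Prop) [DecidableRel arr]

local notation "W" => HK.X arr
local notation "xx" => HK.x arr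

theorem sinksOf_subset (M : Finset V) : sinksOf arr M ⊆ M := Finset.filter_subset _ _

theorem not_arr_of_mem_sinks {M : Finset V} {v : V} (hv : v ∈ sinksOf arr M) :
    ∀ p ∈ M, ¬ arr v p := by
  simp only [sinksOf, Finset.mem_filter] at hv
  exact hv.2

theorem sinksOf_nonempty (hQ : IsAcyclicQuiver arr) {M : Finset V} (hM : M.Nonempty)
    [Fintype V] : (sinksOf arr M).Nonempty := by
  have htrans : IsTrans V (Function.swap (Relation.TransGen arr)) :=
    ⟨fun a b c h₁ h₂ => Relation.TransGen.trans h₂ h₁⟩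
  have hirr : IsIrrefl V (Function.swap (Relation.TransGen arr)) := ⟨fun a h => hQ a h⟩
  have hwf := Finite.wellFounded_of_trans_of_irrefl (Function.swap (Relation.TransGen arr))
  obtain ⟨v, hvM, hmin⟩ := hwf.has_min (↑M : Set V) (by exact_mod_cast hM)
  refine ⟨v, ?_⟩
  simp only [sinksOf, Finset.mem_filter]
  exact ⟨by exact_mod_cast hvM, fun p hp harr => hmin p hp (Relation.TransGen.single harr)⟩

theorem card_sdiff_sinks_lt (hQ : IsAcyclicQuiver arr) [Fintype V] {M : Finset V}
    (hM : M.Nonempty) : (M \ sinksOf arr M).card < M.card := by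
  obtain ⟨v, hv⟩ := sinksOf_nonempty arr hQ hM
  apply Finset.card_lt_card
  constructor
  · exact Finset.sdiff_subset
  · intro hsub
    have := hsub (sinksOf_subset arr M hv)
    simp [Finset.mem_sdiff, hv] at this

theorem sinksOf_empty : sinksOf arr (∅ : Finset V) = ∅ := by simp [sinksOf]

theorem XsetAux_empty : ∀ n, XsetAux arr n (∅ : Finset V) = 1
  | 0 => rfl
  | n + 1 => by
      rw [XsetAux, sinksOf_empty]
      simp [XsetAux_empty n]

variable [Fintype V]

theorem XsetAux_eq_of_le (hQ : IsAcyclicQuiver arr) :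
    ∀ n m (M : Finset V), M.card ≤ n → M.card ≤ m → XsetAux arr n M = XsetAux arr m M := by
  intro n
  induction n with
  | zero =>
      intro m M hn _
      have : M = ∅ := Finset.card_eq_zero.1 (Nat.le_zero.1 hn)
      subst this
      rw [XsetAux_empty, XsetAux_empty]
  | succ n ih =>
      intro m M hn hm
      rcases Finset.eq_empty_or_nonempty M with rfl | hM
      · rw [XsetAux_empty, XsetAux_empty]
      · have hc : 1 ≤ M.card := Finset.card_pos.2 hM
        obtain ⟨m', rfl⟩ : ∃ m', m = m' + 1 := ⟨m - 1, by omega⟩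
        rw [XsetAux, XsetAux]
        have hlt := card_sdiff_sinks_lt arr hQ hM
        rw [ih m' (M \ sinksOf arr M) (by omega) (by omega)]

theorem Xset_eq (hQ : IsAcyclicQuiver arr) {M : Finset V} (hM : M.Nonempty) :
    Xset arr M = Xset arr (M \ sinksOf arr M) * W (sinksOf arr M).toList := by
  have hc : 1 ≤ M.card := Finset.card_pos.2 hM
  obtain ⟨n, hn⟩ : ∃ n, M.card = n + 1 := ⟨M.card - 1, by omega⟩
  have hlt := card_sdiff_sinks_lt arr hQ hM
  rw [Xset, hn, XsetAux]
  rw [XsetAux_eq_of_le arr hQ n _ (M \ sinksOf arr M) (by omega) le_rfl]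
  rfl

/-- fuelled canonical word for `Xset` -/
noncomputable def mwordAux : ℕ → Finset V → List V
  | 0, _ => []
  | n + 1, M => mwordAux n (M \ sinksOf arr M) ++ (sinksOf arr M).toList

theorem mwordAux_empty : ∀ n, mwordAux arr n (∅ : Finset V) = []
  | 0 => rfl
  | n + 1 => by rw [mwordAux, sinksOf_empty]; simp [mwordAux_empty n]

theorem W_mwordAux : ∀ n (M : Finset V), W (mwordAux arr n M) = XsetAux arr n M
  | 0, _ => rfl
  | n + 1, M => by
      rw [mwordAux, XsetAux, W_append, W_mwordAux n]
      rfl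

noncomputable def mword (M : Finset V) : List V := mwordAux arr M.card M

theorem Xset_eq_W (M : Finset V) : Xset arr M = W (mword arr M) :=
  (W_mwordAux arr M.card M).symm

theorem mwordAux_subset : ∀ n (M : Finset V), ∀ s ∈ mwordAux arr n M, s ∈ M := by
  intro n
  induction n with
  | zero => intro M s hs; simp [mwordAux] at hs
  | succ n ih =>
      intro M s hs
      rw [mwordAux, List.mem_append] at hs
      rcases hs with h | h
      · exact (Finset.sdiff_subset (ih _ s h))
      · exact sinksOf_subset arr M (by simpa using h)

theorem mword_subset (M : Finset V) : ∀ s ∈ mword arr M, s ∈ M :=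
  mwordAux_subset arr M.card M

theorem mwordAux_toFinset (hQ : IsAcyclicQuiver arr) :
    ∀ n (M : Finset V), M.card ≤ n → (mwordAux arr n M).toFinset = M := by
  intro n
  induction n with
  | zero =>
      intro M hn
      have : M = ∅ := Finset.card_eq_zero.1 (Nat.le_zero.1 hn)
      subst this; rfl
  | succ n ih =>
      intro M hn
      rcases Finset.eq_empty_or_nonempty M with rfl | hM
      · rw [mwordAux_empty]; rfl
      · have hlt := card_sdiff_sinks_lt arr hQ hM
        rw [mwordAux, List.toFinset_append, ih _ (by omega)]
        rw [Finset.toList_toFinset]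
        exact Finset.sdiff_union_of_subset (sinksOf_subset arr M)

theorem mword_toFinset (hQ : IsAcyclicQuiver arr) (M : Finset V) :
    (mword arr M).toFinset = M :=
  mwordAux_toFinset arr hQ M.card M le_rfl

end B
end HKJ

namespace HKJ
section C
variable {V : Type} [DecidableEq V] (arr : V → V → Prop) [DecidableRel arr] [Fintype V]

local notation "W" => HK.X arr
local notation "xx" => HK.x arr

theorem sinks_pairwise_commute {M : Finset V} (l : List V)
    (hl : ∀ s ∈ l, s ∈ sinksOf arr M) :
    (l.map (HK.x arr)).Pairwise Commute := by
  rw [List.pairwise_map]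
  apply List.pairwise_of_forall_mem_list
  intro a ha b hb
  rcases eq_or_ne a b with rfl | hne
  · exact Commute.refl _
  · have ha' := hl a ha; have hb' := hl b hb
    have h1 : ¬ arr a b := not_arr_of_mem_sinks arr ha' b (sinksOf_subset arr M hb')
    have h2 : ¬ arr b a := not_arr_of_mem_sinks arr hb' a (sinksOf_subset arr M ha')
    exact (comm_of_not_arr arr h2 h1)

theorem sinks_prod_erase {M : Finset V} {t : V} (ht : t ∈ sinksOf arr M) :
    W (sinksOf arr M).toList = W ((sinksOf arr M).toList.erase t) * xx t := by
  have htl : t ∈ (sinksOf arr M).toList := Finset.mem_toList.2 ht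
  have hperm : (sinksOf arr M).toList.Perm ((sinksOf arr M).toList.erase t ++ [t]) :=
    (List.perm_cons_erase htl).trans (List.perm_append_singleton t _).symm
  have hpw := sinks_pairwise_commute arr (M := M) (sinksOf arr M).toList
    (fun s hs => Finset.mem_toList.1 hs)
  have heq := List.Perm.prod_eq' (hperm.map (HK.x arr)) hpw
  show (List.map xx (sinksOf arr M).toList).prod = _
  rw [heq]
  rw [show ((List.map xx ((sinksOf arr M).toList.erase t ++ [t])).prod) = W ((sinksOf arr M).toList.erase t ++ [t]) from rfl,
    W_append, W_singleton]

theorem labs (hQ : IsAcyclicQuiver arr) (M : Finset V) :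
    ∀ t ∈ M, xx t * Xset arr M = Xset arr M := by
  induction M using Finset.strongInduction with
  | _ M ih =>
    intro t ht
    have hM : M.Nonempty := ⟨t, ht⟩
    have hXeq := Xset_eq arr hQ hM
    by_cases hts : t ∈ sinksOf arr M
    · -- t is a sink
      rw [hXeq, sinks_prod_erase arr hts]
      have hmem : Xset arr (M \ sinksOf arr M) * W ((sinksOf arr M).toList.erase t)
          ∈ genM arr (↑M : Set V) := by
        apply mul_mem
        · rw [Xset_eq_W]
          exact W_mem_genM arr fun s hs => by
            have := mword_subset arr _ s hs
            exact Finset.mem_coe.2 (Finset.mem_sdiff.1 this).1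
        · exact W_mem_genM arr fun s hs =>
            Finset.mem_coe.2 (sinksOf_subset arr M (Finset.mem_toList.1 (List.mem_of_mem_erase hs)))
      have habs := sink_absorb arr (M := (↑M : Set V)) (v := t)
        (fun s hs => not_arr_of_mem_sinks arr hts s (Finset.mem_coe.1 hs)) hmem
      calc xx t * (Xset arr (M \ sinksOf arr M) * (W ((sinksOf arr M).toList.erase t) * xx t))
          = xx t * (Xset arr (M \ sinksOf arr M) * W ((sinksOf arr M).toList.erase t)) * xx t := by
            simp only [mul_assoc]
        _ = (Xset arr (M \ sinksOf arr M) * W ((sinksOf arr M).toList.erase t)) * xx t := habs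
        _ = Xset arr (M \ sinksOf arr M) * (W ((sinksOf arr M).toList.erase t) * xx t) := by
            simp only [mul_assoc]
    · -- t is not a sink: t ∈ M \ sinks
      have ht' : t ∈ M \ sinksOf arr M := Finset.mem_sdiff.2 ⟨ht, hts⟩
      have hss : M \ sinksOf arr M ⊂ M := by
        constructor
        · exact Finset.sdiff_subset
        · intro hsub
          obtain ⟨v, hv⟩ := sinksOf_nonempty arr hQ hM
          have := hsub (sinksOf_subset arr M hv)
          simp [Finset.mem_sdiff, hv] at this
      rw [hXeq, ← mul_assoc, ih _ hss t ht']

theorem labs_genM (hQ : IsAcyclicQuiver arr) (M : Finset V) {m : HK arr}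
    (hm : m ∈ genM arr (↑M : Set V)) : m * Xset arr M = Xset arr M := by
  induction hm using Submonoid.closure_induction with
  | mem x hx =>
      obtain ⟨s, hs, rfl⟩ := hx
      exact labs arr hQ M s (Finset.mem_coe.1 hs)
  | one => rw [one_mul]
  | mul a b ha hb iha ihb => rw [mul_assoc, ihb, iha]

end C
end HKJ

namespace HKJ
section R
open MulOpposite
variable {V : Type}

theorem rel_absorb'_assoc (arr2 : V → V → Prop) {s t : V} (h : ¬ arr2 s t) :
    HK.x arr2 t * (HK.x arr2 s * HK.x arr2 t) = HK.x arr2 t * HK.x arr2 s := by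
  have := rel_absorb' arr2 h
  simpa [mul_assoc] using this

def revHom (arr arr2 : V → V → Prop) (hco : ∀ s t : V, ¬ arr t s → ¬ arr2 s t) :
    HK arr →* (HK arr2)ᵐᵒᵖ :=
  Con.lift _ (FreeMonoid.lift fun t => op (HK.x arr2 t)) (by
    apply Con.conGen_le.2
    intro a b hab
    rw [Con.ker_rel]
    induction hab with
    | idem t =>
        simp only [map_mul, FreeMonoid.lift_eval_of, ← op_mul]
        exact congrArg op (rel_idem arr2 t)
    | braid s t =>
        simp only [map_mul, FreeMonoid.lift_eval_of, ← op_mul]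
        apply congrArg op
        have := rel_braid arr2 s t
        simp only [mul_assoc] at this
        rw [this]
    | absorb s t h =>
        simp only [map_mul, FreeMonoid.lift_eval_of, ← op_mul]
        apply congrArg op
        have := rel_absorb' arr2 (hco s t h)
        simp only [mul_assoc] at this
        rw [this])

theorem revHom_x (arr arr2 : V → V → Prop) (hco : ∀ s t : V, ¬ arr t s → ¬ arr2 s t) (t : V) :
    revHom arr arr2 hco (HK.x arr t) = op (HK.x arr2 t) := by
  rw [HK.x, revHom]
  exact FreeMonoid.lift_eval_of (fun t => op (HK.x arr2 t)) t

theorem revHom_W (arr arr2 : V → V → Prop) (hco : ∀ s t : V, ¬ arr t s → ¬ arr2 s t)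
    (l : List V) :
    revHom arr arr2 hco (HK.X arr l) = op (HK.X arr2 l.reverse) := by
  induction l with
  | nil => simp [HK.X]
  | cons t l ih =>
      rw [W_cons, map_mul, revHom_x, ih, ← op_mul, List.reverse_cons, W_append, W_singleton]

section rabs
variable [DecidableEq V] (arr : V → V → Prop) [DecidableRel arr] [Fintype V]

/-- the opposite quiver -/
def arrOp : V → V → Prop := fun s t => arr t s

instance : DecidableRel (arrOp arr) := fun a b => (inferInstance : DecidableRel arr) b a

theorem arrOp_acyclic (hQ : IsAcyclicQuiver arr) : IsAcyclicQuiver (arrOp arr) := by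
  intro v hv
  exact hQ v (Relation.transGen_swap.1 hv)

theorem hco₁ : ∀ s t : V, ¬ arr t s → ¬ arrOp arr s t := fun _ _ h => h
theorem hco₂ : ∀ s t : V, ¬ arrOp arr t s → ¬ arr s t := fun _ _ h => h

/-- `Xset` equals the reversed opposite `Xset`. -/
theorem Xset_eq_rev (hQ : IsAcyclicQuiver arr) (M : Finset V) :
    Xset arr M = HK.X arr (mword (arrOp arr) M).reverse := by
  set F := HK.X arr (mword (arrOp arr) M).reverse with hF
  have hFE : ∀ m ∈ genM arr (↑M : Set V), F * m = F := by
    intro m hm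
    obtain ⟨l, hl, rfl⟩ := genM_eq_word arr hm
    have hm' : HK.X (arrOp arr) l.reverse ∈ genM (arrOp arr) (↑M : Set V) :=
      W_mem_genM (arrOp arr) (fun s hs => hl s (List.mem_reverse.1 hs))
    have habs := labs_genM (arrOp arr) (arrOp_acyclic arr hQ) M hm'
    have := congrArg (revHom (arrOp arr) arr (hco₂ arr)) habs
    rw [map_mul, Xset_eq_W, revHom_W, revHom_W, ← op_mul, List.reverse_reverse] at this
    have h2 := op_injective this
    rw [← hF] at h2
    exact h2
  have hE : F * Xset arr M = F := by
    apply hFE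
    rw [Xset_eq_W]
    exact W_mem_genM arr (fun s hs => Finset.mem_coe.2 (mword_subset arr M s hs))
  have hF' : F * Xset arr M = Xset arr M := by
    apply labs_genM arr hQ M
    exact W_mem_genM arr (fun s hs =>
      Finset.mem_coe.2 (mword_subset (arrOp arr) M s (List.mem_reverse.1 hs)))
  rw [← hF', hE]

theorem rabs_genM (hQ : IsAcyclicQuiver arr) (M : Finset V) {m : HK arr}
    (hm : m ∈ genM arr (↑M : Set V)) : Xset arr M * m = Xset arr M := by
  have key : ∀ g ∈ genM arr (↑M : Set V), HK.X arr (mword (arrOp arr) M).reverse * g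
      = HK.X arr (mword (arrOp arr) M).reverse := by
    intro g hg
    obtain ⟨l, hl, rfl⟩ := genM_eq_word arr hg
    have hm' : HK.X (arrOp arr) l.reverse ∈ genM (arrOp arr) (↑M : Set V) :=
      W_mem_genM (arrOp arr) (fun s hs => hl s (List.mem_reverse.1 hs))
    have habs := labs_genM (arrOp arr) (arrOp_acyclic arr hQ) M hm'
    have := congrArg (revHom (arrOp arr) arr (hco₂ arr)) habs
    rw [map_mul, Xset_eq_W, revHom_W, revHom_W, ← op_mul, List.reverse_reverse] at this
    exact op_injective this
  rw [Xset_eq_rev arr hQ]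
  exact key m hm

end rabs
end R
end HKJ

namespace HKJ
section D
variable {V : Type} [DecidableEq V] (arr : V → V → Prop) [DecidableRel arr] [Fintype V]

local notation "W" => HK.X arr
local notation "xx" => HK.x arr

theorem decomp {S : Finset V} {v : V} (hv : ∀ s ∈ (↑S : Set V), ¬ arr v s) :
    ∀ w : List V, (∀ s ∈ w, s ∈ S) → v ∈ w →
    ∃ A B : List V, v ∉ A ∧ v ∉ B ∧ (A.toFinset ∪ B.toFinset ∪ {v} = w.toFinset) ∧
      W w = W A * xx v * W B := by
  intro w
  induction w using List.reverseRecOn with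
  | nil => intro _ h; simp at h
  | append_singleton w t ihw =>
      intro hsub hvmem
      have hsubw : ∀ s ∈ w, s ∈ S := fun s hs => hsub s (by simp [hs])
      by_cases htv : t = v
      · subst htv
        by_cases hvw : t ∈ w
        · obtain ⟨A, B, hA, hB, hset, heq⟩ := ihw hsubw hvw
          refine ⟨A ++ B, [], ?_, ?_, ?_, ?_⟩
          · simp [hA, hB]
          · simp
          · rw [List.toFinset_append, List.toFinset_append]
            rw [← hset]; ext u; simp; try tauto
          · have hBmem : W B ∈ genM arr (↑S : Set V) := by
              apply W_mem_genM
              intro s hs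
              have hmem : s ∈ w.toFinset := by
                rw [← hset]; simp [hs]
              exact hsubw s (List.mem_toFinset.1 hmem)
            have habs := sink_absorb arr hv hBmem
            rw [W_append, heq, W_append, W_nil, mul_one]
            calc W A * xx t * W B * xx t = W A * (xx t * W B * xx t) := by
                  simp only [mul_assoc]
              _ = W A * (W B * xx t) := by rw [habs]
              _ = W A * W B * xx t := by simp only [mul_assoc]
        · refine ⟨w, [], hvw, by simp, ?_, ?_⟩
          · ext u; simp; try tauto
          · rw [W_append, W_singleton, W_nil, mul_one]
      · have hvw : v ∈ w := by
          rcases List.mem_append.1 hvmem with h | h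
          · exact h
          · simp at h; exact absurd h.symm htv
        obtain ⟨A, B, hA, hB, hset, heq⟩ := ihw hsubw hvw
        refine ⟨A, B ++ [t], hA, ?_, ?_, ?_⟩
        · simp only [List.mem_append, List.mem_singleton]
          rintro (h | h)
          exacts [hB h, htv h.symm]
        · rw [List.toFinset_append, List.toFinset_append, ← hset]
          ext u; simp; try tauto
        · rw [W_append, heq, W_append]
          simp only [mul_assoc]

theorem pow_formula {S : Finset V} {v : V} (hv : ∀ s ∈ (↑S : Set V), ¬ arr v s)
    (A B : List V) (hA : ∀ s ∈ A, s ∈ S) (hB : ∀ s ∈ B, s ∈ S) :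
    ∀ m : ℕ, (W A * xx v * W B) ^ (m + 1) = W A * (W (B ++ A)) ^ m * xx v * W B := by
  intro m
  induction m with
  | zero => simp
  | succ m ihm =>
      have hD : (W (B ++ A)) ^ (m + 1) ∈ genM arr (↑S : Set V) := by
        apply pow_mem
        apply W_mem_genM
        intro s hs
        rcases List.mem_append.1 hs with h | h
        exacts [hB s h, hA s h]
      have hBA : W (B ++ A) ∈ genM arr (↑S : Set V) := by
        apply W_mem_genM
        intro s hs
        rcases List.mem_append.1 hs with h | h
        exacts [hB s h, hA s h]
      have habs : xx v * (W B * W A) * xx v = (W B * W A) * xx v :=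
        sink_absorb arr hv (mul_mem (W_mem_genM arr hB) (W_mem_genM arr hA))
      calc (W A * xx v * W B) ^ (m + 1 + 1)
          = (W A * xx v * W B) ^ (m + 1) * (W A * xx v * W B) := pow_succ _ _
        _ = (W A * (W (B ++ A)) ^ m * xx v * W B) * (W A * xx v * W B) := by rw [ihm]
        _ = W A * (W (B ++ A)) ^ m * (xx v * (W B * W A) * xx v) * W B := by
            simp only [mul_assoc]
        _ = W A * (W (B ++ A)) ^ m * ((W B * W A) * xx v) * W B := by rw [habs]
        _ = W A * ((W (B ++ A)) ^ m * W (B ++ A) * xx v * W B) := by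
            rw [← W_append]; simp only [mul_assoc]
        _ = W A * (W (B ++ A)) ^ (m + 1) * xx v * W B := by
            rw [pow_succ]; simp only [mul_assoc]

end D
end HKJ

namespace HKJ
section D2
variable {V : Type} [DecidableEq V] (arr : V → V → Prop) [DecidableRel arr] [Fintype V]

local notation "W" => HK.X arr
local notation "xx" => HK.x arr

theorem Xset_empty : Xset arr (∅ : Finset V) = 1 := by
  rw [Xset]; simp [XsetAux_empty]

theorem Xset_mem_genM (M : Finset V) : Xset arr M ∈ genM arr (↑M : Set V) := by
  rw [Xset_eq_W]
  exact W_mem_genM arr fun s hs => Finset.mem_coe.2 (mword_subset arr M s hs)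

theorem genM_mono {M N : Set V} (h : M ⊆ N) : genM arr M ≤ genM arr N :=
  Submonoid.closure_mono (Set.image_mono h)

theorem pow_stab (hQ : IsAcyclicQuiver arr) :
    ∀ w : List V, ∃ n, ∀ m, n ≤ m → (W w) ^ m = Xset arr w.toFinset := by
  suffices H : ∀ c : ℕ, ∀ w : List V, w.toFinset.card = c →
      ∃ n, ∀ m, n ≤ m → (W w) ^ m = Xset arr w.toFinset by
    intro w; exact H w.toFinset.card w rfl
  intro c
  induction c using Nat.strong_induction_on with
  | _ c ih =>
    intro w hcard
    rcases eq_or_ne w [] with rfl | hw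
    · refine ⟨0, fun m _ => ?_⟩
      rw [show W ([] : List V) = 1 from rfl, one_pow,
        show ([] : List V).toFinset = (∅ : Finset V) from rfl, Xset_empty]
    · set S := w.toFinset with hS
      have hSne : S.Nonempty := by
        rcases w with _ | ⟨a, w'⟩
        · exact absurd rfl hw
        · exact ⟨a, by rw [hS]; simp⟩
      obtain ⟨v, hvS⟩ := sinksOf_nonempty arr hQ hSne
      have hsink : ∀ s ∈ (↑S : Set V), ¬ arr v s :=
        fun s hs => not_arr_of_mem_sinks arr hvS s (Finset.mem_coe.1 hs)
      have hvSmem : v ∈ S := sinksOf_subset arr S hvS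
      have hvmem : v ∈ w := List.mem_toFinset.1 hvSmem
      obtain ⟨A, B, hvA, hvB, hset, heq⟩ :=
        decomp arr hsink w (fun s hs => List.mem_toFinset.2 hs) hvmem
      have hAS₁ : ∀ s ∈ A, s ∈ (B ++ A).toFinset := by
        intro s hs; rw [List.toFinset_append]; simp [hs]
      have hBS₁ : ∀ s ∈ B, s ∈ (B ++ A).toFinset := by
        intro s hs; rw [List.toFinset_append]; simp [hs]
      set S₁ := (B ++ A).toFinset with hS₁
      have hset' : S₁ ∪ {v} = S := by
        rw [hS₁, List.toFinset_append, hS, ← hset]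
        ext u; simp; tauto
      have hS₁v : v ∉ S₁ := by
        rw [hS₁, List.toFinset_append]
        simp only [Finset.mem_union, List.mem_toFinset]
        rintro (h | h)
        exacts [hvB h, hvA h]
      have hS₁sub : S₁ ⊆ S := by
        rw [← hset']; exact Finset.subset_union_left
      have hAS : ∀ s ∈ A, s ∈ S := fun s hs => hS₁sub (hAS₁ s hs)
      have hBS : ∀ s ∈ B, s ∈ S := fun s hs => hS₁sub (hBS₁ s hs)
      have hcard₁ : S₁.card < c := by
        rw [← hcard]
        exact Finset.card_lt_card ⟨hS₁sub, fun hsub => hS₁v (hsub hvSmem)⟩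
      obtain ⟨n₀, hn₀⟩ := ih S₁.card hcard₁ (B ++ A) rfl
      set C := Xset arr S₁ * xx v * W B with hC
      have hXS₁S : Xset arr S₁ ∈ genM arr (↑S : Set V) :=
        genM_mono arr (by exact_mod_cast hS₁sub) (Xset_mem_genM arr S₁)
      have hwpow : ∀ m, n₀ + 1 ≤ m → (W w) ^ m = C := by
        intro m hm
        obtain ⟨m', rfl⟩ : ∃ m', m = m' + 1 := ⟨m - 1, by omega⟩
        rw [heq, pow_formula arr hsink A B hAS hBS m', hn₀ m' (by omega)]
        have hAabs : W A * Xset arr S₁ = Xset arr S₁ :=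
          labs_genM arr hQ S₁ (W_mem_genM arr fun s hs => Finset.mem_coe.2 (hAS₁ s hs))
        rw [show W A * Xset arr S₁ * xx v * W B = Xset arr S₁ * xx v * W B by rw [hAabs]]
      have hCgen : C ∈ genM arr (↑S : Set V) := by
        refine mul_mem (mul_mem hXS₁S ?_) (W_mem_genM arr fun s hs => Finset.mem_coe.2 (hBS s hs))
        exact Submonoid.subset_closure ⟨v, Finset.mem_coe.2 hvSmem, rfl⟩
      have huC : ∀ u ∈ genM arr (↑S : Set V), u * C = C := by
        intro u hu
        induction hu using Submonoid.closure_induction with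
        | mem g hg =>
            obtain ⟨t, htS, rfl⟩ := hg
            by_cases htv : t = v
            · subst htv
              have habs : xx t * Xset arr S₁ * xx t = Xset arr S₁ * xx t :=
                sink_absorb arr hsink hXS₁S
              calc xx t * C = (xx t * Xset arr S₁ * xx t) * W B := by
                    rw [hC]; simp only [mul_assoc]
                _ = (Xset arr S₁ * xx t) * W B := by rw [habs]
                _ = C := by rw [hC]
            · have htS₁ : t ∈ S₁ := by
                have : t ∈ S₁ ∪ {v} := by rw [hset']; exact_mod_cast htS
                rcases Finset.mem_union.1 this with h | h
                · exact h
                · simp at h; exact absurd h htv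
              have habs : xx t * Xset arr S₁ = Xset arr S₁ := labs arr hQ S₁ t htS₁
              calc xx t * C = (xx t * Xset arr S₁) * xx v * W B := by
                    rw [hC]; simp only [mul_assoc]
                _ = C := by rw [habs, hC]
        | one => rw [one_mul]
        | mul a b ha hb iha ihb => rw [mul_assoc, ihb, iha]
      have h1 : Xset arr S * C = Xset arr S := rabs_genM arr hQ S hCgen
      have h2 : Xset arr S * C = C := huC _ (Xset_mem_genM arr S)
      exact ⟨n₀ + 1, fun m hm => by rw [hwpow m hm, ← h2, h1]⟩

end D2
end HKJ

namespace HKJ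
section E

theorem hk_one_of_isEmpty {V : Type} [IsEmpty V] (arr : V → V → Prop) (g : HK arr) :
    g = 1 := by
  obtain ⟨l, rfl⟩ := exists_word arr g
  cases l with
  | nil => rfl
  | cons a _ => exact (IsEmpty.false a).elim

theorem genM_univ {V : Type} (arr : V → V → Prop) (m : HK arr) :
    m ∈ genM arr (Set.univ : Set V) := by
  obtain ⟨l, rfl⟩ := exists_word arr m
  exact W_mem_genM arr fun s _ => Set.mem_univ s

theorem hk_finite : ∀ (n : ℕ) (V : Type) [DecidableEq V] [Fintype V]
    (arr : V → V → Prop) [DecidableRel arr],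
    Fintype.card V ≤ n → IsAcyclicQuiver arr → Finite (HK arr) := by
  intro n
  induction n with
  | zero =>
      intro V _ _ arr _ hcard _
      haveI : IsEmpty V := Fintype.card_eq_zero_iff.1 (Nat.le_zero.1 hcard)
      exact Finite.of_surjective (fun _ : Unit => (1 : HK arr))
        (fun g => ⟨(), (hk_one_of_isEmpty arr g).symm⟩)
  | succ n ihn =>
      intro V _ _ arr _ hcard hQ
      rcases isEmpty_or_nonempty V with hV | hV
      · exact Finite.of_surjective (fun _ : Unit => (1 : HK arr))
          (fun g => ⟨(), (hk_one_of_isEmpty arr g).symm⟩)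
      · obtain ⟨v, hvS⟩ := sinksOf_nonempty arr hQ (Finset.univ_nonempty)
        have hv : ∀ s : V, ¬ arr v s := fun s =>
          not_arr_of_mem_sinks arr hvS s (Finset.mem_univ s)
        -- the subquiver on V \ {v}
        let V' := {t : V // t ≠ v}
        let arr' : V' → V' → Prop := fun a b => arr a.val b.val
        haveI : DecidableRel arr' := fun a b => (inferInstance : DecidableRel arr) a.val b.val
        have hQ' : IsAcyclicQuiver arr' := by
          intro u hu
          apply hQ u.val
          exact Relation.TransGen.lift Subtype.val (fun a b h => h) u u hu
        have hcard' : Fintype.card V' ≤ n := by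
          have h1 : Fintype.card V' = Fintype.card V - 1 := by
            rw [show Fintype.card V' = Fintype.card {t : V // ¬ (t = v)} from rfl,
              Fintype.card_subtype_compl, Fintype.card_subtype_eq]
          have h2 : 1 ≤ Fintype.card V := Fintype.card_pos
          omega
        haveI hfin' : Finite (HK arr') := ihn V' arr' hcard' hQ'
        -- the comparison homomorphism
        have hker : HKCon arr' ≤ Con.ker (FreeMonoid.lift fun t : V' => HK.x arr t.val) := by
          apply Con.conGen_le.2
          intro a b hab
          rw [Con.ker_rel]
          induction hab with
          | idem t =>
              simp only [map_mul, FreeMonoid.lift_eval_of]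
              exact rel_idem arr t.val
          | braid s t =>
              simp only [map_mul, FreeMonoid.lift_eval_of]
              exact rel_braid arr s.val t.val
          | absorb s t hnot =>
              simp only [map_mul, FreeMonoid.lift_eval_of]
              exact rel_absorb arr hnot
        let h : HK arr' →* HK arr := Con.lift _ _ hker
        have h_x : ∀ t : V', h (HK.x arr' t) = HK.x arr t.val := by
          intro t
          show (Con.lift _ _ hker) ((HKCon arr').mk' (FreeMonoid.of t)) = _
          rw [Con.lift_mk', FreeMonoid.lift_eval_of]
        let g : ((HK arr' × HK arr') ⊕ HK arr') → HK arr :=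
          Sum.elim (fun p => h p.1 * HK.x arr v * h p.2) h
        have hsurj : Function.Surjective g := by
          intro y
          obtain ⟨w, rfl⟩ := exists_word arr y
          induction w using List.reverseRecOn with
          | nil =>
              refine ⟨Sum.inr 1, ?_⟩
              show h 1 = HK.X arr []
              rw [map_one]
              rfl
          | append_singleton w t ihw =>
              obtain ⟨cc, hcc⟩ := ihw
              rw [W_append, W_singleton, ← hcc]
              rcases cc with p | a
              · by_cases htv : t = v
                · refine ⟨Sum.inl (p.1 * p.2, 1), ?_⟩
                  subst htv
                  have habs : HK.x arr t * h p.2 * HK.x arr t = h p.2 * HK.x arr t :=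
                    sink_absorb arr (M := (Set.univ : Set V)) (fun s _ => hv s)
                      (genM_univ arr (h p.2))
                  show h (p.1 * p.2) * HK.x arr t * h 1 = (h p.1 * HK.x arr t * h p.2) * HK.x arr t
                  rw [map_one, mul_one, map_mul]
                  calc h p.1 * h p.2 * HK.x arr t
                      = h p.1 * (HK.x arr t * h p.2 * HK.x arr t) := by
                        rw [habs]; simp only [mul_assoc]
                    _ = (h p.1 * HK.x arr t * h p.2) * HK.x arr t := by simp only [mul_assoc]
                · refine ⟨Sum.inl (p.1, p.2 * HK.x arr' ⟨t, htv⟩), ?_⟩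
                  show h p.1 * HK.x arr v * h (p.2 * HK.x arr' ⟨t, htv⟩)
                      = (h p.1 * HK.x arr v * h p.2) * HK.x arr t
                  rw [map_mul, h_x]
                  simp only [mul_assoc]
              · by_cases htv : t = v
                · refine ⟨Sum.inl (a, 1), ?_⟩
                  subst htv
                  show h a * HK.x arr t * h 1 = h a * HK.x arr t
                  rw [map_one, mul_one]
                · refine ⟨Sum.inr (a * HK.x arr' ⟨t, htv⟩), ?_⟩
                  show h (a * HK.x arr' ⟨t, htv⟩) = h a * HK.x arr t
                  rw [map_mul, h_x]
        exact Finite.of_surjective g hsurj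

theorem hk_finite' {V : Type} [DecidableEq V] [Fintype V] (arr : V → V → Prop)
    [DecidableRel arr] (hQ : IsAcyclicQuiver arr) : Finite (HK arr) :=
  hk_finite (Fintype.card V) V arr le_rfl hQ

end E
end HKJ

namespace HKJ
section F1

/-- the commutative monoid of finite vertex sets under union -/
def SuppM (V : Type) [DecidableEq V] := Finset V

variable {V : Type} [DecidableEq V]

def SuppM.toF : SuppM V → Finset V := fun s => s
def SuppM.ofF : Finset V → SuppM V := fun s => s

instance : CommMonoid (SuppM V) where
  mul a b := SuppM.ofF (SuppM.toF a ∪ SuppM.toF b)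
  one := SuppM.ofF (∅ : Finset V)
  mul_assoc a b c := Finset.union_assoc (SuppM.toF a) (SuppM.toF b) (SuppM.toF c)
  one_mul a := Finset.empty_union (SuppM.toF a)
  mul_one a := Finset.union_empty (SuppM.toF a)
  mul_comm a b := Finset.union_comm (SuppM.toF a) (SuppM.toF b)

theorem suppM_mul_def (a b : SuppM V) : a * b = SuppM.ofF (SuppM.toF a ∪ SuppM.toF b) := rfl
theorem suppM_one_def : (1 : SuppM V) = SuppM.ofF (∅ : Finset V) := rfl

instance : DecidableEq (SuppM V) := fun a b =>
  (inferInstance : DecidableEq (Finset V)) (SuppM.toF a) (SuppM.toF b)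

variable (arr : V → V → Prop)

theorem supp_ker : HKCon arr ≤ Con.ker (FreeMonoid.lift fun t : V => SuppM.ofF ({t} : Finset V)) := by
  apply Con.conGen_le.2
  intro a b hab
  rw [Con.ker_rel]
  induction hab with
  | idem t =>
      simp only [map_mul, FreeMonoid.lift_eval_of]
      show (({t} : Finset V) ∪ {t} : Finset V) = ({t} : Finset V)
      simp
  | braid s t =>
      simp only [map_mul, FreeMonoid.lift_eval_of]
      show (({s} : Finset V) ∪ {t} ∪ {s} : Finset V) = (({t} : Finset V) ∪ {s} ∪ {t} : Finset V)
      ext u; simp; tauto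
  | absorb s t _ =>
      simp only [map_mul, FreeMonoid.lift_eval_of]
      show (({t} : Finset V) ∪ {s} ∪ {t} : Finset V) = (({s} : Finset V) ∪ {t} : Finset V)
      ext u; simp

/-- the support homomorphism -/
def suppHom : HK arr →* SuppM V :=
  Con.lift _ (FreeMonoid.lift fun t : V => SuppM.ofF ({t} : Finset V)) (supp_ker arr)

/-- the support of an element, as a `Finset`. -/
def suppF (g : HK arr) : Finset V := suppHom arr g

theorem suppF_x (t : V) : suppF arr (HK.x arr t) = {t} := by
  show (suppHom arr) ((HKCon arr).mk' (FreeMonoid.of t)) = _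
  rw [suppHom, Con.lift_mk', FreeMonoid.lift_eval_of]
  rfl

theorem suppF_mul (a b : HK arr) : suppF arr (a * b) = suppF arr a ∪ suppF arr b := by
  show (suppHom arr) (a * b) = _
  rw [map_mul]
  rfl

theorem suppF_W (l : List V) : suppF arr (HK.X arr l) = l.toFinset := by
  induction l with
  | nil =>
      show (suppHom arr) 1 = _
      rw [map_one]
      rfl
  | cons t l ih =>
      rw [W_cons, suppF_mul, suppF_x, ih]
      ext u; simp

theorem suppF_eq_of_suppHom {a b : HK arr} (h : suppHom arr a = suppHom arr b) :
    suppF arr a = suppF arr b := h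

theorem suppHom_eq_of_suppF {a b : HK arr} (h : suppF arr a = suppF arr b) :
    suppHom arr a = suppHom arr b := h

variable [DecidableRel arr] [Fintype V]

theorem suppF_Xset (hQ : IsAcyclicQuiver arr) (M : Finset V) :
    suppF arr (Xset arr M) = M := by
  rw [Xset_eq_W, suppF_W, mword_toFinset arr hQ]

end F1
end HKJ

namespace HKJ
section F2
variable {V : Type} [DecidableEq V] (arr : V → V → Prop) [DecidableRel arr] [Fintype V]

local notation "W" => HK.X arr
local notation "xx" => HK.x arr

/-- left multiples of `u` -/
def leftSet (u : HK arr) : Set (HK arr) := {z : HK arr | ∃ p, z = p * u}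

theorem mem_leftSet_self (u : HK arr) : u ∈ leftSet arr u := ⟨1, (one_mul u).symm⟩

noncomputable def rho (u : HK arr) : ℕ := (leftSet arr u).ncard

variable [Finite (HK arr)]

theorem rho_pos (u : HK arr) : 1 ≤ rho arr u :=
  (Set.ncard_pos (Set.toFinite _)).2 ⟨u, mem_leftSet_self arr u⟩

theorem rho_le (u : HK arr) : rho arr u ≤ Nat.card (HK arr) := by
  rw [rho, ← Set.ncard_univ]
  exact Set.ncard_le_ncard (Set.subset_univ _) (Set.toFinite _)

theorem fix_pow {a u : HK arr} (h : a * u = u) : ∀ n : ℕ, a ^ n * u = u := by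
  intro n
  induction n with
  | zero => rw [pow_zero, one_mul]
  | succ n ihn => rw [pow_succ', mul_assoc, ihn, h]

theorem mem_genM_of_suppF_subset (hQ : IsAcyclicQuiver arr) {a : HK arr} {T : Finset V}
    (h : suppF arr a ⊆ T) : a ∈ genM arr (↑T : Set V) := by
  obtain ⟨l, rfl⟩ := exists_word arr a
  rw [suppF_W] at h
  exact W_mem_genM arr fun s hs => Finset.mem_coe.2 (h (List.mem_toFinset.2 hs))

theorem fix_Xset (hQ : IsAcyclicQuiver arr) {a u : HK arr} (h : a * u = u) :
    Xset arr (suppF arr a) * u = u := by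
  obtain ⟨wa, rfl⟩ := exists_word arr a
  obtain ⟨n, hn⟩ := pow_stab arr hQ wa
  have h2 := fix_pow arr h n
  rw [hn n le_rfl] at h2
  rw [suppF_W]
  exact h2

theorem fix_iff (hQ : IsAcyclicQuiver arr) {a b u : HK arr}
    (hs : suppF arr a = suppF arr b) (h : a * u = u) : b * u = u := by
  have h1 : Xset arr (suppF arr a) * u = u := fix_Xset arr hQ h
  have h2 : b * Xset arr (suppF arr a) = Xset arr (suppF arr a) :=
    labs_genM arr hQ _ (mem_genM_of_suppF_subset arr hQ (by rw [hs]))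
  calc b * u = b * (Xset arr (suppF arr a) * u) := by rw [h1]
    _ = (b * Xset arr (suppF arr a)) * u := by rw [mul_assoc]
    _ = Xset arr (suppF arr a) * u := by rw [h2]
    _ = u := h1

theorem rho_lt (hQ : IsAcyclicQuiver arr) {a u : HK arr} (h : a * u ≠ u) :
    rho arr (a * u) < rho arr u := by
  apply Set.ncard_lt_ncard _ (Set.toFinite _)
  constructor
  · rintro z ⟨p, rfl⟩
    exact ⟨p * a, by rw [mul_assoc]⟩
  · intro hsub
    apply h
    have humem : u ∈ leftSet arr (a * u) := hsub (mem_leftSet_self arr u)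
    obtain ⟨p, hp⟩ := humem
    have hq : (p * a) * u = u := by rw [mul_assoc, ← hp]
    have hX : Xset arr (suppF arr (p * a)) * u = u := fix_Xset arr hQ hq
    have hsubset : suppF arr a ⊆ suppF arr (p * a) := by
      rw [suppF_mul]; exact Finset.subset_union_right
    have habs : a * Xset arr (suppF arr (p * a)) = Xset arr (suppF arr (p * a)) :=
      labs_genM arr hQ _ (mem_genM_of_suppF_subset arr hQ hsubset)
    calc a * u = a * (Xset arr (suppF arr (p * a)) * u) := by rw [hX]
      _ = (a * Xset arr (suppF arr (p * a))) * u := by rw [mul_assoc]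
      _ = Xset arr (suppF arr (p * a)) * u := by rw [habs]
      _ = u := hX

end F2
end HKJ

namespace HKJ
section F3
variable {V : Type} [DecidableEq V] (k : Type) [Field k]
variable (arr : V → V → Prop) [DecidableRel arr] [Fintype V]

local notation "W" => HK.X arr
local notation "B" => MonoidAlgebra k (HK arr)
local notation "A'" => MonoidAlgebra k (SuppM V)

noncomputable def phi : MonoidAlgebra k (HK arr) →ₐ[k] MonoidAlgebra k (SuppM V) :=
  MonoidAlgebra.lift k (MonoidAlgebra k (SuppM V)) (HK arr)
    ((MonoidAlgebra.of k (SuppM V)).comp (suppHom arr))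

theorem phi_single (g : HK arr) (c : k) :
    phi k arr (MonoidAlgebra.single g c) = MonoidAlgebra.single (suppHom arr g) c := by
  rw [phi, MonoidAlgebra.lift_single, MonoidHom.comp_apply, MonoidAlgebra.of_apply,
    MonoidAlgebra.smul_single', mul_one]

theorem phi_of (g : HK arr) :
    phi k arr (MonoidAlgebra.of k (HK arr) g) = MonoidAlgebra.of k (SuppM V) (suppHom arr g) := by
  rw [MonoidAlgebra.of_apply, MonoidAlgebra.of_apply, phi_single]

theorem phi_eq_mapDomain (x : MonoidAlgebra k (HK arr)) :
    (phi k arr x).coeff = Finsupp.mapDomain (⇑(suppHom arr)) x.coeff := by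
  induction x using MonoidAlgebra.induction with
  | zero => simp only [map_zero, MonoidAlgebra.coeff_zero, Finsupp.mapDomain_zero]
  | single_add g c f hgf hc ih =>
      rw [map_add, MonoidAlgebra.coeff_add, MonoidAlgebra.coeff_add, Finsupp.mapDomain_add, ih,
        phi_single, MonoidAlgebra.coeff_single, MonoidAlgebra.coeff_single, Finsupp.mapDomain_single]

/-- the spanning set appearing in the statement -/
def DSet : Set (MonoidAlgebra k (HK arr)) :=
  {b : MonoidAlgebra k (HK arr) | ∃ w : List V,
    b = MonoidAlgebra.of k (HK arr) (Xset arr w.toFinset)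
      - MonoidAlgebra.of k (HK arr) (HK.X arr w)}

/-- differences of equal-support monomials -/
def ESet : Set (MonoidAlgebra k (HK arr)) :=
  {p : MonoidAlgebra k (HK arr) | ∃ a b : HK arr, suppF arr a = suppF arr b ∧
    p = MonoidAlgebra.of k (HK arr) a - MonoidAlgebra.of k (HK arr) b}

theorem DSet_subset_ESet (hQ : IsAcyclicQuiver arr) : DSet k arr ⊆ ESet k arr := by
  rintro p ⟨w, rfl⟩
  exact ⟨Xset arr w.toFinset, W w, by rw [suppF_Xset arr hQ, suppF_W], rfl⟩

theorem phi_DSet_zero (hQ : IsAcyclicQuiver arr) {p : MonoidAlgebra k (HK arr)}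
    (hp : p ∈ DSet k arr) : phi k arr p = 0 := by
  obtain ⟨w, rfl⟩ := hp
  rw [map_sub, phi_of, phi_of]
  have : suppHom arr (Xset arr w.toFinset) = suppHom arr (W w) :=
    suppHom_eq_of_suppF arr (by rw [suppF_Xset arr hQ, suppF_W])
  rw [this, sub_self]

theorem phi_spanD_zero (hQ : IsAcyclicQuiver arr) {x : MonoidAlgebra k (HK arr)}
    (hx : x ∈ Submodule.span k (DSet k arr)) : phi k arr x = 0 := by
  induction hx using Submodule.span_induction with
  | mem p hp => exact phi_DSet_zero k arr hQ hp
  | zero => exact map_zero _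
  | add p q _ _ ihp ihq => rw [map_add, ihp, ihq, add_zero]
  | smul c p _ ihp => rw [map_smul, ihp, smul_zero]

theorem mem_spanD (hQ : IsAcyclicQuiver arr) {x : MonoidAlgebra k (HK arr)}
    (hx : Finsupp.mapDomain (⇑(suppHom arr)) x.coeff = 0) :
    x ∈ Submodule.span k (DSet k arr) := by
  classical
  set r : SuppM V → HK arr := fun S => Xset arr (SuppM.toF S) with hr
  have hcomp : Finsupp.mapDomain (r ∘ ⇑(suppHom arr)) x.coeff = 0 := by
    rw [Finsupp.mapDomain_comp, hx, Finsupp.mapDomain_zero]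
  have hmapsum : Finsupp.mapDomain (r ∘ ⇑(suppHom arr)) x.coeff
      = x.coeff.sum (fun a c => Finsupp.single (r (suppHom arr a)) c) := rfl
  have hx2 : x.coeff = x.coeff.sum (fun a c =>
      Finsupp.single a c - Finsupp.single (r (suppHom arr a)) c) := by
    rw [Finsupp.sum_sub, Finsupp.sum_single, ← hmapsum, hcomp, sub_zero]
  rw [← MonoidAlgebra.ofCoeff_coeff x, hx2, Finsupp.sum, MonoidAlgebra.ofCoeff_sum]
  apply Submodule.sum_mem
  intro a _
  obtain ⟨w, rfl⟩ := exists_word arr a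
  have hrw : r (suppHom arr (W w)) = Xset arr w.toFinset := by
    show Xset arr (suppF arr (W w)) = _
    rw [suppF_W]
  rw [hrw]
  have : MonoidAlgebra.ofCoeff (Finsupp.single (W w) (x.coeff (W w))
        - Finsupp.single (Xset arr w.toFinset) (x.coeff (W w)))
      = (-(x.coeff (W w))) • ((MonoidAlgebra.of k (HK arr) (Xset arr w.toFinset))
        - (MonoidAlgebra.of k (HK arr) (W w))) := by
    rw [smul_sub, MonoidAlgebra.of_apply, MonoidAlgebra.of_apply,
      MonoidAlgebra.smul_single', MonoidAlgebra.smul_single', MonoidAlgebra.ofCoeff_sub,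
      MonoidAlgebra.ofCoeff_single, MonoidAlgebra.ofCoeff_single]
    simp only [mul_one, MonoidAlgebra.single_neg]
    abel
  rw [this]
  exact Submodule.smul_mem _ _ (Submodule.subset_span ⟨w, rfl⟩)

end F3
end HKJ

namespace HKJ
section F4
variable {V : Type} [DecidableEq V] (k : Type) [Field k]

/-- the character of the support algebra attached to a vertex subset `T` -/
def chiHom (T : Finset V) : SuppM V →* k where
  toFun S := if SuppM.toF S ⊆ T then 1 else 0
  map_one' := by
    show (if SuppM.toF (1 : SuppM V) ⊆ T then (1:k) else 0) = 1
    rw [if_pos (show SuppM.toF (1 : SuppM V) ⊆ T from Finset.empty_subset T)]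
  map_mul' a b := by
    show (if SuppM.toF a ∪ SuppM.toF b ⊆ T then (1:k) else 0) = _
    by_cases h1 : SuppM.toF a ⊆ T <;> by_cases h2 : SuppM.toF b ⊆ T <;>
      simp [h1, h2, Finset.union_subset_iff]

noncomputable def epsHom (T : Finset V) : MonoidAlgebra k (SuppM V) →ₐ[k] k :=
  MonoidAlgebra.lift k k (SuppM V) (chiHom k T)

theorem eps_separates {y : MonoidAlgebra k (SuppM V)}
    (hy : ∀ T : Finset V, epsHom k T y = 0) : y = 0 := by
  classical
  have key : ∀ n (T : SuppM V), (SuppM.toF T).card ≤ n → y.coeff T = 0 := by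
    intro n
    induction n using Nat.strong_induction_on with
    | _ n ih =>
      intro T hT
      by_cases hTs : T ∈ y.coeff.support
      · have h0 := hy (SuppM.toF T)
        rw [epsHom, MonoidAlgebra.lift_apply] at h0
        have h1 : (y.coeff.sum fun S c => c • (chiHom k (SuppM.toF T)) S)
            = ∑ S ∈ y.coeff.support.filter (fun S => SuppM.toF S ⊆ SuppM.toF T), y.coeff S := by
          rw [Finsupp.sum, Finset.sum_filter]
          apply Finset.sum_congr rfl
          intro S _
          show y.coeff S • (if SuppM.toF S ⊆ SuppM.toF T then (1:k) else 0) = _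
          by_cases h : SuppM.toF S ⊆ SuppM.toF T <;> simp [h]
        rw [h1] at h0
        have hTf : T ∈ y.coeff.support.filter (fun S => SuppM.toF S ⊆ SuppM.toF T) :=
          Finset.mem_filter.2 ⟨hTs, Finset.Subset.refl _⟩
        rw [← Finset.insert_erase hTf, Finset.sum_insert (Finset.notMem_erase _ _)] at h0
        have hz : ∀ S ∈ (y.coeff.support.filter (fun S => SuppM.toF S ⊆ SuppM.toF T)).erase T,
            y.coeff S = 0 := by
          intro S hS
          have hSne := Finset.ne_of_mem_erase hS
          have hSf := Finset.mem_of_mem_erase hS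
          have hsub : SuppM.toF S ⊆ SuppM.toF T := (Finset.mem_filter.1 hSf).2
          have hssub : SuppM.toF S ⊂ SuppM.toF T := by
            refine ⟨hsub, fun hsub' => hSne ?_⟩
            have : SuppM.toF S = SuppM.toF T := Finset.Subset.antisymm hsub hsub'
            exact this
          have hcard : (SuppM.toF S).card < n := by
            have := Finset.card_lt_card hssub
            omega
          exact ih (SuppM.toF S).card hcard S le_rfl
        rw [Finset.sum_eq_zero hz, add_zero] at h0
        exact h0
      · exact Finsupp.notMem_support_iff.1 hTs
  apply MonoidAlgebra.ext
  apply Finsupp.ext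
  intro T
  rw [key (SuppM.toF T).card T le_rfl]
  rfl

/-- kernels of algebra maps to the base field are maximal -/
theorem ker_max {R : Type} [Ring R] [Algebra k R] (f : R →ₐ[k] k) :
    (RingHom.ker f.toRingHom).IsMaximal := by
  constructor
  constructor
  · intro htop
    have h1 : (1 : R) ∈ RingHom.ker f.toRingHom := htop ▸ Submodule.mem_top
    rw [RingHom.mem_ker] at h1
    simp at h1
  · intro J hJ
    obtain ⟨a, haJ, hak⟩ := SetLike.exists_of_lt hJ
    have hfa : f a ≠ 0 := by
      intro h
      exact hak (RingHom.mem_ker.2 h)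
    rw [Ideal.eq_top_iff_one]
    have hu : (1 : R) - (f a)⁻¹ • a ∈ RingHom.ker f.toRingHom := by
      rw [RingHom.mem_ker]
      show f (1 - (f a)⁻¹ • a) = 0
      rw [map_sub, map_one, map_smul, smul_eq_mul, inv_mul_cancel₀ hfa, sub_self]
    have h2 : (1 : R) - (f a)⁻¹ • a ∈ J := hJ.le hu
    have h3 : (f a)⁻¹ • a ∈ J := by
      rw [Algebra.smul_def]
      exact Ideal.mul_mem_left J _ haJ
    have := Ideal.add_mem J h2 h3
    rwa [sub_add_cancel] at this

end F4
end HKJ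

namespace HKJ
section F5
variable {V : Type} [DecidableEq V] (k : Type) [Field k]
variable (arr : V → V → Prop) [DecidableRel arr] [Fintype V] [Finite (HK arr)]

local notation "W" => HK.X arr

/-- filtration of the monoid algebra by the size of left-multiple sets -/
noncomputable def PhiMod (r : ℕ) : Submodule k (MonoidAlgebra k (HK arr)) :=
  Submodule.span k ((MonoidAlgebra.of k (HK arr)) '' {u : HK arr | rho arr u ≤ r})

theorem PhiMod_zero : PhiMod k arr 0 = ⊥ := by
  rw [PhiMod]
  have : {u : HK arr | rho arr u ≤ 0} = ∅ := by
    ext u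
    simp only [Set.mem_setOf_eq, Set.mem_empty_iff_false, iff_false, not_le]
    exact rho_pos arr u
  rw [this, Set.image_empty, Submodule.span_empty]

theorem mul_step (hQ : IsAcyclicQuiver arr) (r : ℕ) {y z : MonoidAlgebra k (HK arr)}
    (hy : y ∈ Submodule.span k (ESet k arr)) (hz : z ∈ PhiMod k arr r) :
    y * z ∈ PhiMod k arr (r - 1) := by
  induction hy using Submodule.span_induction with
  | zero => rw [zero_mul]; exact Submodule.zero_mem _
  | add p q hp hq ihp ihq => rw [add_mul]; exact Submodule.add_mem _ ihp ihq
  | smul c p hp ihp => rw [smul_mul_assoc]; exact Submodule.smul_mem _ c ihp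
  | mem p hp =>
      obtain ⟨a, b, hs, rfl⟩ := hp
      induction hz using Submodule.span_induction with
      | zero => rw [mul_zero]; exact Submodule.zero_mem _
      | add p' q' hp' hq' ihp' ihq' => rw [mul_add]; exact Submodule.add_mem _ ihp' ihq'
      | smul c p' hp' ihp' => rw [mul_smul_comm]; exact Submodule.smul_mem _ c ihp'
      | mem q hq =>
          obtain ⟨u, hu, rfl⟩ := hq
          have hprod : (MonoidAlgebra.of k (HK arr) a - MonoidAlgebra.of k (HK arr) b)
              * MonoidAlgebra.of k (HK arr) u
              = MonoidAlgebra.of k (HK arr) (a * u) - MonoidAlgebra.of k (HK arr) (b * u) := by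
            rw [sub_mul]
            simp only [MonoidAlgebra.of_apply, MonoidAlgebra.single_mul_single, one_mul]
          rw [hprod]
          by_cases hau : a * u = u
          · have hbu : b * u = u := fix_iff arr hQ hs hau
            rw [hau, hbu, sub_self]
            exact Submodule.zero_mem _
          · have hbu : b * u ≠ u := fun h => hau (fix_iff arr hQ hs.symm h)
            have h1 : rho arr (a * u) ≤ r - 1 := by
              have := rho_lt arr hQ hau
              have := hu
              simp only [Set.mem_setOf_eq] at this
              omega
            have h2 : rho arr (b * u) ≤ r - 1 := by
              have := rho_lt arr hQ hbu
              have := hu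
              simp only [Set.mem_setOf_eq] at this
              omega
            exact Submodule.sub_mem _
              (Submodule.subset_span ⟨a * u, h1, rfl⟩)
              (Submodule.subset_span ⟨b * u, h2, rfl⟩)

theorem pow_step (hQ : IsAcyclicQuiver arr) {y : MonoidAlgebra k (HK arr)}
    (hy : y ∈ Submodule.span k (ESet k arr)) :
    ∀ (n r : ℕ) (z : MonoidAlgebra k (HK arr)), z ∈ PhiMod k arr r →
      y ^ n * z ∈ PhiMod k arr (r - n) := by
  intro n
  induction n with
  | zero =>
      intro r z hz
      rw [pow_zero, one_mul]
      exact hz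
  | succ n ihn =>
      intro r z hz
      have h1 : y ^ n * z ∈ PhiMod k arr (r - n) := ihn r z hz
      have h2 : y * (y ^ n * z) ∈ PhiMod k arr (r - n - 1) := mul_step k arr hQ _ hy h1
      have h3 : y ^ (n + 1) * z = y * (y ^ n * z) := by
        rw [pow_succ', mul_assoc]
      rw [h3, show r - (n + 1) = r - n - 1 by omega]
      exact h2

theorem spanE_nilpotent (hQ : IsAcyclicQuiver arr) {y : MonoidAlgebra k (HK arr)}
    (hy : y ∈ Submodule.span k (ESet k arr)) :
    y ^ (Nat.card (HK arr)) = 0 := by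
  have hone : (1 : MonoidAlgebra k (HK arr)) ∈ PhiMod k arr (Nat.card (HK arr)) := by
    apply Submodule.subset_span
    refine ⟨1, ?_, ?_⟩
    · exact rho_le arr 1
    · rw [MonoidAlgebra.of_apply, MonoidAlgebra.one_def]
  have := pow_step k arr hQ hy (Nat.card (HK arr)) (Nat.card (HK arr)) 1 hone
  rw [mul_one, Nat.sub_self, PhiMod_zero, Submodule.mem_bot] at this
  exact this

end F5
end HKJ


open HKJ in
/-- For a field `k` and a finite acyclic quiver `Q`, the Jacobson
radical of `B = MonoidAlgebra k (HK Q)` equals the `k`-linear span of the elements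
`X_{{w}} − X_w` for words `w` over the vertices. -/
theorem hk_jacobson_radical (k V : Type) [Field k] [Fintype V] [DecidableEq V]
    (arr : V → V → Prop) [DecidableRel arr] (hQ : IsAcyclicQuiver arr) :
    ((⊥ : Ideal (MonoidAlgebra k (HK arr))).jacobson : Set (MonoidAlgebra k (HK arr))) =
    (Submodule.span k {b : MonoidAlgebra k (HK arr) | ∃ w : List V,
        b = MonoidAlgebra.of k (HK arr) (Xset arr w.toFinset)
          - MonoidAlgebra.of k (HK arr) (HK.X arr w)} : Set (MonoidAlgebra k (HK arr))) := by
  classical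
  haveI hfin : Finite (HK arr) := hk_finite' arr hQ
  have hDset : {b : MonoidAlgebra k (HK arr) | ∃ w : List V,
      b = MonoidAlgebra.of k (HK arr) (Xset arr w.toFinset)
        - MonoidAlgebra.of k (HK arr) (HK.X arr w)} = DSet k arr := rfl
  rw [hDset]
  ext x
  simp only [SetLike.mem_coe]
  constructor
  · -- jacobson radical ⊆ span
    intro hx
    apply mem_spanD k arr hQ
    rw [← phi_eq_mapDomain, MonoidAlgebra.coeff_eq_zero]
    apply eps_separates k
    intro T
    have hmax := ker_max k ((epsHom k T).comp (phi k arr))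
    have hxk : x ∈ RingHom.ker ((epsHom k T).comp (phi k arr)).toRingHom := by
      rw [Ideal.jacobson] at hx
      exact Ideal.mem_sInf.1 hx ⟨bot_le, hmax⟩
    rw [RingHom.mem_ker] at hxk
    simpa using hxk
  · -- span ⊆ jacobson radical
    intro hx
    rw [Ideal.jacobson, Ideal.mem_sInf]
    rintro J ⟨-, hmax⟩
    by_contra hxJ
    have hlt : J < J ⊔ Ideal.span {x} := by
      refine lt_of_le_of_ne le_sup_left fun h => hxJ ?_
      rw [h]
      exact Submodule.mem_sup_right (Ideal.subset_span (Set.mem_singleton x))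
    have htop : J ⊔ Ideal.span {x} = ⊤ := hmax.out.2 _ hlt
    have h1 : (1 : MonoidAlgebra k (HK arr)) ∈ J ⊔ Ideal.span {x} := by
      rw [htop]; exact Submodule.mem_top
    obtain ⟨u, huJ, w, hw, huw⟩ := Submodule.mem_sup.1 h1
    obtain ⟨rr, hrr⟩ := Submodule.mem_span_singleton.1 hw
    have hphiw : Finsupp.mapDomain (⇑(suppHom arr)) w.coeff = 0 := by
      rw [← phi_eq_mapDomain, ← hrr, smul_eq_mul, map_mul, phi_spanD_zero k arr hQ hx, mul_zero,
        MonoidAlgebra.coeff_zero]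
    have hwE : w ∈ Submodule.span k (ESet k arr) :=
      Submodule.span_mono (DSet_subset_ESet k arr hQ) (mem_spanD k arr hQ hphiw)
    have hwN : w ^ (Nat.card (HK arr)) = 0 := spanE_nilpotent k arr hQ hwE
    have h1mw : (1 : MonoidAlgebra k (HK arr)) - w ∈ J := by
      have hu : u = 1 - w := by rw [← huw]; abel
      rwa [← hu]
    have hg := geom_sum_mul w (Nat.card (HK arr))
    rw [hwN, zero_sub] at hg
    have hone : (∑ i ∈ Finset.range (Nat.card (HK arr)), w ^ i) * (1 - w) = 1 := by
      have hneg : (1 : MonoidAlgebra k (HK arr)) - w = -(w - 1) := by rw [neg_sub]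
      rw [hneg, mul_neg, hg, neg_neg]
    have : (1 : MonoidAlgebra k (HK arr)) ∈ J := by
      rw [← hone]
      exact Ideal.mul_mem_left J _ h1mw
    exact hmax.out.1 ((Ideal.eq_top_iff_one J).2 this)
end

section
/- Let k be a field, Q a finite acyclic quiver with vertex set V, and B := MonoidAlgebra k HK(Q). Then the one-dimensional B-modules E_M, for M ranging over the subsets of V, form a complete and irredundant list of the simple B-modules: E_M and E_N are non-isomorphic for M ≠ N, and every simple B-module is isomorphic to E_M for some M ⊆ V. In particular B is a basic algebra with exactly 2^{|V|} isomorphism classes of simple modules, all one-dimensional. -/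
set_option linter.unusedVariables false

/-- The multiplicative character of the free monoid over `V` sending the letter `q`
to `1` if `q ∈ M` and to `0` otherwise. -/
def charWord (k : Type) [CommRing k] {V : Type} [DecidableEq V] (M : Finset V) :
    FreeMonoid V →* k :=
  FreeMonoid.lift fun q => if q ∈ M then (1 : k) else 0

/-- The monoid homomorphism `HK(Q) →* k` sending `x_q` to `1` if `q ∈ M` and to `0`
otherwise; it is well defined since the assignment respects the defining relations. -/
def charHom (k : Type) [CommRing k] {V : Type} [DecidableEq V]
    (arr : V → V → Prop) (M : Finset V) : HK arr →* k :=
  Con.lift _ (charWord k M) (Con.conGen_le.mpr (fun a b h => by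
    cases h with
    | idem t =>
        refine (Con.ker_rel _).mpr ?_
        by_cases ht : t ∈ M <;> simp [charWord, ht]
    | braid s t =>
        refine (Con.ker_rel _).mpr ?_
        by_cases hs : s ∈ M <;> by_cases ht : t ∈ M <;> simp [charWord, hs, ht]
    | absorb s t hst =>
        refine (Con.ker_rel _).mpr ?_
        by_cases hs : s ∈ M <;> by_cases ht : t ∈ M <;> simp [charWord, hs, ht]))

/-- The `k`-algebra homomorphism `δ_M : MonoidAlgebra k (HK Q) →ₐ[k] k` induced by
the character `charHom k arr M`. -/
noncomputable def deltaHom (k : Type) [Field k] {V : Type} [DecidableEq V]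
    (arr : V → V → Prop) (M : Finset V) : MonoidAlgebra k (HK arr) →ₐ[k] k :=
  MonoidAlgebra.lift k k (HK arr) (charHom k arr M)

/-- The one-dimensional `MonoidAlgebra k (HK Q)`-module `E_M`: the field `k` with
action through `δ_M`. -/
def Emod (k : Type) {V : Type} (arr : V → V → Prop) (M : Finset V) : Type := k

instance (k : Type) [Field k] {V : Type} (arr : V → V → Prop) (M : Finset V) :
    AddCommGroup (Emod k arr M) := inferInstanceAs (AddCommGroup k)

instance (k : Type) [Field k] {V : Type} (arr : V → V → Prop) (M : Finset V) :
    Module k (Emod k arr M) := inferInstanceAs (Module k k)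

noncomputable instance (k : Type) [Field k] {V : Type} [DecidableEq V]
    (arr : V → V → Prop) (M : Finset V) :
    Module (MonoidAlgebra k (HK arr)) (Emod k arr M) :=
  Module.compHom k (deltaHom k arr M).toRingHom

lemma exists_sink_aux {V : Type} (arr : V → V → Prop) (T : Finset V) (hne : T.Nonempty)
    (hacy : ∀ v ∈ T, ¬ Relation.TransGen (fun a b => arr a b ∧ a ∈ T ∧ b ∈ T) v v) :
    ∃ t ∈ T, ∀ s ∈ T, ¬ arr t s := by
  by_contra hcon
  push_neg at hcon
  have h' : ∀ x : {x // x ∈ T}, ∃ y : {x // x ∈ T}, arr x.1 y.1 := by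
    rintro ⟨x, hx⟩
    obtain ⟨s, hs, ha⟩ := hcon x hx
    exact ⟨⟨s, hs⟩, ha⟩
  choose g hg using h'
  obtain ⟨x0, hx0⟩ := hne
  set a0 : {x // x ∈ T} := ⟨x0, hx0⟩ with ha0
  have chain : ∀ (a : {x // x ∈ T}) (j : ℕ), 0 < j →
      Relation.TransGen (fun a b => arr a b ∧ a ∈ T ∧ b ∈ T) a.1 (g^[j] a).1 := by
    intro a j hj
    induction j with
    | zero => omega
    | succ j ihj =>
      rcases Nat.eq_zero_or_pos j with rfl | hj'
      · simpa using Relation.TransGen.single ⟨hg a, a.2, (g a).2⟩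
      · have h2 := (ihj hj').tail ⟨hg _, (g^[j] a).2, (g (g^[j] a)).2⟩
        rw [Function.iterate_succ_apply']
        exact h2
  obtain ⟨m, n, hmn, heq⟩ := Finite.exists_ne_map_eq_of_infinite (fun n => g^[n] a0)
  rcases Ne.lt_or_gt hmn with hlt | hlt
  · have hdecomp : g^[n] a0 = g^[n - m] (g^[m] a0) := by
      rw [← Function.iterate_add_apply]
      congr 1; omega
    have h3 := chain (g^[m] a0) (n - m) (by omega)
    rw [← hdecomp, ← heq] at h3
    exact hacy _ (g^[m] a0).2 h3
  · have hdecomp : g^[m] a0 = g^[m - n] (g^[n] a0) := by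
      rw [← Function.iterate_add_apply]
      congr 1; omega
    have h3 := chain (g^[n] a0) (m - n) (by omega)
    rw [← hdecomp, heq] at h3
    exact hacy _ (g^[n] a0).2 h3

lemma hk_key (k : Type) [Field k] {V : Type} [DecidableEq V] (arr : V → V → Prop)
    (S : Type) [AddCommGroup S] [Module k S] (hS : ∃ v : S, v ≠ 0)
    (e : V → Module.End k S) :
    ∀ (n : ℕ) (T : Finset V), T.card = n →
    (∀ v ∈ T, ¬ Relation.TransGen (fun a b => arr a b ∧ a ∈ T ∧ b ∈ T) v v) →
    (∀ t ∈ T, e t * e t = e t) →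
    (∀ s ∈ T, ∀ t ∈ T, ¬ arr t s → e t * e s * e t = e s * e t) →
    (∀ U : Submodule k S, (∀ t ∈ T, ∀ u ∈ U, e t u ∈ U) → U = ⊥ ∨ U = ⊤) →
    ∃ v : S, v ≠ 0 ∧ ∀ t ∈ T, e t v = v ∨ e t v = 0 := by
  intro n
  induction n using Nat.strong_induction_on with
  | _ n ih =>
    intro T hcard hacy hidem habs hsimple
    rcases T.eq_empty_or_nonempty with rfl | hne
    · obtain ⟨v, hv⟩ := hS
      exact ⟨v, hv, by simp⟩
    obtain ⟨t, htT, hsink⟩ := exists_sink_aux arr T hne hacy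
    have habs' : ∀ s ∈ T, e t * e s * e t = e s * e t := fun s hs =>
      habs s hs t htT (hsink s hs)
    have hW : ∀ s ∈ T, ∀ u ∈ LinearMap.range (e t), e s u ∈ LinearMap.range (e t) := by
      rintro s hs u ⟨w, rfl⟩
      refine ⟨e s (e t w), ?_⟩
      have h4 := DFunLike.congr_fun (habs' s hs) w
      simpa [Module.End.mul_apply] using h4
    have hcard' : (T.erase t).card < n := hcard ▸ Finset.card_erase_lt_of_mem htT
    have hacy' : ∀ v ∈ T.erase t,
        ¬ Relation.TransGen (fun a b => arr a b ∧ a ∈ T.erase t ∧ b ∈ T.erase t) v v := by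
      intro v hv hcyc
      exact hacy v (Finset.mem_of_mem_erase hv)
        (Relation.TransGen.mono (fun a b hab => ⟨hab.1, Finset.mem_of_mem_erase hab.2.1,
          Finset.mem_of_mem_erase hab.2.2⟩) _ _ hcyc)
    have hidem' : ∀ s ∈ T.erase t, e s * e s = e s := fun s hs =>
      hidem s (Finset.mem_of_mem_erase hs)
    have habs'' : ∀ s ∈ T.erase t, ∀ r ∈ T.erase t, ¬ arr r s → e r * e s * e r = e s * e r :=
      fun s hs r hr => habs s (Finset.mem_of_mem_erase hs) r (Finset.mem_of_mem_erase hr)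
    rcases hsimple (LinearMap.range (e t)) hW with hbot | htop
    · have hE0 : e t = 0 := LinearMap.range_eq_bot.mp hbot
      have hsimple' : ∀ U : Submodule k S,
          (∀ s ∈ T.erase t, ∀ u ∈ U, e s u ∈ U) → U = ⊥ ∨ U = ⊤ := by
        intro U hU
        refine hsimple U ?_
        intro s hs u hu
        by_cases hst : s = t
        · subst hst; rw [hE0]; simpa using U.zero_mem
        · exact hU s (Finset.mem_erase.mpr ⟨hst, hs⟩) u hu
      obtain ⟨v, hv0, hv⟩ := ih _ hcard' (T.erase t) rfl hacy' hidem' habs'' hsimple'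
      refine ⟨v, hv0, fun s hs => ?_⟩
      by_cases hst : s = t
      · subst hst; right; rw [hE0]; simp
      · exact hv s (Finset.mem_erase.mpr ⟨hst, hs⟩)
    · have hE1 : e t = 1 := by
        have hsurj : Function.Surjective (e t) := LinearMap.range_eq_top.mp htop
        ext u
        obtain ⟨w, rfl⟩ := hsurj u
        have h5 := DFunLike.congr_fun (hidem t htT) w
        simpa [Module.End.mul_apply] using h5
      have hsimple' : ∀ U : Submodule k S,
          (∀ s ∈ T.erase t, ∀ u ∈ U, e s u ∈ U) → U = ⊥ ∨ U = ⊤ := by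
        intro U hU
        refine hsimple U ?_
        intro s hs u hu
        by_cases hst : s = t
        · subst hst; rw [hE1]; simpa using hu
        · exact hU s (Finset.mem_erase.mpr ⟨hst, hs⟩) u hu
      obtain ⟨v, hv0, hv⟩ := ih _ hcard' (T.erase t) rfl hacy' hidem' habs'' hsimple'
      refine ⟨v, hv0, fun s hs => ?_⟩
      by_cases hst : s = t
      · subst hst; left; rw [hE1]; simp
      · exact hv s (Finset.mem_erase.mpr ⟨hst, hs⟩)

/-- For a field `k` and a finite acyclic quiver `Q`, the
one-dimensional modules `E_M`, for `M` ranging over the subsets of the vertex set,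
form a complete and irredundant list of the simple modules of
`B = MonoidAlgebra k (HK Q)`: they are pairwise non-isomorphic, every simple
`B`-module is isomorphic to some `E_M`, and each `E_M` is one-dimensional over `k`
(so `B` is basic with exactly `2^{|V|}` isomorphism classes of simple modules). -/
theorem hk_simple_modules (k V : Type) [Field k] [Fintype V] [DecidableEq V]
    (arr : V → V → Prop) (hQ : IsAcyclicQuiver arr) :
    (∀ M N : Finset V, M ≠ N →
       IsEmpty (Emod k arr M ≃ₗ[MonoidAlgebra k (HK arr)] Emod k arr N)) ∧
    (∀ (S : Type) [AddCommGroup S] [Module (MonoidAlgebra k (HK arr)) S],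
       IsSimpleModule (MonoidAlgebra k (HK arr)) S →
       ∃ M : Finset V, Nonempty (S ≃ₗ[MonoidAlgebra k (HK arr)] Emod k arr M)) ∧
    (∀ M : Finset V, Module.finrank k (Emod k arr M) = 1) := by
  classical
  have hdelta : ∀ (P : Finset V) (t : V),
      deltaHom k arr P (MonoidAlgebra.of k (HK arr) (HK.x arr t)) = if t ∈ P then 1 else 0 := by
    intro P t
    show MonoidAlgebra.lift k k (HK arr) (charHom k arr P)
      (MonoidAlgebra.of k (HK arr) (HK.x arr t)) = _
    rw [MonoidAlgebra.lift_of]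
    show Con.lift _ (charWord k P) _ ((HKCon arr).mk' (FreeMonoid.of t)) = _
    erw [Con.lift_mk']
    rfl
  have hsm : ∀ (P : Finset V) (b : MonoidAlgebra k (HK arr)) (c : Emod k arr P),
      b • c = (deltaHom k arr P b) • c := fun _ _ _ => rfl
  refine ⟨?_, ?_, ?_⟩
  · -- pairwise non-isomorphic
    intro M N hMN
    constructor
    intro φ
    obtain ⟨t, ht⟩ : ∃ t, ¬ (t ∈ M ↔ t ∈ N) := by
      by_contra hc
      push_neg at hc
      exact hMN (Finset.ext fun a => hc a)
    set b := MonoidAlgebra.of k (HK arr) (HK.x arr t) with hb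
    have hmap := φ.map_smul b (show k from 1)
    erw [hsm M, hsm N, hdelta M t, hdelta N t] at hmap
    have h1 : φ (show k from 1) = 0 := by
      by_cases hM : t ∈ M <;> by_cases hN : t ∈ N
      · exact absurd (Iff.intro (fun _ => hN) (fun _ => hM)) ht
      · erw [if_pos hM, if_neg hN, one_smul, zero_smul] at hmap
        exact hmap
      · erw [if_neg hM, if_pos hN, zero_smul, one_smul, map_zero] at hmap
        exact hmap.symm
      · exact absurd (Iff.intro (fun h => absurd h hM) (fun h => absurd h hN)) ht
    have h2 : (show k from 1) = (0 : Emod k arr M) := φ.injective (by rw [h1, map_zero])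
    exact (one_ne_zero : (1 : k) ≠ 0) h2
  · -- completeness
    intro S _ _ hsimp
    haveI := hsimp
    letI : Module k S := Module.compHom S (algebraMap k (MonoidAlgebra k (HK arr)))
    have hks : ∀ (c : k) (u : S),
        c • u = (algebraMap k (MonoidAlgebra k (HK arr)) c) • u := fun _ _ => rfl
    have hcomm : ∀ (c : k) (b : MonoidAlgebra k (HK arr)) (u : S),
        b • (c • u) = c • (b • u) := by
      intro c b u
      rw [hks, hks, ← mul_smul, ← mul_smul, Algebra.commutes]
    let act : HK arr →* Module.End k S :=
      { toFun := fun m =>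
          { toFun := fun u => (MonoidAlgebra.of k (HK arr) m) • u
            map_add' := fun u w => smul_add _ u w
            map_smul' := fun c u => by simpa using hcomm c (MonoidAlgebra.of k (HK arr) m) u }
        map_one' := by
          ext u
          show (MonoidAlgebra.of k (HK arr) 1) • u = u
          rw [map_one, one_smul]
        map_mul' := by
          intro m m'
          ext u
          show (MonoidAlgebra.of k (HK arr) (m * m')) • u = _
          rw [map_mul, mul_smul]
          rfl }
    let e : V → Module.End k S := fun t => act ((HKCon arr).mk' (FreeMonoid.of t))
    have hmk : ∀ a b : FreeMonoid V, HKRel arr a b →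
        (HKCon arr).mk' a = (HKCon arr).mk' b :=
      fun a b h => (Con.eq _).mpr (ConGen.Rel.of a b h)
    have hact2 : ∀ a b : V,
        act ((HKCon arr).mk' (FreeMonoid.of a * FreeMonoid.of b)) = e a * e b := by
      intro a b; rw [map_mul, map_mul]
    have hact3 : ∀ a b c : V,
        act ((HKCon arr).mk' (FreeMonoid.of a * FreeMonoid.of b * FreeMonoid.of c))
          = e a * e b * e c := by
      intro a b c; rw [map_mul, map_mul, map_mul, map_mul]
    have hidem : ∀ t : V, e t * e t = e t := by
      intro t
      rw [← hact2 t t, hmk _ _ (HKRel.idem t)]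
    have habs : ∀ s t : V, ¬ arr t s → e t * e s * e t = e s * e t := by
      intro s t h
      rw [← hact3 t s t, ← hact2 s t, hmk _ _ (HKRel.absorb s t h)]
    -- closure under the full algebra
    have hmon : ∀ (U : Submodule k S), (∀ t : V, ∀ u ∈ U, e t u ∈ U) →
        ∀ (m : HK arr), ∀ u ∈ U, (MonoidAlgebra.of k (HK arr) m) • u ∈ U := by
      intro U hU m
      induction m using Con.induction_on with
      | _ w =>
        induction w using FreeMonoid.inductionOn with
        | one =>
          intro u hu
          have : ((1 : FreeMonoid V) : (HKCon arr).Quotient) = 1 := rfl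
          rw [this, map_one, one_smul]
          exact hu
        | of x =>
          intro u hu
          exact hU x u hu
        | mul a b ha hb =>
          intro u hu
          have : ((a * b : FreeMonoid V) : (HKCon arr).Quotient)
              = ((a : (HKCon arr).Quotient) * (b : (HKCon arr).Quotient)) := rfl
          rw [this, map_mul, mul_smul]
          exact ha _ (hb u hu)
    have hBclosed : ∀ (U : Submodule k S), (∀ t : V, ∀ u ∈ U, e t u ∈ U) →
        ∀ (b : MonoidAlgebra k (HK arr)), ∀ u ∈ U, b • u ∈ U := by
      intro U hU b
      induction b using MonoidAlgebra.induction_on with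
      | of m => exact hmon U hU m
      | add f g hf hg =>
        intro u hu
        rw [add_smul]
        exact U.add_mem (hf u hu) (hg u hu)
      | smul r f hf =>
        intro u hu
        rw [Algebra.smul_def, mul_smul, ← hks]
        exact U.smul_mem r (hf u hu)
    have hsimple : ∀ U : Submodule k S,
        (∀ t ∈ (Finset.univ : Finset V), ∀ u ∈ U, e t u ∈ U) → U = ⊥ ∨ U = ⊤ := by
      intro U hU
      let U' : Submodule (MonoidAlgebra k (HK arr)) S :=
        { carrier := U
          add_mem' := fun h1 h2 => U.add_mem h1 h2
          zero_mem' := U.zero_mem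
          smul_mem' := fun b u hu =>
            hBclosed U (fun t u hu => hU t (Finset.mem_univ t) u hu) b u hu }
      rcases eq_bot_or_eq_top U' with h | h
      · left
        rw [Submodule.eq_bot_iff] at h ⊢
        exact fun x hx => h x hx
      · right
        rw [Submodule.eq_top_iff'] at h ⊢
        exact fun x => h x
    have hacy : ∀ v ∈ (Finset.univ : Finset V),
        ¬ Relation.TransGen
          (fun a b => arr a b ∧ a ∈ (Finset.univ : Finset V) ∧ b ∈ (Finset.univ : Finset V))
          v v :=
      fun v _ h => hQ v (Relation.TransGen.mono (fun a b hab => hab.1) _ _ h)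
    have hnt : Nontrivial S := IsSimpleModule.nontrivial (MonoidAlgebra k (HK arr)) S
    obtain ⟨v, hv0, hv⟩ := hk_key k arr S (exists_ne 0) e (Finset.univ.card)
      Finset.univ rfl hacy (fun t _ => hidem t)
      (fun s _ t _ h => habs s t h) hsimple
    set M : Finset V := Finset.univ.filter (fun t => e t v = v) with hM
    have hgenv : ∀ t : V, e t v = (if t ∈ M then (1 : k) else 0) • v := by
      intro t
      by_cases htM : t ∈ M
      · rw [if_pos htM, one_smul]
        exact (Finset.mem_filter.mp htM).2
      · rw [if_neg htM, zero_smul]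
        rcases hv t (Finset.mem_univ t) with h | h
        · exact absurd (Finset.mem_filter.mpr ⟨Finset.mem_univ t, h⟩) htM
        · exact h
    have hcharW : ∀ w : FreeMonoid V,
        (MonoidAlgebra.of k (HK arr) (w : (HKCon arr).Quotient)) • v
          = (charWord k M w) • v := by
      intro w
      induction w using FreeMonoid.inductionOn with
      | one =>
        have h1 : ((1 : FreeMonoid V) : (HKCon arr).Quotient) = 1 := rfl
        rw [h1, map_one, map_one, one_smul, one_smul]
      | of x =>
        have h1 : (MonoidAlgebra.of k (HK arr) ((FreeMonoid.of x : FreeMonoid V) :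
            (HKCon arr).Quotient)) • v = e x v := rfl
        rw [h1, hgenv x]
        congr 1
      | mul a b ha hb =>
        have h1 : ((a * b : FreeMonoid V) : (HKCon arr).Quotient)
            = ((a : (HKCon arr).Quotient) * (b : (HKCon arr).Quotient)) := rfl
        rw [h1, map_mul, mul_smul, hb, hcomm, ha, smul_smul, map_mul, mul_comm]
    have hdelta_of : ∀ m : HK arr,
        deltaHom k arr M (MonoidAlgebra.of k (HK arr) m) = charHom k arr M m := by
      intro m
      show MonoidAlgebra.lift k k (HK arr) (charHom k arr M) (MonoidAlgebra.of k (HK arr) m) = _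
      rw [MonoidAlgebra.lift_of]
    have hchar : ∀ b : MonoidAlgebra k (HK arr),
        b • v = (deltaHom k arr M b) • v := by
      intro b
      induction b using MonoidAlgebra.induction_on with
      | of m =>
        induction m using Con.induction_on with
        | _ w =>
          rw [hdelta_of, hcharW w]
          congr 1
      | add f g hf hg =>
        rw [add_smul, hf, hg, map_add, add_smul]
      | smul r f hf =>
        rw [map_smul, smul_eq_mul, mul_smul, Algebra.smul_def, mul_smul, ← hks, hf]
    let φ : Emod k arr M →ₗ[MonoidAlgebra k (HK arr)] S :=
      { toFun := fun c => (show k from c) • v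
        map_add' := fun c d => add_smul (show k from c) (show k from d) v
        map_smul' := by
          intro b c
          show (show k from b • c) • v = b • ((show k from c) • v)
          have h1 : (show k from b • c) = deltaHom k arr M b * (show k from c) := rfl
          rw [h1, mul_smul, hcomm, hchar b, smul_smul, smul_smul, mul_comm] }
    have hinj : Function.Injective φ := by
      intro c d h
      by_contra hne
      have hne' : (show k from c) - (show k from d) ≠ 0 :=
        sub_ne_zero.mpr (fun hcd => hne hcd)
      have h0 : ((show k from c) - (show k from d)) • v = 0 := by
        rw [sub_smul, sub_eq_zero]
        exact h
      have hveq : v = 0 := by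
        have h6 := congrArg (fun u => ((show k from c) - (show k from d))⁻¹ • u) h0
        simpa [smul_smul, inv_mul_cancel₀ hne'] using h6
      exact hv0 hveq
    have hrange : LinearMap.range φ = ⊤ := by
      rcases eq_bot_or_eq_top (LinearMap.range φ) with h | h
      · exfalso
        have hvmem : v ∈ LinearMap.range φ := ⟨show k from 1, one_smul k v⟩
        rw [h] at hvmem
        exact hv0 ((Submodule.mem_bot _).mp hvmem)
      · exact h
    exact ⟨M, ⟨(LinearEquiv.ofBijective φ ⟨hinj, LinearMap.range_eq_top.mp hrange⟩).symm⟩⟩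
  · intro M
    exact Module.finrank_self k
end

section
/- For the linearly oriented type-A quiver Q_n (n ≥ 1), the graph Γ(Q_n) on the subsets of {1,…,n} has exactly n+1 connected components; more precisely, two subsets lie in the same connected component of Γ(Q_n) if and only if they have the same cardinality. -/
set_option linter.unusedVariables false

/-- The arrow relation of the linearly oriented type-`A` quiver `Q_n` with vertices
`1, …, n` (modelled as `Fin n`) and arrows `i → i+1`. -/
def arrQn (n : ℕ) : Fin n → Fin n → Prop := fun i j => (i : ℕ) + 1 = (j : ℕ)

/-- `P ⇉ R`: the subset `P` is strongly connected towards the subset `R`: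
both are nonempty and there is an arrow `p → r` for every `p ∈ P` and `r ∈ R`. -/
def StronglyConnectedTowards {V : Type} (arr : V → V → Prop) (P R : Finset V) : Prop :=
  P.Nonempty ∧ R.Nonempty ∧ ∀ p ∈ P, ∀ r ∈ R, arr p r

/-- The graph `Γ(Q)` on the finite subsets of the vertex set of `Q`: two subsets
`M ≠ N` are adjacent iff `(M \ N) ⇉ (N \ M)` or `(N \ M) ⇉ (M \ N)`. -/
def GammaGraph {V : Type} [DecidableEq V] (arr : V → V → Prop) :
    SimpleGraph (Finset V) where
  Adj M N := M ≠ N ∧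
    (StronglyConnectedTowards arr (M \ N) (N \ M) ∨
     StronglyConnectedTowards arr (N \ M) (M \ N))
  symm := ⟨fun M N h => ⟨h.1.symm, h.2.symm⟩⟩
  loopless := ⟨fun M h => h.1 rfl⟩

namespace GammaAux

variable {n : ℕ}

/-- The "initial segment" base set `{0, …, k-1}` inside `Fin n`. -/
def base (n k : ℕ) : Finset (Fin n) := Finset.univ.filter (fun i => (i : ℕ) < k)

lemma mem_base {k : ℕ} {i : Fin n} : i ∈ base n k ↔ (i : ℕ) < k := by
  simp [base]

lemma card_base (k : ℕ) (hk : k ≤ n) : (base n k).card = k := by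
  apply Finset.card_eq_of_bijective (fun j hj => ⟨j, lt_of_lt_of_le hj hk⟩)
  · intro a ha
    exact ⟨(a : ℕ), mem_base.mp ha, Fin.ext rfl⟩
  · intro j hj
    exact mem_base.mpr hj
  · intro i j hi hj h
    exact congrArg Fin.val h

lemma card_filter_le_aux (k : ℕ) (M : Finset (Fin n)) (h : ∀ i ∈ M, (i : ℕ) < k) :
    M.card ≤ k := by
  calc M.card = (M.image Fin.val).card := by
        rw [Finset.card_image_of_injective _ Fin.val_injective]
    _ ≤ (Finset.range k).card := by
        apply Finset.card_le_card
        intro x hx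
        obtain ⟨i, hi, rfl⟩ := Finset.mem_image.mp hx
        exact Finset.mem_range.mpr (h i hi)
    _ = k := Finset.card_range k

/-- If `P ⇉ R` in `Q_n` then `P` and `R` are singletons `{p}`, `{p+1}`. -/
lemma sct_singleton {P R : Finset (Fin n)}
    (h : StronglyConnectedTowards (arrQn n) P R) :
    ∃ p r, P = {p} ∧ R = {r} ∧ (p : ℕ) + 1 = (r : ℕ) := by
  obtain ⟨⟨p, hp⟩, ⟨r, hr⟩, hall⟩ := h
  refine ⟨p, r, ?_, ?_, hall p hp r hr⟩
  · ext x
    simp only [Finset.mem_singleton]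
    constructor
    · intro hx
      have h1 : (x : ℕ) + 1 = (r : ℕ) := hall x hx r hr
      have h2 : (p : ℕ) + 1 = (r : ℕ) := hall p hp r hr
      exact Fin.ext (by omega)
    · rintro rfl; exact hp
  · ext x
    simp only [Finset.mem_singleton]
    constructor
    · intro hx
      have h1 : (p : ℕ) + 1 = (x : ℕ) := hall p hp x hx
      have h2 : (p : ℕ) + 1 = (r : ℕ) := hall p hp r hr
      exact Fin.ext (by omega)
    · rintro rfl; exact hr

lemma adj_card {M N : Finset (Fin n)} (h : (GammaGraph (arrQn n)).Adj M N) :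
    M.card = N.card := by
  have key : (M \ N).card = (N \ M).card := by
    rcases h.2 with h' | h' <;>
    · obtain ⟨p, r, hP, hR, _⟩ := sct_singleton h'
      simp [hP, hR]
  calc M.card = (M \ N).card + (M ∩ N).card := (Finset.card_sdiff_add_card_inter M N).symm
    _ = (N \ M).card + (N ∩ M).card := by rw [key, Finset.inter_comm]
    _ = N.card := Finset.card_sdiff_add_card_inter N M

lemma reach_card {M N : Finset (Fin n)}
    (h : (GammaGraph (arrQn n)).Reachable M N) : M.card = N.card := by
  obtain ⟨w⟩ := h
  induction w with
  | nil => rfl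
  | cons h p ih => exact (adj_card h).trans ih

/-- If every element of `M` is `0` or has its predecessor in `M`, then `M` is the
initial segment of size `M.card`. -/
lemma eq_base_of_closed {M : Finset (Fin n)}
    (h : ∀ m ∈ M, (m : ℕ) = 0 ∨ ∃ m' ∈ M, (m' : ℕ) + 1 = (m : ℕ)) :
    M = base n M.card := by
  -- downward closedness
  have down : ∀ k : ℕ, ∀ i ∈ M, ∀ j : Fin n, (j : ℕ) ≤ (i : ℕ) → (i : ℕ) ≤ k → j ∈ M := by
    intro k
    induction k with
    | zero =>
      intro i hi j hji hik
      have : j = i := Fin.ext (by omega)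
      rwa [this]
    | succ k ih =>
      intro i hi j hji hik
      by_cases hji' : (j : ℕ) = (i : ℕ)
      · rwa [show j = i from Fin.ext hji']
      · rcases h i hi with h0 | ⟨m', hm', hm''⟩
        · omega
        · exact ih m' hm' j (by omega) (by omega)
  ext i
  rw [mem_base]
  constructor
  · intro hi
    -- all of {j | j ≤ i} is in M, so card M ≥ i+1
    have hsub : (Finset.univ.filter (fun j : Fin n => (j : ℕ) < (i : ℕ) + 1)) ⊆ M := by
      intro j hj
      simp only [Finset.mem_filter, Finset.mem_univ, true_and] at hj
      exact down (i : ℕ) i hi j (by omega) le_rfl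
    have hcard : (Finset.univ.filter (fun j : Fin n => (j : ℕ) < (i : ℕ) + 1)).card
        = (i : ℕ) + 1 := card_base ((i : ℕ) + 1) i.isLt
    have := Finset.card_le_card hsub
    omega
  · intro hi
    by_contra hi'
    -- then M ⊆ {j | j < i}, so card M ≤ i, contradiction
    have hsub : ∀ x ∈ M, (x : ℕ) < (i : ℕ) := by
      intro x hx
      by_contra hxi
      exact hi' (down (x : ℕ) x hx i (by omega) le_rfl)
    have := card_filter_le_aux (i : ℕ) M hsub
    omega

/-- The elementary move: replace `m ∈ M` by its predecessor `m'`, giving an adjacent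
set of the same cardinality and smaller weight. -/
lemma step {M : Finset (Fin n)} {m : Fin n} (hm : m ∈ M) (hpos : 0 < (m : ℕ))
    (m' : Fin n) (hm' : (m' : ℕ) + 1 = (m : ℕ)) (hnm : m' ∉ M) :
    (GammaGraph (arrQn n)).Adj M (insert m' (M.erase m)) ∧
    (insert m' (M.erase m)).card = M.card ∧
    (∑ x ∈ insert m' (M.erase m), (x : ℕ)) + 1 = ∑ x ∈ M, (x : ℕ) := by
  set N := insert m' (M.erase m) with hN
  have hmm' : m' ≠ m := fun h => by rw [h] at hm'; omega
  have hm'notE : m' ∉ M.erase m := fun h => hnm (Finset.mem_of_mem_erase h)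
  have hMN : M \ N = {m} := by
    ext x
    simp only [hN, Finset.mem_sdiff, Finset.mem_insert, Finset.mem_erase,
      Finset.mem_singleton]
    constructor
    · rintro ⟨hxM, hx⟩
      push_neg at hx
      by_contra hxm
      exact (hx.2 hxm) hxM
    · rintro rfl
      exact ⟨hm, by push_neg; exact ⟨hmm'.symm, fun h => absurd rfl h⟩⟩
  have hNM : N \ M = {m'} := by
    ext x
    simp only [hN, Finset.mem_sdiff, Finset.mem_insert, Finset.mem_erase,
      Finset.mem_singleton]
    constructor
    · rintro ⟨hx, hxM⟩
      rcases hx with rfl | ⟨_, hxM'⟩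
      · rfl
      · exact absurd hxM' hxM
    · rintro rfl
      exact ⟨Or.inl rfl, hnm⟩
  refine ⟨⟨?_, Or.inr ?_⟩, ?_, ?_⟩
  · intro h
    have : m' ∈ M := by rw [h, hN]; exact Finset.mem_insert_self _ _
    exact hnm this
  · refine ⟨?_, ?_, ?_⟩
    · rw [hNM]; exact ⟨m', Finset.mem_singleton_self m'⟩
    · rw [hMN]; exact ⟨m, Finset.mem_singleton_self m⟩
    · intro p hp r hr
      rw [hNM, Finset.mem_singleton] at hp
      rw [hMN, Finset.mem_singleton] at hr
      subst hp; subst hr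
      exact hm'
  · rw [hN, Finset.card_insert_of_notMem hm'notE, Finset.card_erase_of_mem hm]
    have : 1 ≤ M.card := Finset.card_pos.mpr ⟨m, hm⟩
    omega
  · have h1 : (∑ x ∈ N, (x : ℕ)) = (m' : ℕ) + ∑ x ∈ M.erase m, (x : ℕ) := by
      rw [hN, Finset.sum_insert hm'notE]
    have h2 : (m : ℕ) + ∑ x ∈ M.erase m, (x : ℕ) = ∑ x ∈ M, (x : ℕ) :=
      Finset.add_sum_erase M (fun x => (x : ℕ)) hm
    omega

lemma reach_base (s : ℕ) :
    ∀ M : Finset (Fin n), (∑ x ∈ M, (x : ℕ)) = s →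
      (GammaGraph (arrQn n)).Reachable M (base n M.card) := by
  induction s using Nat.strong_induction_on with
  | _ s ih =>
    intro M hs
    by_cases hbad : ∀ m ∈ M, (m : ℕ) = 0 ∨ ∃ m' ∈ M, (m' : ℕ) + 1 = (m : ℕ)
    · rw [← eq_base_of_closed hbad]
    · push_neg at hbad
      obtain ⟨m, hm, hm0, hmpred⟩ := hbad
      have hpos : 0 < (m : ℕ) := Nat.pos_of_ne_zero hm0
      set m' : Fin n := ⟨(m : ℕ) - 1, lt_trans (by omega) m.isLt⟩ with hm'def
      have hm'val : (m' : ℕ) + 1 = (m : ℕ) := by simp [hm'def]; omega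
      have hnm : m' ∉ M := fun h => hmpred m' h hm'val
      obtain ⟨hadj, hcard, hsum⟩ := step hm hpos m' hm'val hnm
      have hlt : (∑ x ∈ insert m' (M.erase m), (x : ℕ)) < s := by omega
      have hreach := ih _ hlt (insert m' (M.erase m)) rfl
      rw [hcard] at hreach
      exact (hadj.reachable).trans hreach

lemma reach_iff (M N : Finset (Fin n)) :
    (GammaGraph (arrQn n)).Reachable M N ↔ M.card = N.card := by
  constructor
  · exact reach_card
  · intro h
    have h1 := reach_base (∑ x ∈ M, (x : ℕ)) M rfl
    have h2 := reach_base (∑ x ∈ N, (x : ℕ)) N rfl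
    rw [h] at h1
    exact h1.trans h2.symm

lemma card_le (M : Finset (Fin n)) : M.card ≤ n := by
  calc M.card ≤ (Finset.univ : Finset (Fin n)).card := Finset.card_le_univ M
    _ = n := by simp

/-- The connected components are in bijection with `Fin (n+1)` via cardinality. -/
noncomputable def compEquiv (n : ℕ) :
    (GammaGraph (arrQn n)).ConnectedComponent ≃ Fin (n + 1) where
  toFun := SimpleGraph.ConnectedComponent.lift
    (fun M => (⟨M.card, Nat.lt_succ_of_le (card_le M)⟩ : Fin (n + 1)))
    (fun M N p _ => Fin.ext (reach_card p.reachable))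
  invFun k := (GammaGraph (arrQn n)).connectedComponentMk (base n k.val)
  left_inv := by
    apply SimpleGraph.ConnectedComponent.ind
    intro M
    simp only [SimpleGraph.ConnectedComponent.lift_mk]
    exact (SimpleGraph.ConnectedComponent.sound
      ((reach_base (∑ x ∈ M, (x : ℕ)) M rfl).symm))
  right_inv := by
    intro k
    simp only [SimpleGraph.ConnectedComponent.lift_mk]
    exact Fin.ext (card_base k.val (Nat.lt_succ_iff.mp k.isLt))

end GammaAux

/-- For the linearly oriented type-`A` quiver `Q_n` (`n ≥ 1`), two
subsets of `{1,…,n}` lie in the same connected component of `Γ(Q_n)` iff they have the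
same cardinality; in particular `Γ(Q_n)` has exactly `n + 1` connected components. -/
theorem gamma_Qn_components (n : ℕ) (hn : 1 ≤ n) :
    (∀ M N : Finset (Fin n),
      (GammaGraph (arrQn n)).Reachable M N ↔ M.card = N.card) ∧
    Nat.card (GammaGraph (arrQn n)).ConnectedComponent = n + 1 := by
  refine ⟨GammaAux.reach_iff, ?_⟩
  rw [Nat.card_congr (GammaAux.compEquiv n)]
  simp
end

section
/- Let Q be a finite acyclic quiver with at least one vertex whose underlying undirected graph is connected (i.e. the symmetric closure of arr generates a connected graph on V), and suppose Q is not isomorphic to the linearly oriented type-A quiver on |V| vertices (there is no bijection σ : V → {1,…,|V|} with arr s t ↔ σ(t) = σ(s)+1). Then the graph Γ(Q) on the subsets of V has exactly 3 connected components, namely {∅}, {V}, and the set of all subsets M with ∅ ≠ M ≠ V. -/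
set_option linter.unusedVariables false

section Aux

variable {V : Type} [Fintype V] [DecidableEq V] {arr : V → V → Prop}

lemma adj_swap {x y : V} (hxy : arr x y ∨ arr y x) {M : Finset V}
    (hx : x ∈ M) (hy : y ∉ M) :
    (GammaGraph arr).Adj M (insert y (M.erase x)) := by
  have hne : x ≠ y := fun h => hy (h ▸ hx)
  have h1 : M \ (insert y (M.erase x)) = {x} := by
    ext z
    simp only [Finset.mem_sdiff, Finset.mem_insert, Finset.mem_erase, Finset.mem_singleton]
    constructor
    · rintro ⟨hz, h⟩
      by_contra hzx
      exact h (Or.inr ⟨hzx, hz⟩)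
    · rintro rfl
      exact ⟨hx, by rintro (rfl | ⟨h, -⟩) <;> [exact hy hx; exact h rfl]⟩
  have h2 : (insert y (M.erase x)) \ M = {y} := by
    ext z
    simp only [Finset.mem_sdiff, Finset.mem_insert, Finset.mem_erase, Finset.mem_singleton]
    constructor
    · rintro ⟨rfl | ⟨-, hz⟩, h⟩; · rfl
      exact absurd hz h
    · rintro rfl; exact ⟨Or.inl rfl, hy⟩
  have hMne : M ≠ insert y (M.erase x) := by
    intro h
    have : y ∈ M := h ▸ Finset.mem_insert_self y _
    exact hy this
  refine ⟨hMne, ?_⟩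
  rw [h1, h2]
  rcases hxy with h | h
  · exact Or.inl ⟨⟨x, Finset.mem_singleton_self x⟩, ⟨y, Finset.mem_singleton_self y⟩, by
      simp only [Finset.mem_singleton]; rintro p rfl r rfl; exact h⟩
  · exact Or.inr ⟨⟨y, Finset.mem_singleton_self y⟩, ⟨x, Finset.mem_singleton_self x⟩, by
      simp only [Finset.mem_singleton]; rintro p rfl r rfl; exact h⟩

lemma reach_slide (hconn : ∀ a b : V, Relation.ReflTransGen (fun x y => arr x y ∨ arr y x) a b) :
    ∀ {x y : V} (M : Finset V), x ∈ M → y ∉ M →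
      (GammaGraph arr).Reachable M (insert y (M.erase x)) := by
  intro x y
  have h := hconn x y
  induction h using Relation.ReflTransGen.head_induction_on with
  | refl => intro M hx hy; exact absurd hx hy
  | head hrel hrest ih =>
    rename_i a c
    intro M ha hb
    by_cases hca : c = a
    · subst hca; exact ih M ha hb
    by_cases hcM : c ∈ M
    · -- first move c out to y, then slide a to c's old place
      have r1 := ih M hcM hb
      set M₁ := insert y (M.erase c) with hM₁
      have hcb : c ≠ y := fun h => hb (h ▸ hcM)
      have hab : a ≠ y := fun h => hb (h ▸ ha)
      have ha1 : a ∈ M₁ := Finset.mem_insert_of_mem (Finset.mem_erase.mpr ⟨fun h => hca h.symm, ha⟩)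
      have hc1 : c ∉ M₁ := by
        simp only [hM₁, Finset.mem_insert, Finset.mem_erase]
        rintro (h | ⟨h, -⟩) <;> [exact hcb h; exact h rfl]
      have adj := adj_swap hrel ha1 hc1
      have heq : insert c (M₁.erase a) = insert y (M.erase a) := by
        ext z
        simp only [hM₁, Finset.mem_insert, Finset.mem_erase]
        constructor
        · rintro (rfl | ⟨hz1, rfl | ⟨hz2, hz3⟩⟩)
          · exact Or.inr ⟨hca, hcM⟩
          · exact Or.inl rfl
          · exact Or.inr ⟨hz1, hz3⟩
        · rintro (rfl | ⟨hz1, hz2⟩)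
          · exact Or.inr ⟨Ne.symm hab, Or.inl rfl⟩
          · by_cases hzc : z = c
            · exact Or.inl hzc
            · exact Or.inr ⟨hz1, Or.inr ⟨hzc, hz2⟩⟩
      exact r1.trans (heq ▸ adj.reachable)
    · -- slide a to c, then c to y
      by_cases hcy : c = y
      · subst hcy; exact (adj_swap hrel ha hb).reachable
      have adj := adj_swap hrel ha hcM
      set M' := insert c (M.erase a) with hM'
      have hc' : c ∈ M' := Finset.mem_insert_self c _
      have hb' : y ∉ M' := by
        simp only [hM', Finset.mem_insert, Finset.mem_erase]
        rintro (h | ⟨-, h⟩) <;> [exact hcy h.symm; exact hb h]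
      have r2 := ih M' hc' hb'
      have heq : insert y (M'.erase c) = insert y (M.erase a) := by
        rw [hM', Finset.erase_insert]
        simp only [Finset.mem_erase]
        rintro ⟨-, h⟩; exact hcM h
      exact adj.reachable.trans (heq ▸ r2)

lemma reach_singleton (hconn : ∀ a b : V, Relation.ReflTransGen (fun x y => arr x y ∨ arr y x) a b)
    (a b : V) : (GammaGraph arr).Reachable {a} {b} := by
  have h := hconn a b
  induction h using Relation.ReflTransGen.head_induction_on with
  | refl => exact SimpleGraph.Reachable.refl _
  | head hrel hrest ih =>
    rename_i p c
    by_cases hpc : p = c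
    · subst hpc; exact ih
    have hc : c ∉ ({p} : Finset V) := by simp [Ne.symm hpc]
    have adj := adj_swap hrel (Finset.mem_singleton_self p) hc
    have : insert c (({p} : Finset V).erase p) = {c} := by
      rw [Finset.erase_singleton]; rfl
    exact (this ▸ adj.reachable).trans ih

lemma reach_of_card_eq (hconn : ∀ a b : V, Relation.ReflTransGen (fun x y => arr x y ∨ arr y x) a b) :
    ∀ (M N : Finset V), M.card = N.card → (GammaGraph arr).Reachable M N := by
  suffices H : ∀ (k : ℕ) (M N : Finset V), (M \ N).card ≤ k → M.card = N.card →
      (GammaGraph arr).Reachable M N by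
    intro M N h; exact H (M \ N).card M N le_rfl h
  intro k
  induction k with
  | zero =>
    intro M N hd hc
    have : M \ N = ∅ := Finset.card_eq_zero.mp (Nat.le_zero.mp hd)
    have hsub : M ⊆ N := by
      intro z hz; by_contra hzN
      exact absurd (Finset.mem_sdiff.mpr ⟨hz, hzN⟩) (by simp [this])
    have : M = N := Finset.eq_of_subset_of_card_le hsub (le_of_eq hc.symm)
    exact this ▸ SimpleGraph.Reachable.refl _
  | succ k ih =>
    intro M N hd hc
    by_cases hMN : M \ N = ∅
    · have hsub : M ⊆ N := by
        intro z hz; by_contra hzN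
        exact absurd (Finset.mem_sdiff.mpr ⟨hz, hzN⟩) (by simp [hMN])
      have : M = N := Finset.eq_of_subset_of_card_le hsub (le_of_eq hc.symm)
      exact this ▸ SimpleGraph.Reachable.refl _
    · obtain ⟨x, hx⟩ := Finset.nonempty_iff_ne_empty.mpr hMN
      have hNM : (N \ M).Nonempty := by
        rw [← Finset.card_pos, ← Finset.card_sdiff_comm hc, Finset.card_pos]
        exact ⟨x, hx⟩
      obtain ⟨y, hy⟩ := hNM
      rw [Finset.mem_sdiff] at hx hy
      have r1 := reach_slide hconn M hx.1 hy.2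
      set M' := insert y (M.erase x) with hM'
      have hcard : M'.card = M.card := by
        rw [hM', Finset.card_insert_of_notMem (by
          simp only [Finset.mem_erase]; rintro ⟨-, h⟩; exact hy.2 h),
          Finset.card_erase_of_mem hx.1]
        have : 1 ≤ M.card := Finset.card_pos.mpr ⟨x, hx.1⟩
        omega
      have hdiff : M' \ N = (M \ N).erase x := by
        ext z
        simp only [hM', Finset.mem_sdiff, Finset.mem_insert, Finset.mem_erase]
        constructor
        · rintro ⟨rfl | ⟨hz1, hz2⟩, hz3⟩
          · exact absurd hy.1 hz3
          · exact ⟨hz1, hz2, hz3⟩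
        · rintro ⟨hz1, hz2, hz3⟩
          exact ⟨Or.inr ⟨hz1, hz2⟩, hz3⟩
      have hdc : (M' \ N).card ≤ k := by
        rw [hdiff, Finset.card_erase_of_mem (Finset.mem_sdiff.mpr hx)]
        omega
      exact r1.trans (ih M' N hdc (hcard.trans hc))

lemma isolated_reach {α : Type*} {G : SimpleGraph α} {a : α} (h : ∀ b, ¬ G.Adj a b) {c : α}
    (hr : G.Reachable a c) : a = c := by
  obtain ⟨w⟩ := hr
  cases w with
  | nil => rfl
  | cons h' p => exact absurd h' (h _)

lemma no_adj_empty (N : Finset V) : ¬ (GammaGraph arr).Adj ∅ N := by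
  rintro ⟨-, ⟨⟨z, hz⟩, -, -⟩ | ⟨-, ⟨z, hz⟩, -⟩⟩ <;> simp at hz

lemma no_adj_univ (N : Finset V) : ¬ (GammaGraph arr).Adj Finset.univ N := by
  rintro ⟨-, ⟨-, ⟨z, hz⟩, -⟩ | ⟨⟨z, hz⟩, -, -⟩⟩ <;> simp at hz

lemma exists_special [Nonempty V] (hQ : IsAcyclicQuiver arr)
    (hconn : ∀ a b : V, Relation.ReflTransGen (fun x y => arr x y ∨ arr y x) a b)
    (hnotlin : ¬ ∃ σ : V ≃ Fin (Fintype.card V),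
      ∀ s t : V, arr s t ↔ ((σ t : ℕ) = (σ s : ℕ) + 1)) :
    ∃ v a b : V, a ≠ b ∧ ((arr v a ∧ arr v b) ∨ (arr a v ∧ arr b v)) := by
  by_contra hcon
  push_neg at hcon
  apply hnotlin
  have hout : ∀ v a b : V, arr v a → arr v b → a = b := by
    intro v a b h1 h2
    by_contra hne
    exact (hcon v a b hne).1 h1 h2
  have hin : ∀ v a b : V, arr a v → arr b v → a = b := by
    intro v a b h1 h2
    by_contra hne
    exact (hcon v a b hne).2 h1 h2
  set r := Relation.TransGen arr with hr
  have htot : ∀ a b : V, r a b ∨ a = b ∨ r b a := by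
    intro a b
    have h := hconn a b
    induction h using Relation.ReflTransGen.head_induction_on with
    | refl => exact Or.inr (Or.inl rfl)
    | head hrel hrest ih =>
      rename_i p c
      rcases hrel with hpc | hcp
      · rcases ih with hcb | rfl | hbc
        · exact Or.inl ((Relation.TransGen.single hpc).trans hcb)
        · exact Or.inl (Relation.TransGen.single hpc)
        · obtain ⟨w, hw1, hw2⟩ := (Relation.TransGen.tail'_iff).mp hbc
          have : w = p := hin c w p hw2 hpc
          subst this
          rcases Relation.reflTransGen_iff_eq_or_transGen.mp hw1 with h | h
          · exact Or.inr (Or.inl h)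
          · exact Or.inr (Or.inr h)
      · rcases ih with hcb | rfl | hbc
        · obtain ⟨w, hw1, hw2⟩ := (Relation.TransGen.head'_iff).mp hcb
          have : w = p := hout c w p hw1 hcp
          subst this
          rcases Relation.reflTransGen_iff_eq_or_transGen.mp hw2 with h | h
          · exact Or.inr (Or.inl h.symm)
          · exact Or.inl h
        · exact Or.inr (Or.inr (Relation.TransGen.single hcp))
        · exact Or.inr (Or.inr (hbc.tail hcp))
  haveI : IsTrans V r := ⟨fun a b c h1 h2 => h1.trans h2⟩
  haveI : IsIrrefl V r := ⟨hQ⟩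
  haveI : IsTrichotomous V r := ⟨fun a b h1 h2 => ((htot a b).resolve_left h1).resolve_right h2⟩
  haveI : IsStrictTotalOrder V r := {}
  classical
  letI lo : LinearOrder V := linearOrderOfSTO r
  have hlt : ∀ a b : V, a < b ↔ r a b := fun a b => Iff.rfl
  have hcov : ∀ s t : V, arr s t ↔ s ⋖ t := by
    intro s t
    constructor
    · intro h
      refine ⟨(hlt s t).mpr (Relation.TransGen.single h), ?_⟩
      intro c h1 h2
      rw [hlt] at h1 h2
      obtain ⟨z, hz1, hz2⟩ := Relation.TransGen.head'_iff.mp h1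
      have hzt : z = t := hout s z t hz1 h
      exact hQ t (Relation.TransGen.trans_right (hzt ▸ hz2) h2)
    · intro h
      have h1 : r s t := (hlt s t).mp h.1
      obtain ⟨z, hz1, hz2⟩ := Relation.TransGen.head'_iff.mp h1
      rcases Relation.reflTransGen_iff_eq_or_transGen.mp hz2 with heq | htr
      · exact heq ▸ hz1
      · exact absurd ((hlt s z).mpr (Relation.TransGen.single hz1)) (h.2 · ((hlt z t).mpr htr))
  let e : Fin (Fintype.card V) ≃o V := Fintype.orderIsoFinOfCardEq V rfl
  refine ⟨e.symm.toEquiv, ?_⟩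
  intro s t
  rw [hcov s t]
  have : s ⋖ t ↔ e.symm s ⋖ e.symm t := by
    constructor
    · intro h
      rw [← apply_covBy_apply_iff e]
      simpa using h
    · intro h
      rw [← e.apply_symm_apply s, ← e.apply_symm_apply t]
      exact (apply_covBy_apply_iff e).mpr h
  rw [this, ← Fin.coe_covBy_iff, Nat.covBy_iff_add_one_eq]
  exact eq_comm

end Aux

/-- Let `Q` be a finite acyclic quiver with at least one vertex whose
underlying undirected graph is connected, and which is not isomorphic to the linearly
oriented type-`A` quiver on `|V|` vertices.  Then `Γ(Q)` has exactly `3` connected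
components, namely `{∅}`, `{V}` and the set of subsets `M` with `∅ ≠ M ≠ V`. -/
theorem gamma_three_components (V : Type) [Fintype V] [DecidableEq V] [Nonempty V]
    (arr : V → V → Prop) (hQ : IsAcyclicQuiver arr)
    (hconn : ∀ a b : V, Relation.ReflTransGen (fun x y => arr x y ∨ arr y x) a b)
    (hnotlin : ¬ ∃ σ : V ≃ Fin (Fintype.card V),
      ∀ s t : V, arr s t ↔ ((σ t : ℕ) = (σ s : ℕ) + 1)) :
    (∀ M N : Finset V, (GammaGraph arr).Reachable M N ↔
      ((M = ∅ ∧ N = ∅) ∨ (M = Finset.univ ∧ N = Finset.univ) ∨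
       (M ≠ ∅ ∧ M ≠ Finset.univ ∧ N ≠ ∅ ∧ N ≠ Finset.univ))) ∧
    Nat.card (GammaGraph arr).ConnectedComponent = 3 := by
  classical
  obtain ⟨v, a, b, hab, hvab⟩ := exists_special hQ hconn hnotlin
  have hva : v ≠ a := by
    rcases hvab with ⟨h1, -⟩ | ⟨h1, -⟩ <;>
      exact fun h => hQ v (Relation.TransGen.single (by rw [h] at h1 ⊢; exact h1))
  have hvb : v ≠ b := by
    rcases hvab with ⟨-, h1⟩ | ⟨-, h1⟩ <;>
      exact fun h => hQ v (Relation.TransGen.single (by rw [h] at h1 ⊢; exact h1))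
  have hcard3 : 3 ≤ Fintype.card V := by
    have : ({v, a, b} : Finset V).card = 3 := by
      rw [Finset.card_insert_of_notMem (by simp [hva, hvb]),
        Finset.card_insert_of_notMem (by simp [hab])]
      rfl
    calc 3 = ({v, a, b} : Finset V).card := this.symm
    _ ≤ Fintype.card V := Finset.card_le_univ _
  -- the size-changing move
  have hmove : ∀ (S : Finset V), v ∉ S → a ∉ S → b ∉ S →
      (GammaGraph arr).Adj (insert v S) (insert a (insert b S)) := by
    intro S hvS haS hbS
    have h1 : (insert v S) \ (insert a (insert b S)) = {v} := by
      ext z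
      simp only [Finset.mem_sdiff, Finset.mem_insert, Finset.mem_singleton, not_or]
      constructor
      · rintro ⟨rfl | hz, -, -, hz3⟩
        · rfl
        · exact absurd hz hz3
      · rintro rfl
        exact ⟨Or.inl rfl, hva, hvb, hvS⟩
    have h2 : (insert a (insert b S)) \ (insert v S) = {a, b} := by
      ext z
      simp only [Finset.mem_sdiff, Finset.mem_insert, Finset.mem_singleton, not_or]
      constructor
      · rintro ⟨rfl | rfl | hz, -, hz2⟩
        · exact Or.inl rfl
        · exact Or.inr rfl
        · exact absurd hz hz2
      · rintro (rfl | rfl)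
        · exact ⟨Or.inl rfl, Ne.symm hva, haS⟩
        · exact ⟨Or.inr (Or.inl rfl), Ne.symm hvb, hbS⟩
    have hne : insert v S ≠ insert a (insert b S) := by
      intro h
      have hv1 : v ∈ insert a (insert b S) := h ▸ Finset.mem_insert_self v S
      simp only [Finset.mem_insert] at hv1
      rcases hv1 with h' | h' | h' <;> [exact hva h'; exact hvb h'; exact hvS h']
    refine ⟨hne, ?_⟩
    rw [h1, h2]
    have hmemab : ∀ z, z ∈ ({a, b} : Finset V) ↔ z = a ∨ z = b := by
      intro z; simp
    rcases hvab with ⟨h1', h2'⟩ | ⟨h1', h2'⟩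
    · refine Or.inl ⟨⟨v, Finset.mem_singleton_self v⟩, ⟨a, by simp⟩, ?_⟩
      intro p hp r hr
      rw [Finset.mem_singleton] at hp
      rw [hmemab] at hr
      subst hp
      rcases hr with rfl | rfl <;> assumption
    · refine Or.inr ⟨⟨a, by simp⟩, ⟨v, Finset.mem_singleton_self v⟩, ?_⟩
      intro p hp r hr
      rw [Finset.mem_singleton] at hr
      rw [hmemab] at hp
      subst hr
      rcases hp with rfl | rfl <;> assumption
  -- every proper nonempty subset reaches {v}
  have key : ∀ (k : ℕ) (M : Finset V), M.card = k → M ≠ ∅ → M ≠ Finset.univ →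
      (GammaGraph arr).Reachable M {v} := by
    intro k
    induction k using Nat.strong_induction_on with
    | _ k ih =>
      intro M hk hne hnu
      match k, hk with
      | 0, hk => exact absurd (Finset.card_eq_zero.mp hk) hne
      | 1, hk =>
        obtain ⟨m, rfl⟩ := Finset.card_eq_one.mp hk
        exact reach_singleton hconn m v
      | (m + 2), hk =>
        have hlt : M.card < Fintype.card V := by
          rw [← Finset.card_univ]
          exact Finset.card_lt_card (Finset.ssubset_univ_iff.mpr hnu)
        have hsdc : (Finset.univ \ {v, a, b} : Finset V).card = Fintype.card V - 3 := by
          have hc3 : ({v, a, b} : Finset V).card = 3 := by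
            rw [Finset.card_insert_of_notMem (by simp [hva, hvb]),
              Finset.card_insert_of_notMem (by simp [hab])]
            rfl
          rw [Finset.card_sdiff_of_subset (Finset.subset_univ _), Finset.card_univ, hc3]
        have hm : m ≤ (Finset.univ \ {v, a, b} : Finset V).card := by
          rw [hsdc]; omega
        obtain ⟨S, hS, hScard⟩ := Finset.exists_subset_card_eq hm
        have hvS : v ∉ S := fun h => by
          have := Finset.mem_sdiff.mp (hS h); exact this.2 (by simp)
        have haS : a ∉ S := fun h => by
          have := Finset.mem_sdiff.mp (hS h); exact this.2 (by simp)
        have hbS : b ∉ S := fun h => by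
          have := Finset.mem_sdiff.mp (hS h); exact this.2 (by simp)
        have hDcard : (insert a (insert b S)).card = m + 2 := by
          rw [Finset.card_insert_of_notMem (by simp [hab, haS]),
            Finset.card_insert_of_notMem hbS, hScard]
        have hM0card : (insert v S).card = m + 1 := by
          rw [Finset.card_insert_of_notMem hvS, hScard]
        have r1 : (GammaGraph arr).Reachable M (insert a (insert b S)) :=
          reach_of_card_eq hconn M _ (by rw [hk, hDcard])
        have adj := hmove S hvS haS hbS
        have hM0ne : insert v S ≠ ∅ := Finset.insert_ne_empty v S
        have hM0nu : insert v S ≠ Finset.univ := by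
          intro h
          have : (insert v S).card = Fintype.card V := by rw [h, Finset.card_univ]
          rw [hM0card] at this
          omega
        have r2 := ih (m + 1) (by omega) (insert v S) hM0card hM0ne hM0nu
        exact r1.trans (adj.symm.reachable.trans r2)
  have main : ∀ M N : Finset V, M ≠ ∅ → M ≠ Finset.univ → N ≠ ∅ → N ≠ Finset.univ →
      (GammaGraph arr).Reachable M N := fun M N h1 h2 h3 h4 =>
    (key M.card M rfl h1 h2).trans (key N.card N rfl h3 h4).symm
  have hclass : ∀ M N : Finset V, (GammaGraph arr).Reachable M N ↔
      ((M = ∅ ∧ N = ∅) ∨ (M = Finset.univ ∧ N = Finset.univ) ∨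
       (M ≠ ∅ ∧ M ≠ Finset.univ ∧ N ≠ ∅ ∧ N ≠ Finset.univ)) := by
    intro M N
    constructor
    · intro h
      by_cases hM0 : M = ∅
      · subst hM0
        exact Or.inl ⟨rfl, (isolated_reach no_adj_empty h).symm⟩
      by_cases hMu : M = Finset.univ
      · subst hMu
        exact Or.inr (Or.inl ⟨rfl, (isolated_reach no_adj_univ h).symm⟩)
      refine Or.inr (Or.inr ⟨hM0, hMu, ?_, ?_⟩)
      · intro hN0
        subst hN0
        exact hM0 (isolated_reach no_adj_empty h.symm).symm
      · intro hNu
        subst hNu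
        exact hMu (isolated_reach no_adj_univ h.symm).symm
    · rintro (⟨rfl, rfl⟩ | ⟨rfl, rfl⟩ | ⟨h1, h2, h3, h4⟩)
      · exact SimpleGraph.Reachable.refl _
      · exact SimpleGraph.Reachable.refl _
      · exact main M N h1 h2 h3 h4
  refine ⟨hclass, ?_⟩
  -- counting the components
  set g : Finset V → Fin 3 := fun M => if M = ∅ then 0 else if M = Finset.univ then 1 else 2
    with hg
  have hgwalk : ∀ (M N : Finset V) (p : (GammaGraph arr).Walk M N), p.IsPath → g M = g N := by
    intro M N p _
    have h := (hclass M N).mp ⟨p⟩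
    rcases h with ⟨rfl, rfl⟩ | ⟨rfl, rfl⟩ | ⟨h1, h2, h3, h4⟩
    · rfl
    · rfl
    · simp [hg, h1, h2, h3, h4]
  let f := SimpleGraph.ConnectedComponent.lift g hgwalk
  have huniv_ne : (Finset.univ : Finset V) ≠ ∅ := Finset.univ_nonempty.ne_empty
  have hsing_ne : ({v} : Finset V) ≠ Finset.univ := by
    intro h
    have : a ∈ ({v} : Finset V) := h ▸ Finset.mem_univ a
    rw [Finset.mem_singleton] at this
    exact hva this.symm
  have hbij : Function.Bijective f := by
    constructor
    · intro c d
      refine SimpleGraph.ConnectedComponent.ind₂ (β := fun c d => f c = f d → c = d) ?_ c d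
      intro M N h
      have h' : g M = g N := h
      rw [SimpleGraph.ConnectedComponent.eq]
      by_cases hM0 : M = ∅ <;> by_cases hMu : M = Finset.univ <;>
        by_cases hN0 : N = ∅ <;> by_cases hNu : N = Finset.univ <;>
        first
          | (exact (hclass M N).mpr (Or.inl ⟨hM0, hN0⟩))
          | (exact (hclass M N).mpr (Or.inr (Or.inl ⟨hMu, hNu⟩)))
          | (exact (hclass M N).mpr (Or.inr (Or.inr ⟨hM0, hMu, hN0, hNu⟩)))
          | (exfalso; simp [hg, hM0, hMu, hN0, hNu, huniv_ne] at h'; omega)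
          | (exfalso; simp [hg, hM0, hMu, hN0, hNu, huniv_ne] at h')
    · intro i
      fin_cases i
      · exact ⟨(GammaGraph arr).connectedComponentMk ∅, by simp [f, hg]⟩
      · exact ⟨(GammaGraph arr).connectedComponentMk Finset.univ, by simp [f, hg, huniv_ne]⟩
      · refine ⟨(GammaGraph arr).connectedComponentMk {v}, ?_⟩
        simp [f, hg, Finset.singleton_ne_empty, hsing_ne]
  rw [Nat.card_eq_of_bijective f hbij]
  simp
end

section
/- Let Q be a finite acyclic quiver with at least two vertices whose underlying undirected graph is connected. For every proper nonempty subset A of V, every a ∈ A and every b ∈ V \ A, the subsets A and (A \ {a}) ∪ {b} lie in the same connected component of the graph Γ(Q). -/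
set_option linter.unusedVariables false

lemma swap_adj {V : Type} [DecidableEq V] (arr : V → V → Prop) {M : Finset V} {x y : V}
    (hx : x ∈ M) (hy : y ∉ M) (h : arr x y ∨ arr y x) :
    (GammaGraph arr).Adj M (insert y (M.erase x)) := by
  have hxy : x ≠ y := fun h => hy (h ▸ hx)
  set N := insert y (M.erase x) with hN
  have hxN : x ∉ N := by
    simp only [hN, Finset.mem_insert, Finset.mem_erase]
    push_neg
    exact ⟨hxy, fun h _ => (h rfl).elim⟩
  have h1 : M \ N = {x} := by
    ext z
    simp only [hN, Finset.mem_sdiff, Finset.mem_insert, Finset.mem_erase,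
      Finset.mem_singleton]
    constructor
    · rintro ⟨hzM, hz⟩
      push_neg at hz
      by_contra hzx
      exact hz.2 hzx hzM
    · rintro rfl; exact ⟨hx, fun h => by
        rcases h with h | h
        · exact hxy h
        · exact h.1 rfl⟩
  have h2 : N \ M = {y} := by
    ext z
    simp only [hN, Finset.mem_sdiff, Finset.mem_insert, Finset.mem_erase,
      Finset.mem_singleton]
    constructor
    · rintro ⟨hz, hzM⟩
      rcases hz with rfl | ⟨_, hzM'⟩
      · rfl
      · exact absurd hzM' hzM
    · rintro rfl; exact ⟨Or.inl rfl, hy⟩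
  refine ⟨fun he => hxN (he ▸ hx), ?_⟩
  rw [h1, h2]
  rcases h with h | h
  · exact Or.inl ⟨Finset.singleton_nonempty x, Finset.singleton_nonempty y,
      by simpa using h⟩
  · exact Or.inr ⟨Finset.singleton_nonempty y, Finset.singleton_nonempty x,
      by simpa using h⟩

lemma gamma_key {V : Type} [Fintype V] [DecidableEq V]
    (arr : V → V → Prop) (hQ : IsAcyclicQuiver arr) {a b : V}
    (hw : Relation.ReflTransGen (fun x y => arr x y ∨ arr y x) a b) :
    ∀ A : Finset V, a ∈ A → b ∉ A → A ≠ Finset.univ →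
      (GammaGraph arr).Reachable A (insert b (A.erase a)) := by
  induction hw using Relation.ReflTransGen.head_induction_on with
  | refl => intro A ha hb _; exact absurd ha hb
  | head h hwalk ih =>
    rename_i x c
    intro A hx hb hAu
    have hxc : x ≠ c := by
      rintro rfl
      exact hQ x (Relation.TransGen.single (h.elim id id))
    by_cases hcb : c = b
    · subst hcb
      exact (swap_adj arr hx hb h).reachable
    by_cases hcA : c ∈ A
    · -- first move b in place of c (by IH), then swap a back via edge x↔c
      have r1 := ih A hcA hb hAu
      have hxB : x ∈ insert b (A.erase c) := by
        simp [Finset.mem_insert, Finset.mem_erase, hxc, hx]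
      have hcB : c ∉ insert b (A.erase c) := by
        simp [Finset.mem_insert, Finset.mem_erase, hcb]
      have r2 := (swap_adj arr hxB hcB h).reachable
      have heq : insert c ((insert b (A.erase c)).erase x) = insert b (A.erase x) := by
        ext z
        simp only [Finset.mem_insert, Finset.mem_erase]
        constructor
        · rintro (rfl | ⟨hzx, rfl | ⟨hzc, hzA⟩⟩)
          · exact Or.inr ⟨hxc.symm, hcA⟩
          · exact Or.inl rfl
          · exact Or.inr ⟨hzx, hzA⟩
        · rintro (rfl | ⟨hzx, hzA⟩)
          · exact Or.inr ⟨fun hbx => hb (hbx ▸ hx), Or.inl rfl⟩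
          · by_cases hzc : z = c
            · exact Or.inl hzc
            · exact Or.inr ⟨hzx, Or.inr ⟨hzc, hzA⟩⟩
      rw [heq] at r2
      exact r1.trans r2
    · -- swap x ↦ c first (edge), then move b in place of c by IH
      have r1 := (swap_adj arr hx hcA h).reachable
      set A' := insert c (A.erase x) with hA'
      have hcA' : c ∈ A' := Finset.mem_insert_self _ _
      have hbA' : b ∉ A' := by
        simp only [hA', Finset.mem_insert, Finset.mem_erase]
        push_neg
        exact ⟨fun hbc => hcb hbc.symm, fun _ => hb⟩
      have hA'u : A' ≠ Finset.univ := by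
        intro he
        have hxA' : x ∉ A' := by
          simp only [hA', Finset.mem_insert, Finset.mem_erase]
          push_neg
          exact ⟨hxc, fun h _ => (h rfl).elim⟩
        exact hxA' (he ▸ Finset.mem_univ x)
      have r2 := ih A' hcA' hbA' hA'u
      have heq : A'.erase c = A.erase x := by
        rw [hA', Finset.erase_insert]
        simp only [Finset.mem_erase]
        exact fun h => hcA h.2
      rw [heq] at r2
      exact r1.trans r2

/-- Let `Q` be a finite acyclic quiver with at least two vertices
whose underlying undirected graph is connected.  For every proper nonempty subset `A`
of the vertex set, every `a ∈ A` and every `b ∉ A`, the subsets `A` and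
`(A \ {a}) ∪ {b}` lie in the same connected component of `Γ(Q)`. -/
theorem gamma_exchange_reachable (V : Type) [Fintype V] [DecidableEq V]
    (arr : V → V → Prop) (hQ : IsAcyclicQuiver arr)
    (hcard : 2 ≤ Fintype.card V)
    (hconn : ∀ a b : V, Relation.ReflTransGen (fun x y => arr x y ∨ arr y x) a b)
    (A : Finset V) (hA₁ : A ≠ ∅) (hA₂ : A ≠ Finset.univ)
    (a : V) (ha : a ∈ A) (b : V) (hb : b ∉ A) :
    (GammaGraph arr).Reachable A (insert b (A.erase a)) := by
  exact gamma_key arr hQ (hconn a b) A ha hb hA₂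
end

section
/- Let n ≥ 1 and let K ⪰ J in P_n. For every saturated chain K = H_t ⋗ H_{t−1} ⋗ … ⋗ H_1 = J in P_n (each H_{s+1} covers H_s), the identity π_{(K,J)} = π_{H_t}·π_{H_{t−1}}·…·π_{H_1} holds in the monoid NDPF_{n+1}, where for a subset H = {h_1 < … < h_s} of {1,…,n} we set π_H := π_{h_1}·π_{h_2}·…·π_{h_s} (indices in increasing order). In particular the left-hand side is independent of the chosen saturated chain. -/
set_option linter.unreachableTactic false
set_option linter.unusedTactic false


def natPi (j x : ℕ) : ℕ := if x = j + 1 then j else x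

def natStep (k j x : ℕ) : ℕ := if j < x ∧ x ≤ k + 1 then x - 1 else x

def natG : List ℕ → ℕ → ℕ
  | [], x => x
  | h :: t, x => natPi h (natG t x)

def natF : List ℕ → List ℕ → ℕ → ℕ
  | k :: ks, j :: js, x => natStep k j (natF ks js x)
  | _, _, x => x

inductive Inc : List ℕ → List ℕ → Prop
  | base (h : ℕ) (t : List ℕ) : Inc (h :: t) ((h + 1) :: t)
  | cons (h : ℕ) {t t' : List ℕ} : Inc t t' → Inc (h :: t) (h :: t')

lemma natG_fix {L : List ℕ} {m : ℕ} (hL : ∀ a ∈ L, m ≤ a) {x : ℕ} (hx : x ≤ m) :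
    natG L x = x := by
  induction L with
  | nil => rfl
  | cons h t ih =>
    have h1 : m ≤ h := hL h (by simp)
    have h2 : natG t x = x := ih (fun a ha => hL a (by simp [ha]))
    simp only [natG, h2, natPi]
    split_ifs <;> omega

lemma natG_ge {L : List ℕ} {m : ℕ} (hL : ∀ a ∈ L, m ≤ a) {x : ℕ} (hx : m ≤ x) :
    m ≤ natG L x := by
  induction L with
  | nil => exact hx
  | cons h t ih =>
    have h1 : m ≤ h := hL h (by simp)
    have h2 : m ≤ natG t x := ih (fun a ha => hL a (by simp [ha]))
    simp only [natG, natPi]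
    split_ifs <;> omega

lemma natStep_lo {k j x : ℕ} (h : x ≤ j) : natStep k j x = x := by
  simp only [natStep]; split_ifs <;> omega

lemma natStep_mid {k j x : ℕ} (h1 : j < x) (h2 : x ≤ k + 1) : natStep k j x = x - 1 := by
  simp only [natStep]; split_ifs <;> omega

lemma natStep_hi {k j x : ℕ} (h : k + 1 < x) : natStep k j x = x := by
  simp only [natStep]; split_ifs <;> omega

lemma lemC {L : List ℕ} {h j : ℕ} (hL : ∀ a ∈ L, h + 1 ≤ a) (hj : j ≤ h) (x : ℕ) :
    natPi h (natG L (natStep h j x)) = natStep h j (natG L x) := by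
  rcases le_or_gt x j with hx | hx
  · rw [natStep_lo hx, natG_fix (m := h + 1) hL (by omega),
      natStep_lo (x := x) hx]
    simp only [natPi]; split_ifs <;> omega
  rcases le_or_gt x (h + 1) with hx2 | hx2
  · rw [natStep_mid hx hx2, natG_fix (m := h + 1) hL (by omega),
      natG_fix (m := h + 1) hL (by omega), natStep_mid hx hx2]
    simp only [natPi]; split_ifs <;> omega
  · rw [natStep_hi (by omega : h + 1 < x)]
    have h2 : h + 1 ≤ natG L x := natG_ge hL (by omega)
    simp only [natPi, natStep]
    split_ifs <;> omega

lemma lemD {L : List ℕ} {h j : ℕ} (hL : ∀ a ∈ L, h + 2 ≤ a) (hj : j ≤ h) (x : ℕ) :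
    natG L (natStep h j x) = natStep h j (natG L x) := by
  rcases le_or_gt x (h + 1) with hx | hx
  · have h1 : natStep h j x ≤ h + 1 := by simp only [natStep]; split_ifs <;> omega
    rw [natG_fix (m := h + 2) hL (by omega), natG_fix (m := h + 2) hL (by omega)]
  · rw [natStep_hi (by omega : h + 1 < x)]
    have h2 : h + 2 ≤ natG L x := natG_ge hL (by omega)
    rw [natStep_hi (by omega : h + 1 < natG L x)]

lemma lemE {h j : ℕ} (hj : j ≤ h + 1) (v : ℕ) : natPi (h + 1) (natStep h j v) = natStep (h + 1) j v := by
  simp only [natPi, natStep]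
  split_ifs <;> omega

lemma natStep_diag (k x : ℕ) : natStep k k x = natPi k x := by
  simp only [natStep, natPi]; split_ifs <;> omega

lemma natF_diag : ∀ (hs : List ℕ) (x : ℕ), natF hs hs x = natG hs x
  | [], _ => rfl
  | h :: t, x => by simp only [natF, natG, natF_diag t, natStep_diag]

lemma absorb : ∀ {hs js : List ℕ}, hs.Pairwise (· < ·) → List.Forall₂ (· ≤ ·) js hs →
    ∀ x, natG hs (natF hs js x) = natF hs js x := by
  intro hs
  induction hs with
  | nil => intro js _ hf x; cases hf; rfl
  | cons h t ih =>
    intro js hp hf x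
    cases hf with
    | cons hjh hf' =>
      rename_i j jt
      have ht : ∀ a ∈ t, h + 1 ≤ a := fun a ha => (List.pairwise_cons.mp hp).1 a ha
      have htp : t.Pairwise (· < ·) := (List.pairwise_cons.mp hp).2
      show natPi h (natG t (natStep h j (natF t jt x))) = natStep h j (natF t jt x)
      rw [lemC ht hjh, ih htp hf']

lemma keyL : ∀ {hs ks : List ℕ}, Inc hs ks → ∀ {js : List ℕ}, ks.Pairwise (· < ·) →
    List.Forall₂ (· ≤ ·) js hs → ∀ x, natG ks (natF hs js x) = natF ks js x := by
  intro hs ks hinc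
  induction hinc with
  | base h t =>
    intro js hp hf x
    cases hf with
    | cons hjh hf' =>
      rename_i j jt
      have ht : ∀ a ∈ t, h + 2 ≤ a := fun a ha => (List.pairwise_cons.mp hp).1 a ha
      have htp : t.Pairwise (· < ·) := (List.pairwise_cons.mp hp).2
      show natPi (h + 1) (natG t (natStep h j (natF t jt x)))
          = natStep (h + 1) j (natF t jt x)
      rw [lemD ht hjh, absorb htp hf', lemE (by omega : j ≤ h + 1)]
  | @cons h t t' hinc' ih =>
    intro js hp hf x
    cases hf with
    | cons hjh hf' =>
      rename_i j jt
      have hgt : ∀ a ∈ t', h + 1 ≤ a := fun a ha => (List.pairwise_cons.mp hp).1 a ha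
      have htp : t'.Pairwise (· < ·) := (List.pairwise_cons.mp hp).2
      show natPi h (natG t' (natStep h j (natF t jt x))) = natStep h j (natF t' jt x)
      rw [lemC hgt hjh, ih htp hf']

lemma inc_set : ∀ (l : List ℕ) (p : ℕ) (hp : p < l.length),
    Inc l (l.set p (l[p] + 1))
  | h :: t, 0, _ => Inc.base h t
  | h :: t, p + 1, hp => Inc.cons h (inc_set t p (by simpa using hp))

/-- The monoid of non-decreasing parking functions on `{1, …, n}` (modelled as `Fin n`):
order-preserving functions `f` with `f i ≤ i`, under composition. -/
def NDPF (n : ℕ) : Type :=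
  {f : Fin n → Fin n // Monotone f ∧ ∀ i, f i ≤ i}

instance (n : ℕ) : Monoid (NDPF n) where
  mul f g := ⟨f.1 ∘ g.1, (f.2.1.comp g.2.1 : _), fun i => (f.2.2 _).trans (g.2.2 i)⟩
  one := ⟨id, monotone_id, fun _ => le_rfl⟩
  mul_assoc _ _ _ := rfl
  one_mul _ := rfl
  mul_one _ := rfl

/-- The generator `π_j` of `NDPF (n+1)`: it sends the point `j+1` to `j` and fixes all
other points (here `j : Fin n` represents the paper's `j+1 ∈ {1,…,n}`, and `Fin (n+1)`
represents `{1,…,n+1}` via `i ↦ i+1`). -/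
def ndpfPi {n : ℕ} (j : Fin n) : NDPF (n + 1) :=
  ⟨fun i => if (i : ℕ) = (j : ℕ) + 1 then ⟨(j : ℕ), by omega⟩ else i, by
    intro a b hab
    have hab' : (a : ℕ) ≤ (b : ℕ) := hab
    by_cases ha : (a : ℕ) = (j : ℕ) + 1 <;> by_cases hb : (b : ℕ) = (j : ℕ) + 1 <;>
      simp only [ha, hb, if_pos, if_neg, Fin.le_def] <;> simp <;> omega, by
    intro i
    by_cases hi : (i : ℕ) = (j : ℕ) + 1 <;>
      simp only [hi, if_pos, if_neg, Fin.le_def] <;> simp <;> omega⟩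

/-- The product order `⪰` on subsets of `{1,…,n}` (modelled as `Finset (Fin n)`):
`pnLe J K` (i.e. `K ⪰ J`) iff `J` and `K` have the same cardinality and, writing
`J = {j_1 < … < j_r}` and `K = {k_1 < … < k_r}`, one has `j_i ≤ k_i` for all `i`. -/
def pnLe {n : ℕ} (J K : Finset (Fin n)) : Prop :=
  J.card = K.card ∧
    ∀ (i : ℕ) (hJ : i < (J.sort (· ≤ ·)).length) (hK : i < (K.sort (· ≤ ·)).length),
      (J.sort (· ≤ ·)).get ⟨i, hJ⟩ ≤ (K.sort (· ≤ ·)).get ⟨i, hK⟩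

/-- `pnCovBy H' H` : `H` covers `H'` in the product order `P_n` (written `H ⋗ H'`):
`H ⪰ H'`, `H ≠ H'`, and there is nothing strictly in between. -/
def pnCovBy {n : ℕ} (H' H : Finset (Fin n)) : Prop :=
  pnLe H' H ∧ H' ≠ H ∧ ∀ H'' : Finset (Fin n), pnLe H' H'' → pnLe H'' H → H'' = H' ∨ H'' = H

/-- The block `π_k · π_{k−1} · ⋯ · π_j` in `NDPF (n+1)` (indices decreasing from
`k` down to `j`). -/
def blockProd {n : ℕ} (k j : Fin n) : NDPF (n + 1) :=
  ((List.range ((k : ℕ) + 1 - (j : ℕ))).map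
    (fun d => ndpfPi (⟨(k : ℕ) - d, Nat.lt_of_le_of_lt (Nat.sub_le _ _) k.2⟩ : Fin n))).prod

/-- For a subset `H = {h_1 < … < h_s}` of `{1,…,n}`, the product
`π_H = π_{h_1} · π_{h_2} · ⋯ · π_{h_s}` (indices in increasing order). -/
def piSet {n : ℕ} (H : Finset (Fin n)) : NDPF (n + 1) :=
  ((H.sort (· ≤ ·)).map ndpfPi).prod

/-- For `K ⪰ J` in `P_n` with `K = {k_1 < … < k_r}` and `J = {j_1 < … < j_r}`, the
element `π_{(K,J)} = (π_{k_1}⋯π_{j_1}) · (π_{k_2}⋯π_{j_2}) ⋯ (π_{k_r}⋯π_{j_r})`,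
each block having decreasing indices from `k_i` down to `j_i`, the blocks being
multiplied left to right in the order `i = 1, …, r`. -/
def piPair {n : ℕ} (K J : Finset (Fin n)) : NDPF (n + 1) :=
  (List.zipWith blockProd (K.sort (· ≤ ·)) (J.sort (· ≤ ·))).prod

lemma ndpf_mul_apply {n : ℕ} (a b : NDPF n) (x : Fin n) : (a * b).1 x = a.1 (b.1 x) := rfl

lemma ndpfPi_coe {n : ℕ} (j : Fin n) (x : Fin (n + 1)) :
    (((ndpfPi j).1 x : Fin (n + 1)) : ℕ) = natPi (j : ℕ) (x : ℕ) := by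
  simp only [ndpfPi, natPi]
  split_ifs <;> simp_all

lemma prod_map_pi_coe {n : ℕ} (L : List (Fin n)) (x : Fin (n + 1)) :
    ((((L.map ndpfPi).prod).1 x : Fin (n + 1)) : ℕ) = natG (L.map Fin.val) (x : ℕ) := by
  induction L generalizing x with
  | nil => rfl
  | cons h t ih =>
    simp only [List.map_cons, List.prod_cons, natG, ndpf_mul_apply]
    rw [ndpfPi_coe, ih]

lemma natG_desc : ∀ (m : ℕ) (k j x : ℕ), m = k + 1 - j →
    natG ((List.range m).map (fun d => k - d)) x = natStep k j x := by
  intro m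
  induction m with
  | zero =>
    intro k j x hm
    simp only [List.range_zero, List.map_nil, natG, natStep]
    split_ifs <;> omega
  | succ m ih =>
    intro k j x hm
    have hjk : j ≤ k := by omega
    rw [List.range_succ_eq_map]
    simp only [List.map_cons, List.map_map, natG, Nat.sub_zero]
    rcases Nat.eq_zero_or_pos k with hk | hk
    · -- k = 0, then j = 0, m = 0
      subst hk
      have hj0 : j = 0 := by omega
      have hm0 : m = 0 := by omega
      subst hj0; subst hm0
      simp only [List.range_zero, List.map_nil, natG]
      rw [natStep_diag]
    · have hcomp : ((fun d => k - d) ∘ (fun i => i + 1)) = (fun d => (k - 1) - d) := by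
        funext d; show k - (d + 1) = k - 1 - d; omega
      rw [hcomp, ih (k - 1) j x (by omega)]
      have := lemE (h := k - 1) (j := j) (by omega) x
      have hk1 : k - 1 + 1 = k := by omega
      rw [hk1] at this
      exact this

lemma blockProd_coe {n : ℕ} (k j : Fin n) (x : Fin (n + 1)) :
    (((blockProd k j).1 x : Fin (n + 1)) : ℕ) = natStep (k : ℕ) (j : ℕ) (x : ℕ) := by
  unfold blockProd
  have h1 : (List.range ((k : ℕ) + 1 - (j : ℕ))).map
        (fun d => ndpfPi (⟨(k : ℕ) - d, Nat.lt_of_le_of_lt (Nat.sub_le _ _) k.2⟩ : Fin n))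
      = ((List.range ((k : ℕ) + 1 - (j : ℕ))).map
        (fun d => (⟨(k : ℕ) - d, Nat.lt_of_le_of_lt (Nat.sub_le _ _) k.2⟩ : Fin n))).map ndpfPi := by
    rw [List.map_map]; rfl
  rw [h1, prod_map_pi_coe, List.map_map]
  have hcomp : (Fin.val ∘ fun d => (⟨(k : ℕ) - d, Nat.lt_of_le_of_lt (Nat.sub_le _ _) k.2⟩ : Fin n))
      = fun d => (k : ℕ) - d := by
    funext d; rfl
  rw [hcomp]
  exact natG_desc _ _ _ _ rfl

lemma piSet_coe {n : ℕ} (H : Finset (Fin n)) (x : Fin (n + 1)) :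
    (((piSet H).1 x : Fin (n + 1)) : ℕ) = natG ((H.sort (· ≤ ·)).map Fin.val) (x : ℕ) :=
  prod_map_pi_coe _ _

lemma zip_coe {n : ℕ} : ∀ (ks js : List (Fin n)) (x : Fin (n + 1)),
    ((((List.zipWith blockProd ks js).prod).1 x : Fin (n + 1)) : ℕ)
      = natF (ks.map Fin.val) (js.map Fin.val) (x : ℕ) := by
  intro ks
  induction ks with
  | nil => intro js x; rfl
  | cons k ks ih =>
    intro js x
    cases js with
    | nil => rfl
    | cons j js =>
      simp only [List.zipWith_cons_cons, List.prod_cons, List.map_cons, natF, ndpf_mul_apply]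
      rw [blockProd_coe, ih]

lemma piPair_coe {n : ℕ} (K J : Finset (Fin n)) (x : Fin (n + 1)) :
    (((piPair K J).1 x : Fin (n + 1)) : ℕ)
      = natF ((K.sort (· ≤ ·)).map Fin.val) ((J.sort (· ≤ ·)).map Fin.val) (x : ℕ) :=
  zip_coe _ _ _

lemma pnLe_refl {n : ℕ} (K : Finset (Fin n)) : pnLe K K :=
  ⟨rfl, fun _ _ _ => le_rfl⟩

lemma pnLe_trans {n : ℕ} {A B C : Finset (Fin n)} (h1 : pnLe A B) (h2 : pnLe B C) :
    pnLe A C := by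
  refine ⟨h1.1.trans h2.1, fun i hA hC => ?_⟩
  have hB : i < (B.sort (· ≤ ·)).length := by
    have := h1.1
    rw [Finset.length_sort] at hA ⊢
    omega
  exact (h1.2 i hA hB).trans (h2.2 i hB hC)

lemma pnLe_forall₂ {n : ℕ} {J K : Finset (Fin n)} (h : pnLe J K) :
    List.Forall₂ (· ≤ ·) ((J.sort (· ≤ ·)).map Fin.val) ((K.sort (· ≤ ·)).map Fin.val) := by
  rw [List.forall₂_iff_get]
  constructor
  · simp [h.1]
  · intro i h1 h2
    simp only [List.get_eq_getElem, List.getElem_map]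
    exact h.2 i (by simpa using h1) (by simpa using h2)

lemma sort_pairwise_val {n : ℕ} (K : Finset (Fin n)) :
    ((K.sort (· ≤ ·)).map Fin.val).Pairwise (· < ·) :=
  (Finset.sortedLT_sort K).pairwise.map Fin.val (fun _ _ h => h)

lemma chain_last_le {n : ℕ} : ∀ (l : List (Finset (Fin n))) (hne : l ≠ []),
    l.Chain' (fun a b => pnCovBy b a) → pnLe (l.getLast hne) (l.head hne)
  | [], hne, _ => absurd rfl hne
  | [a], _, _ => pnLe_refl a
  | a :: b :: t, _, hch => by
    have h1 : pnCovBy b a := (List.isChain_cons_cons.mp hch).1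
    have h2 := chain_last_le (b :: t) (by simp) (List.isChain_cons_cons.mp hch).2
    rw [List.getLast_cons (by simp : b :: t ≠ [])]
    exact pnLe_trans h2 h1.1

lemma sort_eq_iff {n : ℕ} {H K : Finset (Fin n)} :
    H.sort (· ≤ ·) = K.sort (· ≤ ·) ↔ H = K := by
  constructor
  · intro h
    ext z
    rw [← Finset.mem_sort (α := Fin n) (· ≤ ·), h, Finset.mem_sort]
  · intro h; rw [h]

lemma cover_inc {n : ℕ} {H K : Finset (Fin n)} (hc : pnCovBy H K) :
    Inc ((H.sort (· ≤ ·)).map Fin.val) ((K.sort (· ≤ ·)).map Fin.val) := by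
  classical
  obtain ⟨⟨hcard, hget0⟩, hne, hmin⟩ := hc
  have hlen : (H.sort (· ≤ ·)).length = (K.sort (· ≤ ·)).length := by
    rw [Finset.length_sort, Finset.length_sort, hcard]
  have hget : ∀ (i : ℕ) (h1 : i < (H.sort (· ≤ ·)).length) (h2 : i < (K.sort (· ≤ ·)).length),
      ((H.sort (· ≤ ·))[i]'(h1) : ℕ) ≤ ((K.sort (· ≤ ·))[i]'(h2) : ℕ) := by
    intro i h1 h2
    exact hget0 i h1 h2
  have hab : H.sort (· ≤ ·) ≠ K.sort (· ≤ ·) := fun h => hne (sort_eq_iff.mp h)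
  have hsa : (H.sort (· ≤ ·)).Pairwise (· < ·) := (Finset.sortedLT_sort H).pairwise
  have hsb : (K.sort (· ≤ ·)).Pairwise (· < ·) := (Finset.sortedLT_sort K).pairwise
  have hsa' : ∀ (i j : ℕ) (h1 : i < (H.sort (· ≤ ·)).length) (h2 : j < (H.sort (· ≤ ·)).length),
      i < j → (((H.sort (· ≤ ·))[i]'(h1) : Fin n) : ℕ) < (((H.sort (· ≤ ·))[j]'(h2) : Fin n) : ℕ) := by
    intro i j h1 h2 hij
    exact List.pairwise_iff_get.mp hsa ⟨i, h1⟩ ⟨j, h2⟩ hij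
  have hsb' : ∀ (i j : ℕ) (h1 : i < (K.sort (· ≤ ·)).length) (h2 : j < (K.sort (· ≤ ·)).length),
      i < j → (((K.sort (· ≤ ·))[i]'(h1) : Fin n) : ℕ) < (((K.sort (· ≤ ·))[j]'(h2) : Fin n) : ℕ) := by
    intro i j h1 h2 hij
    exact List.pairwise_iff_get.mp hsb ⟨i, h1⟩ ⟨j, h2⟩ hij
  -- the predicate "entries differ at i"
  let P : ℕ → Prop := fun i =>
    ∃ (h1 : i < (H.sort (· ≤ ·)).length) (h2 : i < (K.sort (· ≤ ·)).length),
      (((H.sort (· ≤ ·))[i]'(h1) : Fin n) : ℕ) ≠ (((K.sort (· ≤ ·))[i]'(h2) : Fin n) : ℕ)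
  have hPdec : DecidablePred P := Classical.decPred P
  have hdiff : ∃ i, P i := by
    by_contra hno
    push_neg at hno
    apply hab
    apply List.ext_getElem hlen
    intro i h1 h2
    have := hno i
    simp only [P, not_exists] at this
    exact Fin.ext (by by_contra hne2; exact this h1 h2 hne2)
  obtain ⟨i0, hi0⟩ := hdiff
  set p := Nat.findGreatest P (H.sort (· ≤ ·)).length with hp
  have hi0le : i0 ≤ (H.sort (· ≤ ·)).length := le_of_lt hi0.1
  have hPp : P p := Nat.findGreatest_spec hi0le hi0
  obtain ⟨hplt, hplt2, hpne⟩ := hPp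
  have hgt_eq : ∀ q (hq : q < (H.sort (· ≤ ·)).length) (hq2 : q < (K.sort (· ≤ ·)).length),
      p < q → (((H.sort (· ≤ ·))[q]'(hq) : Fin n) : ℕ) = (((K.sort (· ≤ ·))[q]'(hq2) : Fin n) : ℕ) := by
    intro q hq hq2 hpq
    have hnP : ¬ P q := Nat.findGreatest_is_greatest hpq (le_of_lt hq)
    simp only [P, not_exists] at hnP
    by_contra hne2
    exact hnP hq hq2 hne2
  have hpb : (((H.sort (· ≤ ·))[p]'(hplt) : Fin n) : ℕ) < (((K.sort (· ≤ ·))[p]'(hplt2) : Fin n) : ℕ) :=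
    lt_of_le_of_ne (hget p hplt hplt2) hpne
  have hnewlt : (((H.sort (· ≤ ·))[p]'(hplt) : Fin n) : ℕ) + 1 < n := by
    have := ((K.sort (· ≤ ·))[p]'(hplt2)).2
    omega
  set e : Fin n := ⟨(((H.sort (· ≤ ·))[p]'(hplt) : Fin n) : ℕ) + 1, hnewlt⟩ with he
  set cl : List (Fin n) := (H.sort (· ≤ ·)).set p e with hcdef
  have hclen : cl.length = (H.sort (· ≤ ·)).length := by simp [hcdef]
  have hcget : ∀ q (h1 : q < cl.length) (h2 : q < (H.sort (· ≤ ·)).length),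
      cl[q]'(h1) = if q = p then e else (H.sort (· ≤ ·))[q]'(h2) := by
    intro q h1 h2
    simp only [hcdef, List.getElem_set]
    split_ifs with h3 h4 h5
    · rfl
    · exact absurd h3.symm h4
    · exact absurd h5.symm h3
    · rfl
  -- entries above p are strictly above a_p + 1
  have hgap : ∀ q (hq : q < (H.sort (· ≤ ·)).length), p < q →
      (((H.sort (· ≤ ·))[p]'(hplt) : Fin n) : ℕ) + 1 < (((H.sort (· ≤ ·))[q]'(hq) : Fin n) : ℕ) := by
    intro q hq hpq
    have hq2 : q < (K.sort (· ≤ ·)).length := by omega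
    have h1 := hsa' p q hplt hq hpq
    have h2 := hgt_eq q hq hq2 hpq
    have h3 := hsb' p q hplt2 hq2 hpq
    omega
  have hcsorted : cl.Pairwise (· < ·) := by
    rw [List.pairwise_iff_get]
    intro i j hij
    have hi : (i : ℕ) < (H.sort (· ≤ ·)).length := by
      have := i.2; omega
    have hj : (j : ℕ) < (H.sort (· ≤ ·)).length := by
      have := j.2; omega
    simp only [List.get_eq_getElem]
    rw [hcget i i.2 hi, hcget j j.2 hj]
    have hij' : (i : ℕ) < (j : ℕ) := hij
    rw [Fin.lt_def]
    split_ifs with h1 h2 h2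
    · omega
    · -- i = p < j
      have := hgap j hj (by omega)
      simp only [he]
      omega
    · -- i < j = p
      have := hsa' i p hi hplt (by omega)
      simp only [he]
      omega
    · exact hsa' i j hi hj hij'
  have hcnodup : cl.Nodup := hcsorted.nodup
  have hsortK' : cl.toFinset.sort (· ≤ ·) = cl :=
    (List.toFinset_sort (· ≤ ·) hcnodup).mpr (hcsorted.imp le_of_lt)
  have hcardK' : cl.toFinset.card = H.card := by
    rw [List.toFinset_card_of_nodup hcnodup, hclen, Finset.length_sort]
  have hlenK' : (cl.toFinset.sort (· ≤ ·)).length = (H.sort (· ≤ ·)).length := by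
    rw [hsortK', hclen]
  -- pnLe H K'
  have hHK' : pnLe H cl.toFinset := by
    refine ⟨hcardK'.symm, ?_⟩
    intro i hJ hKl
    simp only [List.get_eq_getElem]
    have hi : i < cl.length := by rw [hclen]; exact hJ
    have hKi : (cl.toFinset.sort (· ≤ ·))[i]'(hKl) = cl[i]'(hi) := by
      simp only [hsortK']
    rw [Fin.le_def, hKi, hcget i hi hJ]
    split_ifs with h1
    · subst h1
      simp only [he]
      omega
    · exact le_rfl
  -- pnLe K' K
  have hK'K : pnLe cl.toFinset K := by
    refine ⟨by rw [hcardK', hcard], ?_⟩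
    intro i hKl hK2
    have hi : i < cl.length := by rw [hclen, hlen]; exact hK2
    have hi' : i < (H.sort (· ≤ ·)).length := by omega
    simp only [List.get_eq_getElem]
    have hKi : (cl.toFinset.sort (· ≤ ·))[i]'(hKl) = cl[i]'(hi) := by
      simp only [hsortK']
    rw [Fin.le_def, hKi, hcget i hi hi']
    split_ifs with h1
    · subst h1
      simp only [he]
      omega
    · exact hget i hi' hK2
  rcases hmin cl.toFinset hHK' hK'K with h | h
  · -- K' = H impossible
    exfalso
    have hca : cl = H.sort (· ≤ ·) := by rw [← hsortK', h]
    have h2 : cl[p]'(hclen ▸ hplt) = (H.sort (· ≤ ·))[p]'(hplt) := by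
      simp only [hca]
    rw [hcget p (hclen ▸ hplt) hplt, if_pos rfl] at h2
    have : (e : ℕ) = (((H.sort (· ≤ ·))[p]'(hplt) : Fin n) : ℕ) := by rw [h2]
    simp only [he] at this
    omega
  · -- K' = K : so b = cl
    have hbc : K.sort (· ≤ ·) = cl := by rw [← h, hsortK']
    rw [hbc, hcdef, List.map_set]
    have hpm : p < ((H.sort (· ≤ ·)).map Fin.val).length := by simpa using hplt
    have hmap : (e : ℕ) = ((H.sort (· ≤ ·)).map Fin.val)[p]'(hpm) + 1 := by
      simp only [he, List.getElem_map]
    rw [hmap]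
    exact inc_set _ p hpm

lemma piPair_diag {n : ℕ} (K : Finset (Fin n)) : piPair K K = piSet K := by
  apply Subtype.ext
  funext x
  apply Fin.ext
  rw [show ((piPair K K).1 x : ℕ) = _ from piPair_coe K K x,
    show ((piSet K).1 x : ℕ) = _ from piSet_coe K x]
  exact natF_diag _ _

lemma piPair_cover_step {n : ℕ} {K B J : Finset (Fin n)} (hcov : pnCovBy B K)
    (hJB : pnLe J B) : piPair K J = piSet K * piPair B J := by
  apply Subtype.ext
  funext x
  apply Fin.ext
  rw [show ((piPair K J).1 x : ℕ) = _ from piPair_coe K J x, ndpf_mul_apply,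
    show (((piSet K).1 ((piPair B J).1 x)) : ℕ) = _ from piSet_coe K _,
    show (((piPair B J).1 x) : ℕ) = _ from piPair_coe B J x]
  exact (keyL (cover_inc hcov) (sort_pairwise_val K) (pnLe_forall₂ hJB) _).symm

/-- Let `n ≥ 1` and `K ⪰ J` in `P_n`.  For every saturated chain
`K = H_t ⋗ H_{t−1} ⋗ … ⋗ H_1 = J` in `P_n` (given as the list `l = [H_t, …, H_1]`),
the identity `π_{(K,J)} = π_{H_t} · π_{H_{t−1}} · ⋯ · π_{H_1}` holds in `NDPF_{n+1}`;
in particular the right-hand side is independent of the chosen saturated chain. -/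
theorem piPair_eq_chain_prod (n : ℕ) (hn : 1 ≤ n) (K J : Finset (Fin n))
    (hKJ : pnLe J K) (l : List (Finset (Fin n))) (hne : l ≠ [])
    (hhead : l.head hne = K) (hlast : l.getLast hne = J)
    (hchain : l.Chain' (fun a b => pnCovBy b a)) :
    piPair K J = (l.map piSet).prod := by
  induction l generalizing K with
  | nil => exact absurd rfl hne
  | cons A t ih =>
    have hAK : A = K := hhead
    subst hAK
    cases t with
    | nil =>
      have hJ : A = J := by simpa using hlast
      subst hJ
      simp only [List.map_cons, List.map_nil, List.prod_cons, List.prod_nil, mul_one]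
      exact piPair_diag A
    | cons B t' =>
      have hcov : pnCovBy B A := (List.isChain_cons_cons.mp hchain).1
      have hch' : (B :: t').Chain' (fun a b => pnCovBy b a) := (List.isChain_cons_cons.mp hchain).2
      have hlast' : (B :: t').getLast (by simp) = J := by
        rw [← hlast]
        exact (List.getLast_cons (by simp)).symm
      have hJB : pnLe J B := by
        have := chain_last_le (B :: t') (by simp) hch'
        rwa [hlast'] at this
      have ihe := ih B hJB (by simp) rfl hlast' hch'
      rw [List.map_cons, List.prod_cons, ← ihe]
      exact piPair_cover_step hcov hJB
end

section
/- Let R be a field and n ≥ 1, and let A := MonoidAlgebra R NDPF_{n+1}. Then the family (f(J))_{J ⊆ {1,…,n}} is a complete system of pairwise orthogonal idempotents of A: f(J)·f(J) = f(J) for every J, f(J)·f(K) = 0 for all J ≠ K, and Σ_{J ⊆ {1,…,n}} f(J) = 1. -/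
set_option linter.unreachableTactic false
set_option linter.unusedTactic false

namespace NDPFIdem

variable (R : Type) [Field R]

lemma ndpf_mul_val {n : ℕ} (f g : NDPF n) (x : Fin n) : (f * g).1 x = f.1 (g.1 x) := rfl

lemma ndpf_ext {n : ℕ} {f g : NDPF n} (h : ∀ x, ((f.1 x : ℕ)) = ((g.1 x : ℕ))) : f = g := by
  apply Subtype.ext; funext x; exact Fin.ext (h x)

lemma ndpfPi_val {n : ℕ} (j : Fin n) (x : Fin (n+1)) :
    ((ndpfPi j).1 x : ℕ) = if (x : ℕ) = (j : ℕ) + 1 then (j : ℕ) else (x : ℕ) := by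
  simp only [ndpfPi]
  split <;> rfl

lemma pi_idem {n : ℕ} (j : Fin n) : ndpfPi j * ndpfPi j = ndpfPi j := by
  apply ndpf_ext; intro x
  simp only [ndpf_mul_val, ndpfPi_val]
  split_ifs <;> omega

lemma pi_comm {n : ℕ} (i j : Fin n) (h : (i : ℕ) + 2 ≤ (j : ℕ)) :
    ndpfPi i * ndpfPi j = ndpfPi j * ndpfPi i := by
  apply ndpf_ext; intro x
  simp only [ndpf_mul_val, ndpfPi_val]
  split_ifs <;> omega

lemma pi_braid1 {n : ℕ} (i j : Fin n) (h : (j : ℕ) = (i : ℕ) + 1) :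
    ndpfPi i * ndpfPi j * ndpfPi i = ndpfPi i * ndpfPi j := by
  apply ndpf_ext; intro x
  simp only [ndpf_mul_val, ndpfPi_val]
  split_ifs <;> omega

lemma pi_braid2 {n : ℕ} (i j : Fin n) (h : (j : ℕ) = (i : ℕ) + 1) :
    ndpfPi j * ndpfPi i * ndpfPi j = ndpfPi i * ndpfPi j := by
  apply ndpf_ext; intro x
  simp only [ndpf_mul_val, ndpfPi_val]
  split_ifs <;> omega



/-- The image `p_j` of the generator `π_j` (for `1 ≤ j ≤ n`) in the monoid algebra
`A = MonoidAlgebra R NDPF_{n+1}` (junk value `1` outside this range). -/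
noncomputable def pgen (n : ℕ) (j : ℕ) : MonoidAlgebra R (NDPF (n + 1)) :=
  if h : 1 ≤ j ∧ j ≤ n then
    MonoidAlgebra.of R (NDPF (n + 1)) (ndpfPi (⟨j - 1, by omega⟩ : Fin n)) else 1

/-- The elements `y(m,k) ∈ A` defined recursively: `y(1,1) = p₁`; `y(m,k) = 0` for
`k > m`; `y(m,1) = y(m−1,1) − p_m·y(m−1,1) + p_m`; and
`y(m,k) = y(m−1,k) − p_m·y(m−1,k) + y(m−1,k−1)·p_m` for `2 ≤ k ≤ m`. -/
noncomputable def yel (n : ℕ) : ℕ → ℕ → MonoidAlgebra R (NDPF (n + 1))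
  | 0, _ => 0
  | 1, k => if k = 1 then pgen R n 1 else 0
  | m + 2, k =>
      if k = 1 then
        yel n (m + 1) 1 - pgen R n (m + 2) * yel n (m + 1) 1 + pgen R n (m + 2)
      else if 2 ≤ k ∧ k ≤ m + 2 then
        yel n (m + 1) k - pgen R n (m + 2) * yel n (m + 1) k
          + yel n (m + 1) (k - 1) * pgen R n (m + 2)
      else 0

/-- The central elements `z(k) ∈ A`: `z(0) = 1 − y(n,1)` and
`z(k) = y(n,k) − y(n,k+1)` for `1 ≤ k ≤ n`. -/
noncomputable def zel (n : ℕ) (k : ℕ) : MonoidAlgebra R (NDPF (n + 1)) :=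
  if k = 0 then 1 - yel R n n 1 else yel R n n k - yel R n n (k + 1)

/-- The elements `g(m,J) ∈ A` for `∅ ≠ J ⊆ {1,…,m}`, defined recursively:
`g(1,{1}) = p₁`; `g(m,J) = g(m−1,J) − p_m·g(m−1,J)` if `m ∉ J`; `g(m,{m}) = p_m`;
and `g(m,J) = g(m−1, J \ {m})·p_m` if `m ∈ J ≠ {m}` (junk values otherwise). -/
noncomputable def gel (n : ℕ) : ℕ → Finset ℕ → MonoidAlgebra R (NDPF (n + 1))
  | 0, _ => 0
  | 1, J => if J = {1} then pgen R n 1 else 0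
  | m + 2, J =>
      if (m + 2) ∉ J then gel n (m + 1) J - pgen R n (m + 2) * gel n (m + 1) J
      else if J = {m + 2} then pgen R n (m + 2)
      else gel n (m + 1) (J.erase (m + 2)) * pgen R n (m + 2)

/-- The idempotents `f(J) ∈ A` for `J ⊆ {1,…,n}`: `f(∅) = z(0)` and
`f(J) = g(n,J)·z(|J|)` for `J ≠ ∅`. -/
noncomputable def fel (n : ℕ) (J : Finset ℕ) : MonoidAlgebra R (NDPF (n + 1)) :=
  if J = ∅ then zel R n 0 else gel R n n J * zel R n J.card


section AlgebraLemmas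

variable {n : ℕ}

lemma pgen_real {j : ℕ} (h1 : 1 ≤ j) (h2 : j ≤ n) :
    pgen R n j = MonoidAlgebra.of R (NDPF (n+1)) (ndpfPi (⟨j - 1, by omega⟩ : Fin n)) :=
  dif_pos ⟨h1, h2⟩

lemma pgen_junk {j : ℕ} (h : ¬ (1 ≤ j ∧ j ≤ n)) : pgen R n j = 1 := dif_neg h

lemma p_idem (j : ℕ) : pgen R n j * pgen R n j = pgen R n j := by
  by_cases h : 1 ≤ j ∧ j ≤ n
  · rw [pgen_real R h.1 h.2, ← map_mul, pi_idem]
  · rw [pgen_junk R h, one_mul]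

lemma p_comm {i j : ℕ} (h : i + 2 ≤ j) : pgen R n i * pgen R n j = pgen R n j * pgen R n i := by
  by_cases hi : 1 ≤ i ∧ i ≤ n
  · by_cases hj : 1 ≤ j ∧ j ≤ n
    · rw [pgen_real R hi.1 hi.2, pgen_real R hj.1 hj.2, ← map_mul, ← map_mul,
        pi_comm (⟨i-1, by omega⟩ : Fin n) (⟨j-1, by omega⟩ : Fin n) (by simp; omega)]
    · rw [pgen_junk R hj, one_mul, mul_one]
  · rw [pgen_junk R hi, one_mul, mul_one]

lemma p_braid1 (i : ℕ) :
    pgen R n i * pgen R n (i+1) * pgen R n i = pgen R n i * pgen R n (i+1) := by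
  by_cases hi : 1 ≤ i ∧ i + 1 ≤ n
  · rw [pgen_real R hi.1 (by omega), pgen_real R (by omega) hi.2]
    simp only [← map_mul]
    exact congrArg _ (pi_braid1 _ _ (by simp; omega))
  · by_cases hi1 : 1 ≤ i ∧ i ≤ n
    · have hj : pgen R n (i+1) = 1 := pgen_junk R (by omega)
      simp only [hj, mul_one]
      exact p_idem R _
    · have hj : pgen R n i = 1 := pgen_junk R hi1
      simp only [hj, one_mul, mul_one]

lemma p_braid2 (i : ℕ) :
    pgen R n (i+1) * pgen R n i * pgen R n (i+1) = pgen R n i * pgen R n (i+1) := by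
  by_cases hi : 1 ≤ i ∧ i + 1 ≤ n
  · rw [pgen_real R hi.1 (by omega), pgen_real R (by omega) hi.2]
    simp only [← map_mul]
    exact congrArg _ (pi_braid2 _ _ (by simp; omega))
  · by_cases hi1 : 1 ≤ i ∧ i ≤ n
    · have hj : pgen R n (i+1) = 1 := pgen_junk R (by omega)
      simp only [hj, mul_one, one_mul]
    · have hj : pgen R n i = 1 := pgen_junk R hi1
      simp only [hj, one_mul, mul_one]
      exact p_idem R _

/-- B2 : `(1 - p_{i+1}) * (p_i * p_{i+1}) = 0`. -/
lemma B2 (i : ℕ) : (1 - pgen R n (i+1)) * (pgen R n i * pgen R n (i+1)) = 0 := by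
  rw [sub_mul, one_mul, ← mul_assoc, p_braid2, sub_self]

/-- B1 : `(1 - p_{i+1}) * ((1 - p_i) * p_{i+1}) = 0`. -/
lemma B1 (i : ℕ) : (1 - pgen R n (i+1)) * ((1 - pgen R n i) * pgen R n (i+1)) = 0 := by
  have h : (1 - pgen R n i) * pgen R n (i+1) = pgen R n (i+1) - pgen R n i * pgen R n (i+1) := by
    rw [sub_mul, one_mul]
  rw [h, mul_sub, B2, sub_zero, sub_mul, one_mul, p_idem, sub_self]

end AlgebraLemmas


section KeyRing

variable {A' : Type} [Ring A']

lemma keyA (a b g : A') (hB1 : (1 - a) * ((1 - b) * a) = 0) (cg : Commute a g) :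
    (1 - a) * (((1 - b) * g) * a) = 0 := by
  have cg' : Commute (1 - a) g := (Commute.one_left g).sub_left cg
  have e : ((1 - b) * g) * a = ((1 - b) * a) * g := by
    rw [mul_assoc, ← cg.eq, ← mul_assoc]
  rw [e, ← mul_assoc, hB1, zero_mul]

lemma keyB (a b g : A') (hB2 : (1 - a) * (b * a) = 0) (cg : Commute a g) :
    (1 - a) * ((g * b) * a) = 0 := by
  have cg' : Commute (1 - a) g := (Commute.one_left g).sub_left cg
  rw [mul_assoc, ← mul_assoc, cg'.eq, mul_assoc, hB2, mul_zero]

lemma key2 (p x y : A') (hx : (1 - p) * (x * p) = 0) (hy : (1 - p) * (y * p) = 0) :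
    (1 - p) * ((x * y) * p) = 0 := by
  have h1 : y * p = p * (y * p) := by
    have h := hy; rw [sub_mul, one_mul, sub_eq_zero] at h; exact h
  calc (1 - p) * ((x * y) * p) = (1 - p) * (x * (y * p)) := by rw [mul_assoc]
    _ = (1 - p) * (x * (p * (y * p))) := by rw [← h1]
    _ = ((1 - p) * (x * p)) * (y * p) := by rw [← mul_assoc x p, ← mul_assoc]
    _ = 0 := by rw [hx, zero_mul]

end KeyRing

section YLemmas

variable {n : ℕ}

lemma yel_zero_left (k : ℕ) : yel R n 0 k = 0 := rfl

lemma yel_one (k : ℕ) : yel R n 1 k = if k = 1 then pgen R n 1 else 0 := rfl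

lemma yel_eq_zero : ∀ m k, m < k → yel R n m k = 0
  | 0, k, _ => rfl
  | 1, k, h => by rw [yel_one, if_neg (by omega)]
  | (m+2), k, h => by
      show (if k = 1 then _ else if 2 ≤ k ∧ k ≤ m + 2 then _ else 0) = 0
      rw [if_neg (by omega), if_neg (by omega)]

/-- wrapper with `Y m 0 = 1`. -/
noncomputable def Yw (n m k : ℕ) : MonoidAlgebra R (NDPF (n+1)) :=
  if k = 0 then 1 else yel R n m k

lemma Yw_zero (m : ℕ) : Yw R n m 0 = 1 := rfl

lemma Yw_pos (m k : ℕ) (h : k ≠ 0) : Yw R n m k = yel R n m k := if_neg h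

lemma Yw_eq_zero (m k : ℕ) (h1 : m < k) : Yw R n m k = 0 := by
  rw [Yw_pos _ _ _ (by omega), yel_eq_zero _ _ _ h1]

/-- Uniform recursion with junk-friendly `k-1` (valid for all `k`, including `k = 0`). -/
lemma Yw_succ (m k : ℕ) :
    Yw R n (m+1) k
      = (1 - pgen R n (m+1)) * Yw R n m k + Yw R n m (k-1) * pgen R n (m+1) := by
  rcases Nat.eq_zero_or_pos k with hk | hk
  · subst hk
    rw [show (0:ℕ) - 1 = 0 from rfl, Yw_zero, Yw_zero]
    noncomm_ring
  · obtain ⟨k', rfl⟩ : ∃ k', k = k' + 1 := ⟨k - 1, by omega⟩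
    rcases Nat.eq_zero_or_pos k' with hk' | hk'
    · subst hk'
      rw [Yw_pos _ _ _ (by omega)]
      cases m with
      | zero =>
        rw [yel_one, if_pos rfl, Yw_pos _ _ _ (by omega), yel_zero_left,
          Nat.add_sub_cancel, Yw_zero, mul_zero, zero_add, one_mul]
      | succ m' =>
        show yel R n (m'+2) 1 = _
        rw [yel]
        rw [if_pos rfl, Nat.add_sub_cancel, Yw_zero, Yw_pos _ _ _ (by omega), one_mul]
        noncomm_ring
    · rw [Yw_pos _ _ _ (by omega), Nat.add_sub_cancel,
        Yw_pos _ _ _ (by omega), Yw_pos _ _ _ (by omega)]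
      cases m with
      | zero =>
        rw [yel_one, if_neg (by omega), yel_zero_left, yel_zero_left, mul_zero, zero_mul,
          add_zero]
      | succ m' =>
        show yel R n (m'+2) (k'+1) = _
        rw [yel]
        rw [if_neg (by omega)]
        by_cases hle : k' + 1 ≤ m' + 2
        · rw [if_pos ⟨by omega, hle⟩, Nat.add_sub_cancel]
          noncomm_ring
        · rw [if_neg (by omega), yel_eq_zero _ (m'+1) (k'+1) (by omega),
            yel_eq_zero _ (m'+1) k' (by omega), mul_zero, zero_mul, add_zero]

lemma commute_yel (x : MonoidAlgebra R (NDPF (n+1))) :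
    ∀ m k, (∀ j, 1 ≤ j → j ≤ m → Commute x (pgen R n j)) → Commute x (yel R n m k)
  | 0, k, _ => by rw [yel_zero_left]; exact Commute.zero_right x
  | 1, k, h => by
      rw [yel_one]
      split
      · exact h 1 le_rfl le_rfl
      · exact Commute.zero_right x
  | (m+2), k, h => by
      have H : ∀ k', Commute x (yel R n (m+1) k') :=
        fun k' => commute_yel x (m+1) k' (fun j hj hj2 => h j hj (by omega))
      have hp : Commute x (pgen R n (m+2)) := h (m+2) (by omega) le_rfl
      rw [yel]
      split
      · exact ((H 1).sub_right (hp.mul_right (H 1))).add_right hp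
      · split
        · exact ((H k).sub_right (hp.mul_right (H k))).add_right ((H (k-1)).mul_right hp)
        · exact Commute.zero_right x

lemma commute_Yw (x : MonoidAlgebra R (NDPF (n+1))) (m k : ℕ)
    (h : ∀ j, 1 ≤ j → j ≤ m → Commute x (pgen R n j)) : Commute x (Yw R n m k) := by
  rcases Nat.eq_zero_or_pos k with hk | hk
  · subst hk; rw [Yw_zero]; exact Commute.one_right x
  · rw [Yw_pos _ _ _ (by omega)]; exact commute_yel R x m k h

lemma p_comm_Yw (j m k : ℕ) (h : m + 2 ≤ j) : Commute (pgen R n j) (Yw R n m k) :=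
  commute_Yw R _ m k (fun i _ h2 => (p_comm R (by omega : i + 2 ≤ j)).symm)

/-- D1 : `(1 - p_{m+1}) (Y_{m,k} p_{m+1}) = 0`. -/
lemma D1 (m k : ℕ) : (1 - pgen R n (m+1)) * (Yw R n m k * pgen R n (m+1)) = 0 := by
  induction m with
  | zero =>
    rcases Nat.eq_zero_or_pos k with hk | hk
    · subst hk
      rw [Yw_zero, one_mul, sub_mul, one_mul, p_idem, sub_self]
    · rw [Yw_eq_zero _ _ _ (by omega), zero_mul, mul_zero]
  | succ m' _ =>
    rw [Yw_succ, add_mul, mul_add]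
    rw [keyA _ _ _ (B1 R (m'+1)) (p_comm_Yw R _ _ _ (by omega)),
      keyB _ _ _ (B2 R (m'+1)) (p_comm_Yw R _ _ _ (by omega)), add_zero]

lemma D1' (m k : ℕ) :
    pgen R n (m+1) * (Yw R n m k * pgen R n (m+1)) = Yw R n m k * pgen R n (m+1) := by
  have h := D1 R (n := n) m k
  rw [sub_mul, one_mul, sub_eq_zero] at h
  exact h.symm

end YLemmas


section KeyRing2

variable {A' : Type} [Ring A']

lemma tail2a {x y z : A'} (h : x * y = z) (w : A') : x * (y * w) = z * w := by
  rw [← mul_assoc, h]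

lemma tail2 {x y u v : A'} (h : x * y = u * v) (w : A') : x * (y * w) = u * (v * w) := by
  rw [← mul_assoc, h, mul_assoc]

lemma tail3 {x y z u v : A'} (h : x * (y * z) = u * v) (w : A') :
    x * (y * (z * w)) = u * (v * w) := by
  rw [← mul_assoc y z w, ← mul_assoc x (y*z) w, h, mul_assoc]

lemma tailq {x y z : A'} (h : x * (y * z) = y * z) (w : A') :
    x * (y * (z * w)) = y * (z * w) := by
  rw [← mul_assoc y z w, ← mul_assoc x (y*z) w, h, mul_assoc]

lemma absorb_of_qzero {p x : A'} (h : (1 - p) * (x * p) = 0) : p * (x * p) = x * p := by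
  rw [sub_mul, one_mul, sub_eq_zero] at h
  exact h.symm

/-- the central commutator-exchange identity. -/
lemma key3 (a b yk1 yk yk2 : A')
    (hbb : b * b = b) (hbab : b * (a * b) = b * a)
    (c2 : Commute a yk)
    (q1 : (1 - b) * (yk * b) = 0) :
    (a * b - b * a) * ((1 - b) * yk1 + yk * b)
      = ((1 - b) * yk + yk2 * b) * (a * b - b * a) := by
  have hq : b * (yk * b) = yk * b := absorb_of_qzero q1
  have c2' : a * yk = yk * a := c2.eq
  simp only [mul_add, add_mul, mul_sub, sub_mul, one_mul, mul_one, mul_assoc,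
    hbb, tail2a hbb, hbab, tail3 hbab, hq, tailq hq, c2', tail2 c2']
  abel

lemma key4 (a y1 y2 : A') (ha : a * a = a)
    (d1 : (1 - a) * (y1 * a) = 0) (d2 : (1 - a) * (y2 * a) = 0) :
    a * ((1 - a) * y1 + y2 * a) = ((1 - a) * y1 + y2 * a) * a := by
  have ad1 : a * (y1 * a) = y1 * a := absorb_of_qzero d1
  have ad2 : a * (y2 * a) = y2 * a := absorb_of_qzero d2
  simp only [mul_add, add_mul, mul_sub, sub_mul, one_mul, mul_one, mul_assoc,
    ha, tail2a ha, ad1, ad2, tailq ad1, tailq ad2]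
  abel

lemma key5 (a b y1 y2 : A') (cb1 : Commute b y1) (cb2 : Commute b y2)
    (hL : (a * b - b * a) * y1 = y2 * (a * b - b * a)) :
    b * ((1 - a) * y1 + y2 * a) = ((1 - a) * y1 + y2 * a) * b := by
  have cb1' : b * y1 = y1 * b := cb1.eq
  have cb2' : b * y2 = y2 * b := cb2.eq
  rw [← sub_eq_zero]
  have expand : b * ((1 - a) * y1 + y2 * a) - ((1 - a) * y1 + y2 * a) * b
      = (a * b - b * a) * y1 - y2 * (a * b - b * a) := by
    simp only [mul_add, add_mul, mul_sub, sub_mul, one_mul, mul_one, mul_assoc,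
      cb1', cb2', tail2 cb1', tail2 cb2']
    abel
  rw [expand, hL, sub_self]

end KeyRing2

section CentralLemmas

variable {n : ℕ}

/-- L3 : commutator exchange against `Y`. -/
lemma L3 (m k : ℕ) :
    (pgen R n (m+2) * pgen R n (m+1) - pgen R n (m+1) * pgen R n (m+2)) * Yw R n (m+1) k
      = Yw R n (m+1) (k-1)
          * (pgen R n (m+2) * pgen R n (m+1) - pgen R n (m+1) * pgen R n (m+2)) := by
  rcases Nat.eq_zero_or_pos k with hk | hk
  · subst hk
    rw [show (0:ℕ) - 1 = 0 from rfl, Yw_zero, one_mul, mul_one]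
  · obtain ⟨k', rfl⟩ : ∃ k', k = k' + 1 := ⟨k - 1, by omega⟩
    rw [Nat.add_sub_cancel, Yw_succ R m (k'+1), Yw_succ R m k']
    have hbab : pgen R n (m+1) * (pgen R n (m+2) * pgen R n (m+1))
        = pgen R n (m+1) * pgen R n (m+2) := by
      rw [← mul_assoc]; exact p_braid1 R (m+1)
    exact key3 _ _ _ _ _ (p_idem R (m+1)) hbab
      (p_comm_Yw R (m+2) m k' (by omega)) (D1 R m k')

/-- L2 : `p_j` commutes with `Y_{m,k}` for `j ≤ m`. -/
lemma L2 : ∀ m j, 1 ≤ j → j ≤ m → ∀ k, Commute (pgen R n j) (Yw R n m k) := by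
  intro m
  induction m with
  | zero => intro j h1 h2; omega
  | succ m ih =>
    intro j h1 h2 k
    rw [Yw_succ]
    by_cases hj : j = m + 1
    · subst hj
      exact key4 _ _ _ (p_idem R (m+1)) (D1 R m k) (D1 R m (k-1))
    · by_cases hj2 : j = m
      · obtain ⟨m', rfl⟩ : ∃ m', m = m' + 1 := ⟨m - 1, by omega⟩
        subst hj2
        refine key5 _ _ _ _ (ih _ h1 le_rfl k) (ih _ h1 le_rfl (k-1)) ?_
        rcases Nat.eq_zero_or_pos k with hk | hk
        · subst hk
          rw [show (0:ℕ) - 1 = 0 from rfl, Yw_zero, one_mul, mul_one]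
        · obtain ⟨k', rfl⟩ : ∃ k', k = k' + 1 := ⟨k - 1, by omega⟩
          rw [Nat.add_sub_cancel]
          exact L3 R m' (k'+1)
      · have hle : j + 2 ≤ m + 1 := by omega
        have hpa : Commute (pgen R n j) (pgen R n (m+1)) := p_comm R hle
        exact (((Commute.one_right _).sub_right hpa).mul_right (ih j h1 (by omega) k)).add_right
          ((ih j h1 (by omega) (k-1)).mul_right hpa)

end CentralLemmas


section AbsorbLemmas

variable {A' : Type} [Ring A']

lemma key6 (P yk1 yk yl1 yl w : A') (hPP : P * P = P)
    (dk1 : (1 - P) * (yk1 * P) = 0) (dl : (1 - P) * (yl * P) = 0)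
    (dw : (1 - P) * (w * P) = 0)
    (h1 : yk1 * yl1 = yl1) (hw : yk1 * yl = w) (h4 : yk * yl = yl) :
    ((1 - P) * yk1 + yk * P) * ((1 - P) * yl1 + yl * P) = (1 - P) * yl1 + yl * P := by
  have ak1 : P * (yk1 * P) = yk1 * P := absorb_of_qzero dk1
  have al : P * (yl * P) = yl * P := absorb_of_qzero dl
  have aw : P * (w * P) = w * P := absorb_of_qzero dw
  simp only [mul_add, add_mul, mul_sub, sub_mul, one_mul, mul_one, mul_assoc,
    hPP, tail2a hPP, h1, tail2a h1, hw, tail2a hw, h4, tail2a h4,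
    ak1, tailq ak1, al, tailq al, aw, tailq aw]
  abel

lemma key6r (P yk1 yk yl1 yl : A') (hPP : P * P = P)
    (dl1 : (1 - P) * (yl1 * P) = 0) (dk : (1 - P) * (yk * P) = 0)
    (h1 : yl1 * yk1 = yl1) (h2 : yl1 * yk = yl1) (h3 : yl * yk = yl) :
    ((1 - P) * yl1 + yl * P) * ((1 - P) * yk1 + yk * P) = (1 - P) * yl1 + yl * P := by
  have al1 : P * (yl1 * P) = yl1 * P := absorb_of_qzero dl1
  have ak : P * (yk * P) = yk * P := absorb_of_qzero dk
  simp only [mul_add, add_mul, mul_sub, sub_mul, one_mul, mul_one, mul_assoc,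
    hPP, tail2a hPP, h1, tail2a h1, h2, tail2a h2, h3, tail2a h3,
    al1, tailq al1, ak, tailq ak]
  abel

end AbsorbLemmas

section YAbsorb

variable {n : ℕ}

lemma Y1 : ∀ m k l, k ≤ l →
    Yw R n m k * Yw R n m l = Yw R n m l ∧ Yw R n m l * Yw R n m k = Yw R n m l := by
  intro m
  induction m with
  | zero =>
    intro k l hkl
    rcases Nat.eq_zero_or_pos k with hk | hk
    · subst hk; rw [Yw_zero, one_mul, mul_one]; exact ⟨rfl, rfl⟩
    · rw [Yw_eq_zero R 0 k (by omega), Yw_eq_zero R 0 l (by omega), mul_zero]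
      exact ⟨rfl, rfl⟩
  | succ m ih =>
    intro k l hkl
    rcases Nat.eq_zero_or_pos k with hk | hk
    · subst hk; rw [Yw_zero, one_mul, mul_one]; exact ⟨rfl, rfl⟩
    · obtain ⟨k', rfl⟩ : ∃ k', k = k' + 1 := ⟨k - 1, by omega⟩
      obtain ⟨l', rfl⟩ : ∃ l', l = l' + 1 := ⟨l - 1, by omega⟩
      rw [Yw_succ R m (k'+1), Yw_succ R m (l'+1), Nat.add_sub_cancel, Nat.add_sub_cancel]
      constructor
      · by_cases hkl' : k' = l'
        · subst hkl'
          exact key6 _ _ _ _ _ _ (p_idem R (m+1)) (D1 R m (k'+1)) (D1 R m k')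
            (D1 R m (k'+1)) (ih (k'+1) (k'+1) le_rfl).1 (ih k' (k'+1) (by omega)).2
            (ih k' k' le_rfl).1
        · exact key6 _ _ _ _ _ _ (p_idem R (m+1)) (D1 R m (k'+1)) (D1 R m l')
            (D1 R m l') (ih (k'+1) (l'+1) (by omega)).1 (ih (k'+1) l' (by omega)).1
            (ih k' l' (by omega)).1
      · exact key6r _ _ _ _ _ (p_idem R (m+1)) (D1 R m (l'+1)) (D1 R m k')
          (ih (k'+1) (l'+1) (by omega)).2 (ih k' (l'+1) (by omega)).2
          (ih k' l' (by omega)).2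

end YAbsorb


section GLemmas

variable {n : ℕ}

lemma gel_zero (J : Finset ℕ) : gel R n 0 J = 0 := rfl

lemma gel_one (J : Finset ℕ) : gel R n 1 J = if J = {1} then pgen R n 1 else 0 := rfl

lemma gel_not {m : ℕ} {J : Finset ℕ} (h : (m+2) ∉ J) :
    gel R n (m+2) J = (1 - pgen R n (m+2)) * gel R n (m+1) J := by
  rw [gel, if_pos h, sub_mul, one_mul]

lemma gel_singleton {m : ℕ} {J : Finset ℕ} (h : J = {m+2}) :
    gel R n (m+2) J = pgen R n (m+2) := by
  rw [gel, if_neg (by simp [h]), if_pos h]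

lemma gel_mem {m : ℕ} {J : Finset ℕ} (h : (m+2) ∈ J) (h2 : J ≠ {m+2}) :
    gel R n (m+2) J = gel R n (m+1) (J.erase (m+2)) * pgen R n (m+2) := by
  rw [gel, if_neg (by simp [h]), if_neg h2]

lemma commute_gel (x : MonoidAlgebra R (NDPF (n+1))) :
    ∀ m J, (∀ j, 1 ≤ j → j ≤ m → Commute x (pgen R n j)) → Commute x (gel R n m J)
  | 0, J, _ => by rw [gel_zero]; exact Commute.zero_right x
  | 1, J, h => by
      rw [gel_one]
      split
      · exact h 1 le_rfl le_rfl
      · exact Commute.zero_right x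
  | (m+2), J, h => by
      have H : ∀ J', Commute x (gel R n (m+1) J') :=
        fun J' => commute_gel x (m+1) J' (fun j hj hj2 => h j hj (by omega))
      have hp : Commute x (pgen R n (m+2)) := h (m+2) (by omega) le_rfl
      rw [gel]
      split
      · exact (H J).sub_right (hp.mul_right (H J))
      · split
        · exact hp
        · exact (H _).mul_right hp

lemma p_comm_gel (j m : ℕ) (J : Finset ℕ) (h : m + 2 ≤ j) :
    Commute (pgen R n j) (gel R n m J) :=
  commute_gel R _ m J (fun i _ h2 => (p_comm R (by omega : i + 2 ≤ j)).symm)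

/-- D2 : `(1 - p_{m+1}) (g_{m,J} p_{m+1}) = 0`. -/
lemma D2 (m : ℕ) (J : Finset ℕ) :
    (1 - pgen R n (m+1)) * (gel R n m J * pgen R n (m+1)) = 0 := by
  match m with
  | 0 => rw [gel_zero, zero_mul, mul_zero]
  | 1 =>
    rw [gel_one]
    split
    · exact B2 R 1
    · rw [zero_mul, mul_zero]
  | (m+2) =>
    by_cases hm : (m+2) ∉ J
    · rw [gel_not R hm]
      exact keyA _ _ _ (B1 R (m+2)) (p_comm_gel R _ _ _ (by omega))
    · by_cases hs : J = {m+2}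
      · rw [gel_singleton R hs]
        exact B2 R (m+2)
      · rw [gel_mem R (not_not.mp hm) hs]
        exact keyB _ _ _ (B2 R (m+2)) (p_comm_gel R _ _ _ (by omega))

lemma D2' (m : ℕ) (J : Finset ℕ) :
    pgen R n (m+1) * (gel R n m J * pgen R n (m+1)) = gel R n m J * pgen R n (m+1) :=
  absorb_of_qzero (D2 R m J)

lemma pq_zero (j : ℕ) : pgen R n j * (1 - pgen R n j) = 0 := by
  rw [mul_sub, mul_one, p_idem, sub_self]

/-- G1 : same-size products of the `g` idempotents. -/
lemma G1 : ∀ m (J K : Finset ℕ), J.Nonempty → K.Nonempty →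
    J ⊆ Finset.Icc 1 m → K ⊆ Finset.Icc 1 m → J.card = K.card →
    gel R n m J * gel R n m K = if J = K then gel R n m J else 0 := by
  intro m
  induction m with
  | zero =>
    intro J K hJ _ hJs _ _
    rw [Finset.Icc_eq_empty (by omega), Finset.subset_empty] at hJs
    exact absurd hJs hJ.ne_empty
  | succ m ih =>
    intro J K hJ hK hJs hKs hcard
    match m with
    | 0 =>
      have hJ1 : J = {1} := by
        rcases Finset.subset_singleton_iff.mp (by simpa using hJs) with h | h
        · exact absurd h hJ.ne_empty
        · exact h
      have hK1 : K = {1} := by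
        rcases Finset.subset_singleton_iff.mp (by simpa using hKs) with h | h
        · exact absurd h hK.ne_empty
        · exact h
      rw [hJ1, hK1, if_pos rfl, gel_one, if_pos rfl]
      exact p_idem R 1
    | m' + 1 =>
      by_cases hJm : (m' + 2) ∈ J <;> by_cases hKm : (m' + 2) ∈ K
      · -- both contain (m' + 2)
        by_cases hJs1 : J = {(m' + 2)}
        · by_cases hKs1 : K = {(m' + 2)}
          · rw [if_pos (hJs1.trans hKs1.symm), gel_singleton R hJs1, gel_singleton R hKs1]
            exact p_idem R (m' + 2)
          · -- K ≠ {(m' + 2)} but card K = card J = 1 and (m' + 2) ∈ K : contradiction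
            exfalso
            have hc : K.card = 1 := by rw [← hcard, hJs1, Finset.card_singleton]
            obtain ⟨a, ha⟩ := Finset.card_eq_one.mp hc
            rw [ha] at hKm
            rw [ha, Finset.mem_singleton.mp hKm] at hKs1
            exact hKs1 rfl
        · by_cases hKs1 : K = {(m' + 2)}
          · exfalso
            have hc : J.card = 1 := by rw [hcard, hKs1, Finset.card_singleton]
            obtain ⟨a, ha⟩ := Finset.card_eq_one.mp hc
            rw [ha] at hJm
            rw [ha, Finset.mem_singleton.mp hJm] at hJs1
            exact hJs1 rfl
          · rw [gel_mem R hJm hJs1, gel_mem R hKm hKs1]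
            have step : (gel R n (m'+1) (J.erase (m' + 2)) * pgen R n (m' + 2))
                * (gel R n (m'+1) (K.erase (m' + 2)) * pgen R n (m' + 2))
                = (gel R n (m'+1) (J.erase (m' + 2)) * gel R n (m'+1) (K.erase (m' + 2))) * pgen R n (m' + 2) := by
              rw [mul_assoc, D2' R (m'+1) (K.erase (m' + 2)), ← mul_assoc]
            have hJc : J.card ≠ 1 := by
              intro h
              obtain ⟨a, ha⟩ := Finset.card_eq_one.mp h
              rw [ha] at hJm
              rw [ha, Finset.mem_singleton.mp hJm] at hJs1
              exact hJs1 rfl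
            have hKc : K.card ≠ 1 := by rw [← hcard]; exact hJc
            have hJe : (J.erase (m' + 2)).Nonempty := by
              rw [← Finset.card_pos, Finset.card_erase_of_mem hJm]
              have := Finset.card_pos.mpr hJ
              omega
            have hKe : (K.erase (m' + 2)).Nonempty := by
              rw [← Finset.card_pos, Finset.card_erase_of_mem hKm]
              have := Finset.card_pos.mpr hK
              omega
            have hJes : J.erase (m' + 2) ⊆ Finset.Icc 1 (m'+1) := by
              intro x hx
              have hx1 := Finset.mem_of_mem_erase hx
              have hx2 := Finset.ne_of_mem_erase hx
              have := hJs hx1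
              rw [Finset.mem_Icc] at this ⊢
              omega
            have hKes : K.erase (m' + 2) ⊆ Finset.Icc 1 (m'+1) := by
              intro x hx
              have hx1 := Finset.mem_of_mem_erase hx
              have hx2 := Finset.ne_of_mem_erase hx
              have := hKs hx1
              rw [Finset.mem_Icc] at this ⊢
              omega
            have hce : (J.erase (m' + 2)).card = (K.erase (m' + 2)).card := by
              rw [Finset.card_erase_of_mem hJm, Finset.card_erase_of_mem hKm, hcard]
            rw [step, ih (J.erase (m' + 2)) (K.erase (m' + 2)) hJe hKe hJes hKes hce]
            by_cases hJK : J = K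
            · rw [if_pos (show J.erase (m' + 2) = K.erase (m' + 2) by rw [hJK]), if_pos hJK,
                hJK]
            · have : J.erase (m' + 2) ≠ K.erase (m' + 2) := by
                intro h
                apply hJK
                rw [← Finset.insert_erase hJm, ← Finset.insert_erase hKm, h]
              rw [if_neg this, if_neg hJK, zero_mul]
      · -- (m' + 2) ∈ J, (m' + 2) ∉ K
        have hne : J ≠ K := by intro h; rw [h] at hJm; exact hKm hJm
        rw [if_neg hne, gel_not R hKm]
        by_cases hJs1 : J = {(m' + 2)}
        · rw [gel_singleton R hJs1, ← mul_assoc, pq_zero, zero_mul]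
        · rw [gel_mem R hJm hJs1, mul_assoc, ← mul_assoc (pgen R n (m' + 2)), pq_zero, zero_mul,
            mul_zero]
      · -- (m' + 2) ∉ J, (m' + 2) ∈ K
        have hne : J ≠ K := by intro h; rw [h] at hJm; exact hJm hKm
        rw [if_neg hne, gel_not R hJm]
        by_cases hKs1 : K = {(m' + 2)}
        · rw [gel_singleton R hKs1, mul_assoc]
          exact D2 R (m'+1) J
        · rw [gel_mem R hKm hKs1, mul_assoc, ← mul_assoc (gel R n (m'+1) J)]
          exact key2 _ _ _ (D2 R (m'+1) J) (D2 R (m'+1) (K.erase (m' + 2)))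
      · -- both avoid (m' + 2)
        rw [gel_not R hJm, gel_not R hKm]
        have e : ((1 - pgen R n (m' + 2)) * gel R n (m'+1) J) * ((1 - pgen R n (m' + 2)) * gel R n (m'+1) K)
            = (1 - pgen R n (m' + 2)) * (gel R n (m'+1) J * gel R n (m'+1) K)
              - ((1 - pgen R n (m' + 2)) * (gel R n (m'+1) J * pgen R n (m' + 2))) * gel R n (m'+1) K := by
          simp only [mul_add, add_mul, mul_sub, sub_mul, one_mul, mul_one, mul_assoc]
          try abel
        have hJs' : J ⊆ Finset.Icc 1 (m'+1) := by
          intro x hx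
          have := hJs hx
          rw [Finset.mem_Icc] at this ⊢
          refine ⟨this.1, ?_⟩
          rcases Nat.lt_or_ge x (m' + 2) with h | h
          · omega
          · exfalso; have : x = (m' + 2) := by omega
            rw [← this] at hJm; exact hJm hx
        have hKs' : K ⊆ Finset.Icc 1 (m'+1) := by
          intro x hx
          have := hKs hx
          rw [Finset.mem_Icc] at this ⊢
          refine ⟨this.1, ?_⟩
          rcases Nat.lt_or_ge x (m' + 2) with h | h
          · omega
          · exfalso; have : x = (m' + 2) := by omega
            rw [← this] at hKm; exact hKm hx
        rw [e, D2 R (m'+1) J, zero_mul, sub_zero, ih J K hJ hK hJs' hKs' hcard]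
        by_cases hJK : J = K
        · rw [if_pos hJK, hJK, if_pos rfl]
        · rw [if_neg hJK, if_neg hJK, mul_zero]

end GLemmas


section GSum

variable {n : ℕ}

lemma gsum : ∀ m k, ∑ J ∈ (Finset.Icc 1 m).powersetCard (k+1), gel R n m J
    = Yw R n m (k+1) := by
  intro m
  induction m with
  | zero =>
    intro k
    rw [Finset.Icc_eq_empty (by omega),
      Finset.powersetCard_eq_empty.mpr (by simp), Finset.sum_empty,
      Yw_eq_zero R 0 (k+1) (by omega)]
  | succ m ih =>
    intro k
    have hicc : Finset.Icc 1 (m+1) = insert (m+1) (Finset.Icc 1 m) := by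
      ext x; simp only [Finset.mem_Icc, Finset.mem_insert]; omega
    have hnot : (m+1) ∉ Finset.Icc 1 m := by simp [Finset.mem_Icc]
    have hdisj : Disjoint ((Finset.Icc 1 m).powersetCard (k+1))
        (((Finset.Icc 1 m).powersetCard k).image (insert (m+1))) := by
      rw [Finset.disjoint_left]
      intro J hJ hJ2
      rw [Finset.mem_powersetCard] at hJ
      obtain ⟨J', hJ', rfl⟩ := Finset.mem_image.mp hJ2
      exact hnot (hJ.1 (Finset.mem_insert_self _ _))
    have himg : ∑ J ∈ ((Finset.Icc 1 m).powersetCard k).image (insert (m+1)),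
        gel R n (m+1) J
        = ∑ J' ∈ (Finset.Icc 1 m).powersetCard k, gel R n (m+1) (insert (m+1) J') := by
      refine Finset.sum_image ?_
      intro x hx y hy hxy
      rw [Finset.mem_coe, Finset.mem_powersetCard] at hx hy
      have hxm : (m+1) ∉ x := fun h => hnot (hx.1 h)
      have hym : (m+1) ∉ y := fun h => hnot (hy.1 h)
      rw [← Finset.erase_insert hxm, ← Finset.erase_insert hym, hxy]
    rw [hicc, Finset.powersetCard_succ_insert hnot, Finset.sum_union hdisj, himg]
    match m with
    | 0 =>
      have h0 : ((Finset.Icc 1 0) : Finset ℕ) = ∅ := Finset.Icc_eq_empty (by omega)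
      rw [h0]
      match k with
      | 0 =>
        rw [Finset.powersetCard_eq_empty.mpr (by simp), Finset.sum_empty,
          Finset.powersetCard_zero, Finset.sum_singleton, zero_add,
          Yw_pos R 1 1 (by omega), yel_one, if_pos rfl]
        have : (insert 1 ∅ : Finset ℕ) = {1} := rfl
        rw [this, gel_one, if_pos rfl]
      | k' + 1 =>
        rw [Finset.powersetCard_eq_empty.mpr (by simp),
          Finset.powersetCard_eq_empty.mpr (by simp), Finset.sum_empty, Finset.sum_empty,
          add_zero, Yw_eq_zero R 1 (k'+2) (by omega)]
    | m' + 1 =>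
      have e1 : ∑ J ∈ (Finset.Icc 1 (m'+1)).powersetCard (k+1), gel R n (m'+2) J
          = (1 - pgen R n (m'+2)) * Yw R n (m'+1) (k+1) := by
        rw [← ih k, Finset.mul_sum]
        refine Finset.sum_congr rfl ?_
        intro J hJ
        rw [Finset.mem_powersetCard] at hJ
        have : (m'+2) ∉ J := by
          intro h
          have := hJ.1 h
          rw [Finset.mem_Icc] at this
          omega
        exact gel_not R this
      rw [e1]
      match k with
      | 0 =>
        rw [Finset.powersetCard_zero, Finset.sum_singleton]
        have hins : (insert (m'+2) ∅ : Finset ℕ) = {m'+2} := rfl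
        rw [hins, gel_singleton R rfl, Yw_succ R (m'+1) 1,
          show (1:ℕ) - 1 = 0 from rfl, Yw_zero, one_mul]
      | k' + 1 =>
        have e2 : ∑ J' ∈ (Finset.Icc 1 (m'+1)).powersetCard (k'+1),
            gel R n (m'+2) (insert (m'+2) J')
            = Yw R n (m'+1) (k'+1) * pgen R n (m'+2) := by
          rw [← ih k', Finset.sum_mul]
          refine Finset.sum_congr rfl ?_
          intro J hJ
          rw [Finset.mem_powersetCard] at hJ
          have hmem : (m'+2) ∉ J := by
            intro h
            have := hJ.1 h
            rw [Finset.mem_Icc] at this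
            omega
          have hne : insert (m'+2) J ≠ {m'+2} := by
            intro h
            have hJne : J.Nonempty := by
              rw [← Finset.card_pos, hJ.2]; omega
            obtain ⟨x, hx⟩ := hJne
            have hx1 : x ∈ insert (m'+2) J := Finset.mem_insert_of_mem hx
            rw [h, Finset.mem_singleton] at hx1
            rw [hx1] at hx
            exact hmem hx
          rw [gel_mem R (Finset.mem_insert_self _ _) hne, Finset.erase_insert hmem]
        rw [e2, Yw_succ R (m'+1) (k'+2)]
        rfl

end GSum


section ZLemmas

variable {n : ℕ}

lemma zel_eq (k : ℕ) : zel R n k = Yw R n n k - Yw R n n (k+1) := by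
  unfold zel
  split
  · rename_i h; subst h
    rw [Yw_zero, Yw_pos R n 1 (by omega)]
  · rename_i h
    rw [Yw_pos R n k h, Yw_pos R n (k+1) (by omega)]

lemma Ymul (a b : ℕ) : Yw R n n a * Yw R n n b = Yw R n n (max a b) := by
  rcases le_total a b with h | h
  · rw [max_eq_right h]; exact (Y1 R n a b h).1
  · rw [max_eq_left h]; exact (Y1 R n b a h).2

lemma zel_mul_zel (k l : ℕ) : zel R n k * zel R n l = if k = l then zel R n k else 0 := by
  by_cases h : k = l
  · subst h
    rw [if_pos rfl, zel_eq, sub_mul, mul_sub, mul_sub,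
      (Y1 R n k k le_rfl).1, (Y1 R n k (k+1) (by omega)).1, (Y1 R n k (k+1) (by omega)).2,
      (Y1 R n (k+1) (k+1) le_rfl).1]
    abel
  · rw [if_neg h]
    rcases Nat.lt_or_ge k l with hlt | hge
    · rw [zel_eq, zel_eq, sub_mul, mul_sub, mul_sub,
        (Y1 R n k l (by omega)).1, (Y1 R n k (l+1) (by omega)).1,
        (Y1 R n (k+1) l (by omega)).1, (Y1 R n (k+1) (l+1) (by omega)).1]
      abel
    · rw [zel_eq, zel_eq, sub_mul, mul_sub, mul_sub,
        (Y1 R n l k (by omega)).2, (Y1 R n (l+1) k (by omega)).2,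
        (Y1 R n l (k+1) (by omega)).2, (Y1 R n (l+1) (k+1) (by omega)).2]
      abel

lemma fel_empty : fel R n ∅ = zel R n 0 := by simp [fel]

lemma fel_ne {J : Finset ℕ} (h : J ≠ ∅) : fel R n J = gel R n n J * zel R n J.card := by
  simp [fel, h]

lemma zel_commute_pgen (k j : ℕ) (h1 : 1 ≤ j) (h2 : j ≤ n) :
    Commute (zel R n k) (pgen R n j) := by
  rw [zel_eq]
  exact (L2 R n j h1 h2 k).symm.sub_left (L2 R n j h1 h2 (k+1)).symm

lemma zel_commute_gel (k : ℕ) (J : Finset ℕ) : Commute (zel R n k) (gel R n n J) :=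
  commute_gel R _ n J (fun j hj1 hj2 => zel_commute_pgen R k j hj1 hj2)

lemma Yw_mul_zel (k : ℕ) : Yw R n n (k+1) * zel R n (k+1) = zel R n (k+1) := by
  rw [zel_eq, mul_sub, (Y1 R n (k+1) (k+1) le_rfl).1, (Y1 R n (k+1) (k+2) (by omega)).1]

end ZLemmas

/-- For a field `R` and `n ≥ 1`, the family `(f(J))_{J ⊆ {1,…,n}}`
is a complete system of pairwise orthogonal idempotents of
`A = MonoidAlgebra R NDPF_{n+1}`. -/
theorem fel_complete_orthogonal_idempotents (n : ℕ) (hn : 1 ≤ n) :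
    (∀ J ⊆ Finset.Icc 1 n, fel R n J * fel R n J = fel R n J) ∧
    (∀ J K : Finset ℕ, J ⊆ Finset.Icc 1 n → K ⊆ Finset.Icc 1 n → J ≠ K →
      fel R n J * fel R n K = 0) ∧
    (∑ J ∈ (Finset.Icc 1 n).powerset, fel R n J) = 1 := by
  refine ⟨?_, ?_, ?_⟩
  · -- idempotency
    intro J hJ
    by_cases hJe : J = ∅
    · subst hJe
      rw [fel_empty, zel_mul_zel, if_pos rfl]
    · rw [fel_ne R hJe]
      have hJne : J.Nonempty := Finset.nonempty_iff_ne_empty.mpr hJe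
      have hc : Commute (zel R n J.card) (gel R n n J) := zel_commute_gel R _ J
      rw [hc.mul_mul_mul_comm, G1 R n J J hJne hJne hJ hJ rfl, if_pos rfl,
        zel_mul_zel, if_pos rfl]
  · -- orthogonality
    intro J K hJ hK hne
    by_cases hJe : J = ∅
    · subst hJe
      have hKe : K ≠ ∅ := fun h => hne h.symm
      have hK0 : K.card ≠ 0 := by rwa [ne_eq, Finset.card_eq_zero]
      rw [fel_empty, fel_ne R hKe]
      have hc : Commute (zel R n 0) (gel R n n K) := zel_commute_gel R 0 K
      rw [← mul_assoc, hc.eq, mul_assoc, zel_mul_zel, if_neg (fun h => hK0 h.symm), mul_zero]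
    · by_cases hKe : K = ∅
      · subst hKe
        have hJ0 : J.card ≠ 0 := by rwa [ne_eq, Finset.card_eq_zero]
        rw [fel_empty, fel_ne R hJe, mul_assoc, zel_mul_zel, if_neg hJ0, mul_zero]
      · rw [fel_ne R hJe, fel_ne R hKe]
        have hJne : J.Nonempty := Finset.nonempty_iff_ne_empty.mpr hJe
        have hKne : K.Nonempty := Finset.nonempty_iff_ne_empty.mpr hKe
        have hc : Commute (zel R n J.card) (gel R n n K) := zel_commute_gel R _ K
        rw [hc.mul_mul_mul_comm]
        by_cases hcard : J.card = K.card
        · rw [G1 R n J K hJne hKne hJ hK hcard, if_neg hne, zero_mul]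
        · rw [zel_mul_zel, if_neg hcard, mul_zero]
  · -- sum
    rw [Finset.sum_powerset]
    have hcard : (Finset.Icc 1 n).card = n := by rw [Nat.card_Icc]; omega
    rw [hcard]
    have hterm : ∀ i ∈ Finset.range (n+1),
        (∑ J ∈ (Finset.Icc 1 n).powersetCard i, fel R n J) = zel R n i := by
      intro i _
      match i with
      | 0 =>
        rw [Finset.powersetCard_zero, Finset.sum_singleton, fel_empty]
      | k+1 =>
        have hcongr : ∀ J ∈ (Finset.Icc 1 n).powersetCard (k+1),
            fel R n J = gel R n n J * zel R n (k+1) := by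
          intro J hJm
          rw [Finset.mem_powersetCard] at hJm
          have hJe : J ≠ ∅ := by
            intro h
            rw [h, Finset.card_empty] at hJm
            exact (by omega : (0:ℕ) ≠ k+1) hJm.2
          rw [fel_ne R hJe, hJm.2]
        rw [Finset.sum_congr rfl hcongr, ← Finset.sum_mul, gsum R n k, Yw_mul_zel]
    rw [Finset.sum_congr rfl hterm, Finset.sum_range_succ']
    have hz : ∀ i ∈ Finset.range n, zel R n (i+1) = Yw R n n (i+1) - Yw R n n (i+2) :=
      fun i _ => zel_eq R (i+1)
    rw [Finset.sum_congr rfl hz,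
      Finset.sum_range_sub' (fun i => Yw R n n (i+1)) n, zel_eq, Yw_zero,
      Yw_eq_zero R n (n+1) (by omega)]
    abel

end NDPFIdem
end
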